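/- arXiv:1811.10706 — 6 statements merged into one kernel-verified Lean document; each statement's English description precedes it below -/
import Mathlib

section
/- Assume f satisfies the Lipschitz condition (H₁): there exists a constant L > 0 such that |f(t,x) − f(t,y)| ≤ L|x − y| for all t ∈ [0,1] and all x, y ∈ ℝ. If L·Θ < 1, then the operator 𝒜 has a unique fixed point in C([0,1],ℝ); that is, there exists a unique continuous function x : [0,1] → ℝ with x(t) = (𝒜x)(t) for all t ∈ [0,1] (equivalently, the fractional boundary value problem (1.1)–(1.2), whose solutions are by definition the fixed points of 𝒜, has a unique solution on [0,1]). -/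
open MeasureTheory intervalIntegral

noncomputable def Δ₁ (σ ν ξ : ℝ) (n : ℕ) (η α : ℕ → ℝ) : ℝ :=
  ξ ^ (1 - σ) * Real.Gamma (2 - ν) -
    Real.Gamma (2 - σ) * ∑ i ∈ Finset.Icc 1 n, α i * η i ^ (1 - ν)

noncomputable def Δ₂ (n : ℕ) (η β γ : ℕ → ℝ) : ℝ :=
  1 - ∑ i ∈ Finset.Icc 1 n, (β i * η i + γ i)

noncomputable def Δ₃ (n : ℕ) (η β γ : ℕ → ℝ) : ℝ :=
  -2 + ∑ i ∈ Finset.Icc 1 n, η i * (β i * η i + 2 * γ i)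

/-- The operator 𝒜 of the paper, acting on (the continuous extension of) a
continuous function on `[0,1]`. -/
noncomputable def opA (q σ ν ξ : ℝ) (n : ℕ) (η α β γ : ℕ → ℝ)
    (f : ℝ → ℝ → ℝ) (x : ℝ → ℝ) (t : ℝ) : ℝ :=
  (∫ s in (0:ℝ)..t, (t - s) ^ (q - 1) / Real.Gamma q * f s (x s)) +
  (1 / Δ₂ n η β γ) *
    (-(∫ s in (0:ℝ)..1, (1 - s) ^ (q - 1) / Real.Gamma q * f s (x s)) +
     (∑ i ∈ Finset.Icc 1 n, β i *
        ∫ s in (0:ℝ)..η i, (η i - s) ^ q / Real.Gamma (q + 1) * f s (x s)) +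
     ∑ i ∈ Finset.Icc 1 n, γ i *
        ∫ s in (0:ℝ)..η i, (η i - s) ^ (q - 1) / Real.Gamma q * f s (x s)) +
  Real.Gamma (2 - σ) * Real.Gamma (2 - ν) * (Δ₃ n η β γ + 2 * Δ₂ n η β γ * t) /
      (2 * Δ₁ σ ν ξ n η α * Δ₂ n η β γ) *
    (-(∫ s in (0:ℝ)..ξ, (ξ - s) ^ (q - σ - 1) / Real.Gamma (q - σ) * f s (x s)) +
     ∑ i ∈ Finset.Icc 1 n, α i *
        ∫ s in (0:ℝ)..η i, (η i - s) ^ (q - ν - 1) / Real.Gamma (q - ν) * f s (x s))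

noncomputable def Θ (q σ ν ξ : ℝ) (n : ℕ) (η α β γ : ℕ → ℝ) : ℝ :=
  1 / Real.Gamma (q + 1) +
  1 / (|Δ₂ n η β γ| * Real.Gamma (q + 2)) *
    (1 + q + ∑ i ∈ Finset.Icc 1 n, η i ^ q * (η i * |β i| + (q + 1) * |γ i|)) +
  Real.Gamma (2 - σ) * Real.Gamma (2 - ν) * (|Δ₃ n η β γ| + 2 * |Δ₂ n η β γ|) /
      (2 * |Δ₁ σ ν ξ n η α * Δ₂ n η β γ|) *
    (ξ ^ (q - σ) / Real.Gamma (q - σ + 1) +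
     ∑ i ∈ Finset.Icc 1 n, |α i| * η i ^ (q - ν) / Real.Gamma (q - ν + 1))

/-! ### Auxiliary integral lemmas -/

lemma aux_intInt (c p : ℝ) (hc : 0 ≤ c) (hp : -1 < p) (h : ℝ → ℝ) (hh : Continuous h) :
    IntervalIntegrable (fun s => (c - s) ^ p * h s) volume 0 c := by
  obtain ⟨M, hM⟩ := isCompact_Icc.exists_bound_of_continuousOn (s := Set.Icc 0 c)
    hh.continuousOn
  have hker : IntervalIntegrable (fun s : ℝ => (c - s) ^ p) volume 0 c := by
    simpa using ((intervalIntegrable_rpow' (a := 0) (b := c) hp).comp_sub_left c).symm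
  refine (hker.const_mul M).mono_fun' ?_ ?_
  · exact ((by fun_prop : Measurable fun s : ℝ => (c - s) ^ p).mul
      hh.measurable).aestronglyMeasurable
  · filter_upwards [ae_restrict_mem measurableSet_uIoc] with s hs
    rw [Set.uIoc_of_le hc] at hs
    have h1 : (0:ℝ) ≤ c - s := by linarith [hs.2]
    have h2 : (0:ℝ) ≤ (c - s) ^ p := Real.rpow_nonneg h1 _
    have h3 : |h s| ≤ M := by
      have := hM s ⟨hs.1.le, hs.2⟩
      simpa [Real.norm_eq_abs] using this
    calc ‖(c - s) ^ p * h s‖ = (c - s) ^ p * |h s| := by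
          rw [norm_mul, Real.norm_eq_abs, Real.norm_eq_abs, abs_of_nonneg h2]
      _ ≤ (c - s) ^ p * M := mul_le_mul_of_nonneg_left h3 h2
      _ = M * (c - s) ^ p := mul_comm _ _

lemma aux_val (c p : ℝ) (hc : 0 ≤ c) (hp : -1 < p) :
    (∫ s in (0:ℝ)..c, (c - s) ^ p) = c ^ (p + 1) / (p + 1) := by
  have := intervalIntegral.integral_comp_sub_left (a := 0) (b := c) (fun u : ℝ => u ^ p) c
  rw [this, sub_self, sub_zero, integral_rpow (Or.inl hp),
    Real.zero_rpow (by linarith : p + 1 ≠ 0), sub_zero]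

lemma aux_bnd (c p M : ℝ) (hc : 0 ≤ c) (hp : -1 < p) (hM : 0 ≤ M)
    (h : ℝ → ℝ) (hh : Continuous h) (hb : ∀ s, |h s| ≤ M) :
    |∫ s in (0:ℝ)..c, (c - s) ^ p * h s| ≤ M * c ^ (p + 1) / (p + 1) := by
  have h1 := aux_intInt c p hc hp h hh
  have h2 : IntervalIntegrable (fun s : ℝ => (c - s) ^ p * M) volume 0 c :=
    aux_intInt c p hc hp (fun _ => M) continuous_const
  calc |∫ s in (0:ℝ)..c, (c - s) ^ p * h s|
      ≤ ∫ s in (0:ℝ)..c, |(c - s) ^ p * h s| :=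
        intervalIntegral.abs_integral_le_integral_abs hc
    _ ≤ ∫ s in (0:ℝ)..c, (c - s) ^ p * M := by
        apply intervalIntegral.integral_mono_on hc h1.abs h2
        intro s hs
        have h1' : (0:ℝ) ≤ c - s := by linarith [hs.2]
        have h2' : (0:ℝ) ≤ (c - s) ^ p := Real.rpow_nonneg h1' _
        rw [abs_mul, abs_of_nonneg h2']
        exact mul_le_mul_of_nonneg_left (hb s) h2'
    _ = M * c ^ (p + 1) / (p + 1) := by
        rw [intervalIntegral.integral_mul_const, aux_val c p hc hp]; ring

lemma aux_intInt' (c p G : ℝ) (hc : 0 ≤ c) (hp : -1 < p) (h : ℝ → ℝ) (hh : Continuous h) :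
    IntervalIntegrable (fun s => (c - s) ^ p / G * h s) volume 0 c := by
  have := aux_intInt c p hc hp (fun s => h s / G) (hh.div_const G)
  have e : (fun s => (c - s) ^ p / G * h s) = fun s => (c - s) ^ p * (h s / G) := by
    funext s; ring
  rw [e]; exact this

lemma aux_bnd' (c p G M : ℝ) (hc : 0 ≤ c) (hp : -1 < p) (hG : 0 < G) (hM : 0 ≤ M)
    (h : ℝ → ℝ) (hh : Continuous h) (hb : ∀ s, |h s| ≤ M) :
    |∫ s in (0:ℝ)..c, (c - s) ^ p / G * h s| ≤ M * c ^ (p + 1) / ((p + 1) * G) := by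
  have e : (fun s => (c - s) ^ p / G * h s) = fun s => ((c - s) ^ p * h s) / G := by
    funext s; ring
  rw [e, intervalIntegral.integral_div, abs_div, abs_of_pos hG, ← div_div]
  gcongr
  exact aux_bnd c p M hc hp hM h hh hb

/-! ### Continuity of the operator -/

lemma opA_cont (q σ ν ξ : ℝ) (n : ℕ) (η α β γ : ℕ → ℝ) (g : ℝ → ℝ)
    (hq1 : 1 < q) (hg : Continuous g) :
    Continuous fun t => opA q σ ν ξ n η α β γ (fun s _ => g s) (fun _ => 0) t := by
  simp only [opA]
  have h1 : Continuous fun y : ℝ => y ^ (q - 1) := by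
    rw [continuous_iff_continuousAt]
    intro y
    exact Real.continuousAt_rpow_const y (q - 1) (Or.inr (by linarith))
  have h2 : Continuous fun t : ℝ =>
      ∫ s in (0:ℝ)..t, (t - s) ^ (q - 1) / Real.Gamma q * g s := by
    apply intervalIntegral.continuous_parametric_intervalIntegral_of_continuous
      (f := fun (t : ℝ) (s : ℝ) => (t - s) ^ (q - 1) / Real.Gamma q * g s) (μ := volume)
      (s := fun t : ℝ => t)
    · exact ((h1.comp (continuous_fst.sub continuous_snd)).div_const _).mul
        (hg.comp continuous_snd)
    · exact continuous_id
  exact (h2.add continuous_const).add (by fun_prop)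

/-! ### Congruence -/

lemma opA_eq (q σ ν ξ : ℝ) (n : ℕ) (η α β γ : ℕ → ℝ) (g : ℝ → ℝ)
    (f : ℝ → ℝ → ℝ) (x : ℝ → ℝ) (t : ℝ)
    (hξ0 : 0 ≤ ξ) (hξ1 : ξ ≤ 1) (hη : ∀ i ∈ Finset.Icc 1 n, 0 < η i ∧ η i ≤ 1)
    (ht0 : 0 ≤ t) (ht1 : t ≤ 1)
    (hg : ∀ s ∈ Set.Icc (0:ℝ) 1, g s = f s (x s)) :
    opA q σ ν ξ n η α β γ (fun s _ => g s) (fun _ => 0) t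
      = opA q σ ν ξ n η α β γ f x t := by
  have base : ∀ (k : ℝ → ℝ) (c : ℝ), 0 ≤ c → c ≤ 1 → ∀ s ∈ Set.uIcc (0:ℝ) c,
      k s * g s = k s * f s (x s) := by
    intro k c h0 h1 s hs
    rw [Set.uIcc_of_le h0] at hs
    rw [hg s ⟨hs.1, hs.2.trans h1⟩]
  have c1 : (∫ s in (0:ℝ)..t, (t - s) ^ (q - 1) / Real.Gamma q * g s)
      = ∫ s in (0:ℝ)..t, (t - s) ^ (q - 1) / Real.Gamma q * f s (x s) :=
    intervalIntegral.integral_congr (base _ t ht0 ht1)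
  have c2 : (∫ s in (0:ℝ)..1, (1 - s) ^ (q - 1) / Real.Gamma q * g s)
      = ∫ s in (0:ℝ)..1, (1 - s) ^ (q - 1) / Real.Gamma q * f s (x s) :=
    intervalIntegral.integral_congr (base _ 1 zero_le_one le_rfl)
  have c3 : (∑ i ∈ Finset.Icc 1 n, β i *
        ∫ s in (0:ℝ)..η i, (η i - s) ^ q / Real.Gamma (q + 1) * g s)
      = ∑ i ∈ Finset.Icc 1 n, β i *
        ∫ s in (0:ℝ)..η i, (η i - s) ^ q / Real.Gamma (q + 1) * f s (x s) :=
    Finset.sum_congr rfl fun i hi => by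
      rw [intervalIntegral.integral_congr (base _ (η i) (hη i hi).1.le (hη i hi).2)]
  have c4 : (∑ i ∈ Finset.Icc 1 n, γ i *
        ∫ s in (0:ℝ)..η i, (η i - s) ^ (q - 1) / Real.Gamma q * g s)
      = ∑ i ∈ Finset.Icc 1 n, γ i *
        ∫ s in (0:ℝ)..η i, (η i - s) ^ (q - 1) / Real.Gamma q * f s (x s) :=
    Finset.sum_congr rfl fun i hi => by
      rw [intervalIntegral.integral_congr (base _ (η i) (hη i hi).1.le (hη i hi).2)]
  have c5 : (∫ s in (0:ℝ)..ξ, (ξ - s) ^ (q - σ - 1) / Real.Gamma (q - σ) * g s)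
      = ∫ s in (0:ℝ)..ξ, (ξ - s) ^ (q - σ - 1) / Real.Gamma (q - σ) * f s (x s) :=
    intervalIntegral.integral_congr (base _ ξ hξ0 hξ1)
  have c6 : (∑ i ∈ Finset.Icc 1 n, α i *
        ∫ s in (0:ℝ)..η i, (η i - s) ^ (q - ν - 1) / Real.Gamma (q - ν) * g s)
      = ∑ i ∈ Finset.Icc 1 n, α i *
        ∫ s in (0:ℝ)..η i, (η i - s) ^ (q - ν - 1) / Real.Gamma (q - ν) * f s (x s) :=
    Finset.sum_congr rfl fun i hi => by
      rw [intervalIntegral.integral_congr (base _ (η i) (hη i hi).1.le (hη i hi).2)]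
  simp only [opA]
  rw [c1, c2, c3, c4, c5, c6]

set_option maxHeartbeats 1600000 in
lemma opA_diff_bound (q σ ν ξ : ℝ) (n : ℕ) (η α β γ : ℕ → ℝ) (g₁ g₂ : ℝ → ℝ) (M t : ℝ)
    (hq1 : 1 < q) (hσ0 : 0 < σ) (hσ1 : σ ≤ 1) (hν0 : 0 < ν) (hν1 : ν ≤ 1)
    (hξ0 : 0 ≤ ξ) (hξ1 : ξ ≤ 1) (hη : ∀ i ∈ Finset.Icc 1 n, 0 < η i ∧ η i ≤ 1)
    (ht0 : 0 ≤ t) (ht1 : t ≤ 1)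
    (hΔ₁ : Δ₁ σ ν ξ n η α ≠ 0) (hΔ₂ : Δ₂ n η β γ ≠ 0)
    (hg₁ : Continuous g₁) (hg₂ : Continuous g₂) (hM : 0 ≤ M)
    (hb : ∀ s, |g₁ s - g₂ s| ≤ M) :
    |opA q σ ν ξ n η α β γ (fun s _ => g₁ s) (fun _ => 0) t
      - opA q σ ν ξ n η α β γ (fun s _ => g₂ s) (fun _ => 0) t|
      ≤ M * Θ q σ ν ξ n η α β γ := by
  have hq0 : (0:ℝ) < q := by linarith
  have hqσ : (0:ℝ) < q - σ := by linarith
  have hqν : (0:ℝ) < q - ν := by linarith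
  have hΓq : 0 < Real.Gamma q := Real.Gamma_pos_of_pos hq0
  have hΓq1 : 0 < Real.Gamma (q + 1) := Real.Gamma_pos_of_pos (by linarith)
  have hΓq2 : 0 < Real.Gamma (q + 2) := Real.Gamma_pos_of_pos (by linarith)
  have hΓqσ : 0 < Real.Gamma (q - σ) := Real.Gamma_pos_of_pos hqσ
  have hΓqν : 0 < Real.Gamma (q - ν) := Real.Gamma_pos_of_pos hqν
  have hΓqσ1 : 0 < Real.Gamma (q - σ + 1) := Real.Gamma_pos_of_pos (by linarith)
  have hΓqν1 : 0 < Real.Gamma (q - ν + 1) := Real.Gamma_pos_of_pos (by linarith)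
  have hΓ2σ : 0 < Real.Gamma (2 - σ) := Real.Gamma_pos_of_pos (by linarith)
  have hΓ2ν : 0 < Real.Gamma (2 - ν) := Real.Gamma_pos_of_pos (by linarith)
  have hGq1 : Real.Gamma (q + 1) = q * Real.Gamma q := Real.Gamma_add_one hq0.ne'
  have hGq2 : Real.Gamma (q + 2) = (q + 1) * Real.Gamma (q + 1) := by
    rw [show q + 2 = q + 1 + 1 by ring, Real.Gamma_add_one (by linarith)]
  have hGqσ1 : Real.Gamma (q - σ + 1) = (q - σ) * Real.Gamma (q - σ) :=
    Real.Gamma_add_one hqσ.ne'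
  have hGqν1 : Real.Gamma (q - ν + 1) = (q - ν) * Real.Gamma (q - ν) :=
    Real.Gamma_add_one hqν.ne'
  have hh : Continuous fun s => g₁ s - g₂ s := hg₁.sub hg₂
  -- difference of integrals
  have hdiff : ∀ (c p G : ℝ), 0 ≤ c → -1 < p →
      (∫ s in (0:ℝ)..c, (c - s) ^ p / G * g₁ s)
        - (∫ s in (0:ℝ)..c, (c - s) ^ p / G * g₂ s)
        = ∫ s in (0:ℝ)..c, (c - s) ^ p / G * (g₁ s - g₂ s) := by
    intro c p G hc hp
    rw [← intervalIntegral.integral_sub (aux_intInt' c p G hc hp g₁ hg₁)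
      (aux_intInt' c p G hc hp g₂ hg₂)]
    apply intervalIntegral.integral_congr
    intro s _
    ring
  have hbnd : ∀ (c p G : ℝ), 0 ≤ c → -1 < p → 0 < G →
      |∫ s in (0:ℝ)..c, (c - s) ^ p / G * (g₁ s - g₂ s)|
        ≤ M * c ^ (p + 1) / ((p + 1) * G) :=
    fun c p G hc hp hG => aux_bnd' c p G M hc hp hG hM _ hh hb
  have e1 := hdiff t (q - 1) (Real.Gamma q) ht0 (by linarith)
  have e2 := hdiff 1 (q - 1) (Real.Gamma q) zero_le_one (by linarith)
  have e4 := hdiff ξ (q - σ - 1) (Real.Gamma (q - σ)) hξ0 (by linarith)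
  have e3 : (∑ i ∈ Finset.Icc 1 n, β i *
        ∫ s in (0:ℝ)..η i, (η i - s) ^ q / Real.Gamma (q + 1) * g₁ s)
      - (∑ i ∈ Finset.Icc 1 n, β i *
        ∫ s in (0:ℝ)..η i, (η i - s) ^ q / Real.Gamma (q + 1) * g₂ s)
      = ∑ i ∈ Finset.Icc 1 n, β i *
        ∫ s in (0:ℝ)..η i, (η i - s) ^ q / Real.Gamma (q + 1) * (g₁ s - g₂ s) := by
    rw [← Finset.sum_sub_distrib]
    refine Finset.sum_congr rfl fun i hi => ?_
    rw [← mul_sub, hdiff (η i) q (Real.Gamma (q + 1)) (hη i hi).1.le (by linarith)]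
  have e3' : (∑ i ∈ Finset.Icc 1 n, γ i *
        ∫ s in (0:ℝ)..η i, (η i - s) ^ (q - 1) / Real.Gamma q * g₁ s)
      - (∑ i ∈ Finset.Icc 1 n, γ i *
        ∫ s in (0:ℝ)..η i, (η i - s) ^ (q - 1) / Real.Gamma q * g₂ s)
      = ∑ i ∈ Finset.Icc 1 n, γ i *
        ∫ s in (0:ℝ)..η i, (η i - s) ^ (q - 1) / Real.Gamma q * (g₁ s - g₂ s) := by
    rw [← Finset.sum_sub_distrib]
    refine Finset.sum_congr rfl fun i hi => ?_
    rw [← mul_sub, hdiff (η i) (q - 1) (Real.Gamma q) (hη i hi).1.le (by linarith)]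
  have e5 : (∑ i ∈ Finset.Icc 1 n, α i *
        ∫ s in (0:ℝ)..η i, (η i - s) ^ (q - ν - 1) / Real.Gamma (q - ν) * g₁ s)
      - (∑ i ∈ Finset.Icc 1 n, α i *
        ∫ s in (0:ℝ)..η i, (η i - s) ^ (q - ν - 1) / Real.Gamma (q - ν) * g₂ s)
      = ∑ i ∈ Finset.Icc 1 n, α i *
        ∫ s in (0:ℝ)..η i, (η i - s) ^ (q - ν - 1) / Real.Gamma (q - ν) * (g₁ s - g₂ s) := by
    rw [← Finset.sum_sub_distrib]
    refine Finset.sum_congr rfl fun i hi => ?_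
    rw [← mul_sub, hdiff (η i) (q - ν - 1) (Real.Gamma (q - ν)) (hη i hi).1.le (by linarith)]
  -- the difference equals the same expression with integrand g₁ - g₂
  have hD : opA q σ ν ξ n η α β γ (fun s _ => g₁ s) (fun _ => 0) t
      - opA q σ ν ξ n η α β γ (fun s _ => g₂ s) (fun _ => 0) t
      = (∫ s in (0:ℝ)..t, (t - s) ^ (q - 1) / Real.Gamma q * (g₁ s - g₂ s)) +
        (1 / Δ₂ n η β γ) *
          (-(∫ s in (0:ℝ)..1, (1 - s) ^ (q - 1) / Real.Gamma q * (g₁ s - g₂ s)) +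
           (∑ i ∈ Finset.Icc 1 n, β i *
              ∫ s in (0:ℝ)..η i, (η i - s) ^ q / Real.Gamma (q + 1) * (g₁ s - g₂ s)) +
           ∑ i ∈ Finset.Icc 1 n, γ i *
              ∫ s in (0:ℝ)..η i, (η i - s) ^ (q - 1) / Real.Gamma q * (g₁ s - g₂ s)) +
        Real.Gamma (2 - σ) * Real.Gamma (2 - ν) * (Δ₃ n η β γ + 2 * Δ₂ n η β γ * t) /
            (2 * Δ₁ σ ν ξ n η α * Δ₂ n η β γ) *
          (-(∫ s in (0:ℝ)..ξ, (ξ - s) ^ (q - σ - 1) / Real.Gamma (q - σ) * (g₁ s - g₂ s)) +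
           ∑ i ∈ Finset.Icc 1 n, α i *
              ∫ s in (0:ℝ)..η i, (η i - s) ^ (q - ν - 1) / Real.Gamma (q - ν) * (g₁ s - g₂ s)) := by
    simp only [opA]
    linear_combination e1 + (1 / Δ₂ n η β γ) * (- e2 + e3 + e3') +
      (Real.Gamma (2 - σ) * Real.Gamma (2 - ν) * (Δ₃ n η β γ + 2 * Δ₂ n η β γ * t) /
        (2 * Δ₁ σ ν ξ n η α * Δ₂ n η β γ)) * (- e4 + e5)
  rw [hD]
  -- individual bounds
  have b1 : |∫ s in (0:ℝ)..t, (t - s) ^ (q - 1) / Real.Gamma q * (g₁ s - g₂ s)|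
      ≤ M / Real.Gamma (q + 1) := by
    have h1 := hbnd t (q - 1) (Real.Gamma q) ht0 (by linarith) hΓq
    rw [sub_add_cancel] at h1
    calc |∫ s in (0:ℝ)..t, (t - s) ^ (q - 1) / Real.Gamma q * (g₁ s - g₂ s)|
        ≤ M * t ^ q / (q * Real.Gamma q) := h1
      _ = M * t ^ q / Real.Gamma (q + 1) := by rw [hGq1]
      _ ≤ M * 1 / Real.Gamma (q + 1) := by
          gcongr
          exact Real.rpow_le_one ht0 ht1 hq0.le
      _ = M / Real.Gamma (q + 1) := by ring
  have b2 : |∫ s in (0:ℝ)..1, (1 - s) ^ (q - 1) / Real.Gamma q * (g₁ s - g₂ s)|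
      ≤ M / Real.Gamma (q + 1) := by
    have h1 := hbnd 1 (q - 1) (Real.Gamma q) zero_le_one (by linarith) hΓq
    rw [sub_add_cancel, Real.one_rpow] at h1
    calc |∫ s in (0:ℝ)..1, (1 - s) ^ (q - 1) / Real.Gamma q * (g₁ s - g₂ s)|
        ≤ M * 1 / (q * Real.Gamma q) := h1
      _ = M / Real.Gamma (q + 1) := by rw [hGq1]; ring
  have b3 : |∑ i ∈ Finset.Icc 1 n, β i *
        ∫ s in (0:ℝ)..η i, (η i - s) ^ q / Real.Gamma (q + 1) * (g₁ s - g₂ s)|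
      ≤ ∑ i ∈ Finset.Icc 1 n, |β i| * (M * η i ^ (q + 1) / Real.Gamma (q + 2)) := by
    refine (Finset.abs_sum_le_sum_abs _ _).trans (Finset.sum_le_sum fun i hi => ?_)
    rw [abs_mul]
    have h1 := hbnd (η i) q (Real.Gamma (q + 1)) (hη i hi).1.le (by linarith) hΓq1
    rw [← hGq2] at h1
    exact mul_le_mul_of_nonneg_left h1 (abs_nonneg _)
  have b3' : |∑ i ∈ Finset.Icc 1 n, γ i *
        ∫ s in (0:ℝ)..η i, (η i - s) ^ (q - 1) / Real.Gamma q * (g₁ s - g₂ s)|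
      ≤ ∑ i ∈ Finset.Icc 1 n, |γ i| * (M * η i ^ q / Real.Gamma (q + 1)) := by
    refine (Finset.abs_sum_le_sum_abs _ _).trans (Finset.sum_le_sum fun i hi => ?_)
    rw [abs_mul]
    have h1 := hbnd (η i) (q - 1) (Real.Gamma q) (hη i hi).1.le (by linarith) hΓq
    rw [sub_add_cancel, ← hGq1] at h1
    exact mul_le_mul_of_nonneg_left h1 (abs_nonneg _)
  have b4 : |∫ s in (0:ℝ)..ξ, (ξ - s) ^ (q - σ - 1) / Real.Gamma (q - σ) * (g₁ s - g₂ s)|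
      ≤ M * ξ ^ (q - σ) / Real.Gamma (q - σ + 1) := by
    have h1 := hbnd ξ (q - σ - 1) (Real.Gamma (q - σ)) hξ0 (by linarith) hΓqσ
    rw [sub_add_cancel, ← hGqσ1] at h1
    exact h1
  have b5 : |∑ i ∈ Finset.Icc 1 n, α i *
        ∫ s in (0:ℝ)..η i, (η i - s) ^ (q - ν - 1) / Real.Gamma (q - ν) * (g₁ s - g₂ s)|
      ≤ ∑ i ∈ Finset.Icc 1 n, |α i| * (M * η i ^ (q - ν) / Real.Gamma (q - ν + 1)) := by
    refine (Finset.abs_sum_le_sum_abs _ _).trans (Finset.sum_le_sum fun i hi => ?_)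
    rw [abs_mul]
    have h1 := hbnd (η i) (q - ν - 1) (Real.Gamma (q - ν)) (hη i hi).1.le (by linarith) hΓqν
    rw [sub_add_cancel, ← hGqν1] at h1
    exact mul_le_mul_of_nonneg_left h1 (abs_nonneg _)
  -- coefficient bound
  have bc : |Real.Gamma (2 - σ) * Real.Gamma (2 - ν) * (Δ₃ n η β γ + 2 * Δ₂ n η β γ * t) /
        (2 * Δ₁ σ ν ξ n η α * Δ₂ n η β γ)|
      ≤ Real.Gamma (2 - σ) * Real.Gamma (2 - ν) * (|Δ₃ n η β γ| + 2 * |Δ₂ n η β γ|) /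
        (2 * |Δ₁ σ ν ξ n η α * Δ₂ n η β γ|) := by
    have hd : |2 * Δ₁ σ ν ξ n η α * Δ₂ n η β γ| = 2 * |Δ₁ σ ν ξ n η α * Δ₂ n η β γ| := by
      rw [mul_assoc, abs_mul, abs_two]
    rw [abs_div, hd, abs_mul, abs_mul, abs_of_pos hΓ2σ, abs_of_pos hΓ2ν]
    have hnum : |Δ₃ n η β γ + 2 * Δ₂ n η β γ * t| ≤ |Δ₃ n η β γ| + 2 * |Δ₂ n η β γ| := calc |Δ₃ n η β γ + 2 * Δ₂ n η β γ * t| ≤ |Δ₃ n η β γ| + |2 * Δ₂ n η β γ * t| := abs_add_le _ _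
      _ = |Δ₃ n η β γ| + 2 * |Δ₂ n η β γ| * |t| := by
          rw [abs_mul, abs_mul, abs_two]
      _ ≤ |Δ₃ n η β γ| + 2 * |Δ₂ n η β γ| * 1 := by
          gcongr
          exact abs_le.mpr ⟨by linarith, ht1⟩
      _ = |Δ₃ n η β γ| + 2 * |Δ₂ n η β γ| := by ring
    gcongr <;> first
      | exact (mul_pos hΓ2σ hΓ2ν).le
      | exact hnum
  have hCmax0 : 0 ≤ Real.Gamma (2 - σ) * Real.Gamma (2 - ν) *
      (|Δ₃ n η β γ| + 2 * |Δ₂ n η β γ|) / (2 * |Δ₁ σ ν ξ n η α * Δ₂ n η β γ|) := by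
    positivity
  -- group bounds
  have hS : |(-(∫ s in (0:ℝ)..1, (1 - s) ^ (q - 1) / Real.Gamma q * (g₁ s - g₂ s)) +
       (∑ i ∈ Finset.Icc 1 n, β i *
          ∫ s in (0:ℝ)..η i, (η i - s) ^ q / Real.Gamma (q + 1) * (g₁ s - g₂ s)) +
       ∑ i ∈ Finset.Icc 1 n, γ i *
          ∫ s in (0:ℝ)..η i, (η i - s) ^ (q - 1) / Real.Gamma q * (g₁ s - g₂ s))|
      ≤ M / Real.Gamma (q + 1)
        + (∑ i ∈ Finset.Icc 1 n, |β i| * (M * η i ^ (q + 1) / Real.Gamma (q + 2)))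
        + ∑ i ∈ Finset.Icc 1 n, |γ i| * (M * η i ^ q / Real.Gamma (q + 1)) := by
    refine (abs_add_three _ _ _).trans ?_
    rw [abs_neg]
    exact add_le_add (add_le_add b2 b3) b3'
  have hU : |(-(∫ s in (0:ℝ)..ξ, (ξ - s) ^ (q - σ - 1) / Real.Gamma (q - σ) * (g₁ s - g₂ s)) +
       ∑ i ∈ Finset.Icc 1 n, α i *
          ∫ s in (0:ℝ)..η i, (η i - s) ^ (q - ν - 1) / Real.Gamma (q - ν) * (g₁ s - g₂ s))|
      ≤ M * ξ ^ (q - σ) / Real.Gamma (q - σ + 1)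
        + ∑ i ∈ Finset.Icc 1 n, |α i| * (M * η i ^ (q - ν) / Real.Gamma (q - ν + 1)) := by
    refine (abs_add_le _ _).trans ?_
    rw [abs_neg]
    exact add_le_add b4 b5
  have hU0 : 0 ≤ M * ξ ^ (q - σ) / Real.Gamma (q - σ + 1)
        + ∑ i ∈ Finset.Icc 1 n, |α i| * (M * η i ^ (q - ν) / Real.Gamma (q - ν + 1)) := by
    apply add_nonneg
    · positivity
    · refine Finset.sum_nonneg fun i hi => ?_
      have := (hη i hi).1.le
      positivity
  calc |_ + _ + _|
      ≤ |∫ s in (0:ℝ)..t, (t - s) ^ (q - 1) / Real.Gamma q * (g₁ s - g₂ s)|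
        + |1 / Δ₂ n η β γ| * |(-(∫ s in (0:ℝ)..1, (1 - s) ^ (q - 1) / Real.Gamma q * (g₁ s - g₂ s)) +
           (∑ i ∈ Finset.Icc 1 n, β i *
              ∫ s in (0:ℝ)..η i, (η i - s) ^ q / Real.Gamma (q + 1) * (g₁ s - g₂ s)) +
           ∑ i ∈ Finset.Icc 1 n, γ i *
              ∫ s in (0:ℝ)..η i, (η i - s) ^ (q - 1) / Real.Gamma q * (g₁ s - g₂ s))|
        + |Real.Gamma (2 - σ) * Real.Gamma (2 - ν) * (Δ₃ n η β γ + 2 * Δ₂ n η β γ * t) /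
            (2 * Δ₁ σ ν ξ n η α * Δ₂ n η β γ)| *
          |(-(∫ s in (0:ℝ)..ξ, (ξ - s) ^ (q - σ - 1) / Real.Gamma (q - σ) * (g₁ s - g₂ s)) +
           ∑ i ∈ Finset.Icc 1 n, α i *
              ∫ s in (0:ℝ)..η i, (η i - s) ^ (q - ν - 1) / Real.Gamma (q - ν) * (g₁ s - g₂ s))| := by
        refine (abs_add_three _ _ _).trans ?_
        rw [abs_mul, abs_mul]
    _ ≤ M / Real.Gamma (q + 1)
        + |1 / Δ₂ n η β γ| * (M / Real.Gamma (q + 1)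
            + (∑ i ∈ Finset.Icc 1 n, |β i| * (M * η i ^ (q + 1) / Real.Gamma (q + 2)))
            + ∑ i ∈ Finset.Icc 1 n, |γ i| * (M * η i ^ q / Real.Gamma (q + 1)))
        + (Real.Gamma (2 - σ) * Real.Gamma (2 - ν) * (|Δ₃ n η β γ| + 2 * |Δ₂ n η β γ|) /
            (2 * |Δ₁ σ ν ξ n η α * Δ₂ n η β γ|)) *
          (M * ξ ^ (q - σ) / Real.Gamma (q - σ + 1)
            + ∑ i ∈ Finset.Icc 1 n, |α i| * (M * η i ^ (q - ν) / Real.Gamma (q - ν + 1))) := by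
        refine add_le_add (add_le_add b1 (mul_le_mul_of_nonneg_left hS (abs_nonneg _))) ?_
        exact mul_le_mul bc hU (abs_nonneg _) hCmax0
    _ = M * Θ q σ ν ξ n η α β γ := by
        have hΔ2abs : |1 / Δ₂ n η β γ| = 1 / |Δ₂ n η β γ| := by
          rw [abs_div, abs_one]
        have hΔ2ne : |Δ₂ n η β γ| ≠ 0 := abs_ne_zero.mpr hΔ₂
        have hq1ne : (q + 1 : ℝ) ≠ 0 := by linarith
        have r1 : (∑ i ∈ Finset.Icc 1 n, |β i| * (M * η i ^ (q + 1) / Real.Gamma (q + 2)))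
            = M / Real.Gamma (q + 2) * ∑ i ∈ Finset.Icc 1 n, |β i| * η i ^ (q + 1) := by
          rw [Finset.mul_sum]
          exact Finset.sum_congr rfl fun i _ => by ring
        have r2 : (∑ i ∈ Finset.Icc 1 n, |γ i| * (M * η i ^ q / Real.Gamma (q + 1)))
            = M / Real.Gamma (q + 1) * ∑ i ∈ Finset.Icc 1 n, |γ i| * η i ^ q := by
          rw [Finset.mul_sum]
          exact Finset.sum_congr rfl fun i _ => by ring
        have r3 : (∑ i ∈ Finset.Icc 1 n, |α i| * (M * η i ^ (q - ν) / Real.Gamma (q - ν + 1)))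
            = M / Real.Gamma (q - ν + 1) * ∑ i ∈ Finset.Icc 1 n, |α i| * η i ^ (q - ν) := by
          rw [Finset.mul_sum]
          exact Finset.sum_congr rfl fun i _ => by ring
        have r4 : (∑ i ∈ Finset.Icc 1 n, η i ^ q * (η i * |β i| + (q + 1) * |γ i|))
            = (∑ i ∈ Finset.Icc 1 n, |β i| * η i ^ (q + 1))
              + (q + 1) * ∑ i ∈ Finset.Icc 1 n, |γ i| * η i ^ q := by
          rw [Finset.mul_sum, ← Finset.sum_add_distrib]
          refine Finset.sum_congr rfl fun i hi => ?_
          rw [Real.rpow_add_one (hη i hi).1.ne']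
          ring
        have r5 : (∑ i ∈ Finset.Icc 1 n, |α i| * η i ^ (q - ν) / Real.Gamma (q - ν + 1))
            = (∑ i ∈ Finset.Icc 1 n, |α i| * η i ^ (q - ν)) / Real.Gamma (q - ν + 1) := by
          rw [← Finset.sum_div]
        have pB : |1 / Δ₂ n η β γ| * (M / Real.Gamma (q + 1)
              + (∑ i ∈ Finset.Icc 1 n, |β i| * (M * η i ^ (q + 1) / Real.Gamma (q + 2)))
              + ∑ i ∈ Finset.Icc 1 n, |γ i| * (M * η i ^ q / Real.Gamma (q + 1)))
            = M * (1 / (|Δ₂ n η β γ| * Real.Gamma (q + 2)) *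
              (1 + q + ∑ i ∈ Finset.Icc 1 n, η i ^ q * (η i * |β i| + (q + 1) * |γ i|))) := by
          rw [hΔ2abs, r1, r2, r4, hGq2]
          field_simp
          ring
        have pC : (Real.Gamma (2 - σ) * Real.Gamma (2 - ν) * (|Δ₃ n η β γ| + 2 * |Δ₂ n η β γ|) /
              (2 * |Δ₁ σ ν ξ n η α * Δ₂ n η β γ|)) *
            (M * ξ ^ (q - σ) / Real.Gamma (q - σ + 1)
              + ∑ i ∈ Finset.Icc 1 n, |α i| * (M * η i ^ (q - ν) / Real.Gamma (q - ν + 1)))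
            = M * (Real.Gamma (2 - σ) * Real.Gamma (2 - ν) * (|Δ₃ n η β γ| + 2 * |Δ₂ n η β γ|) /
              (2 * |Δ₁ σ ν ξ n η α * Δ₂ n η β γ|) *
              (ξ ^ (q - σ) / Real.Gamma (q - σ + 1)
                + ∑ i ∈ Finset.Icc 1 n, |α i| * η i ^ (q - ν) / Real.Gamma (q - ν + 1))) := by
          rw [r3, r5]
          ring
        simp only [Θ]
        rw [pB, pC]
        ring

set_option maxHeartbeats 1000000 in
theorem thm31 (q σ ν ξ : ℝ) (n : ℕ) (η α β γ : ℕ → ℝ)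
    (hq1 : 1 < q) (hq2 : q ≤ 2) (hσ0 : 0 < σ) (hσ1 : σ ≤ 1) (hν0 : 0 < ν) (hν1 : ν ≤ 1)
    (hn : 1 ≤ n) (hξ : 0 < ξ) (hξη : ξ < η 1)
    (hηmono : ∀ i, 1 ≤ i → i < n → η i < η (i + 1)) (hηn : η n < 1)
    (hΔ₁ : Δ₁ σ ν ξ n η α ≠ 0) (hΔ₂ : Δ₂ n η β γ ≠ 0)
    (f : ℝ → ℝ → ℝ)
    (hf : ContinuousOn (Function.uncurry f) (Set.Icc 0 1 ×ˢ Set.univ))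
    (L : ℝ) (hL : 0 < L)
    (hLip : ∀ t ∈ Set.Icc (0:ℝ) 1, ∀ x y : ℝ, |f t x - f t y| ≤ L * |x - y|)
    (hLΘ : L * Θ q σ ν ξ n η α β γ < 1) :
    ∃! x : C(Set.Icc (0:ℝ) 1, ℝ), ∀ t : Set.Icc (0:ℝ) 1,
      x t = opA q σ ν ξ n η α β γ f (Set.IccExtend zero_le_one ⇑x) ↑t := by
  have hq0 : (0:ℝ) < q := by linarith
  have hΓq1 : 0 < Real.Gamma (q + 1) := Real.Gamma_pos_of_pos (by linarith)
  have hΓq2 : 0 < Real.Gamma (q + 2) := Real.Gamma_pos_of_pos (by linarith)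
  have hΓqσ1 : 0 < Real.Gamma (q - σ + 1) := Real.Gamma_pos_of_pos (by linarith)
  have hΓqν1 : 0 < Real.Gamma (q - ν + 1) := Real.Gamma_pos_of_pos (by linarith)
  have hΓ2σ : 0 < Real.Gamma (2 - σ) := Real.Gamma_pos_of_pos (by linarith)
  have hΓ2ν : 0 < Real.Gamma (2 - ν) := Real.Gamma_pos_of_pos (by linarith)
  -- the nodes lie in (0, 1]
  have mono : ∀ i j : ℕ, 1 ≤ i → i ≤ j → j ≤ n → η i ≤ η j := by
    intro i j h1 hij hjn
    induction j with
    | zero => omega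
    | succ k ih =>
      rcases Nat.lt_or_ge i (k + 1) with hlt | hge
      · have hik : i ≤ k := by omega
        calc η i ≤ η k := ih hik (by omega)
          _ ≤ η (k + 1) := le_of_lt (hηmono k (by omega) (by omega))
      · have : i = k + 1 := by omega
        rw [this]
  have key : ∀ i ∈ Finset.Icc 1 n, 0 < η i ∧ η i ≤ 1 := by
    intro i hi
    rw [Finset.mem_Icc] at hi
    refine ⟨lt_trans hξ (lt_of_lt_of_le hξη (mono 1 i le_rfl hi.1 hi.2)), ?_⟩
    exact le_of_lt (lt_of_le_of_lt (mono i n hi.1 hi.2 le_rfl) hηn)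
  have hξ1 : ξ ≤ 1 :=
    le_of_lt (lt_trans (lt_of_lt_of_le hξη (mono 1 n le_rfl hn le_rfl)) hηn)
  -- Θ is nonnegative
  have hΘ0 : 0 ≤ Θ q σ ν ξ n η α β γ := by
    have h2 : (0:ℝ) ≤ ∑ i ∈ Finset.Icc 1 n, η i ^ q * (η i * |β i| + (q + 1) * |γ i|) := by
      refine Finset.sum_nonneg fun i hi => ?_
      have h0 : (0:ℝ) ≤ η i := (key i hi).1.le
      positivity
    have h3 : (0:ℝ) ≤ ∑ i ∈ Finset.Icc 1 n, |α i| * η i ^ (q - ν) / Real.Gamma (q - ν + 1) := by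
      refine Finset.sum_nonneg fun i hi => ?_
      have h0 : (0:ℝ) ≤ η i := (key i hi).1.le
      positivity
    have hA : (0:ℝ) ≤ 1 / Real.Gamma (q + 1) := by positivity
    have hB : (0:ℝ) ≤ 1 / (|Δ₂ n η β γ| * Real.Gamma (q + 2)) *
        (1 + q + ∑ i ∈ Finset.Icc 1 n, η i ^ q * (η i * |β i| + (q + 1) * |γ i|)) := by
      refine mul_nonneg (by positivity) (by linarith)
    have hC : (0:ℝ) ≤ Real.Gamma (2 - σ) * Real.Gamma (2 - ν) *
        (|Δ₃ n η β γ| + 2 * |Δ₂ n η β γ|) / (2 * |Δ₁ σ ν ξ n η α * Δ₂ n η β γ|) *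
        (ξ ^ (q - σ) / Real.Gamma (q - σ + 1) +
          ∑ i ∈ Finset.Icc 1 n, |α i| * η i ^ (q - ν) / Real.Gamma (q - ν + 1)) := by
      refine mul_nonneg (by positivity) ?_
      have : (0:ℝ) ≤ ξ ^ (q - σ) / Real.Gamma (q - σ + 1) := by positivity
      linarith
    unfold Θ
    linarith
  -- the projected nonlinearity
  have hgc : ∀ x : C(Set.Icc (0:ℝ) 1, ℝ), Continuous fun s : ℝ =>
      f ((Set.projIcc 0 1 zero_le_one s : ℝ)) (x (Set.projIcc 0 1 zero_le_one s)) := by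
    intro x
    have h1 : Continuous fun s : ℝ =>
        (((Set.projIcc 0 1 zero_le_one s : ℝ)), x (Set.projIcc 0 1 zero_le_one s)) :=
      (continuous_subtype_val.comp continuous_projIcc).prodMk
        (x.continuous.comp continuous_projIcc)
    have h2 : ∀ s : ℝ, (((Set.projIcc 0 1 zero_le_one s : ℝ)), x (Set.projIcc 0 1 zero_le_one s))
        ∈ Set.Icc (0:ℝ) 1 ×ˢ (Set.univ : Set ℝ) :=
      fun s => ⟨(Set.projIcc 0 1 zero_le_one s).2, trivial⟩
    exact hf.comp_continuous h1 h2
  have hgb : ∀ (x y : C(Set.Icc (0:ℝ) 1, ℝ)) (s : ℝ),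
      |f ((Set.projIcc 0 1 zero_le_one s : ℝ)) (x (Set.projIcc 0 1 zero_le_one s))
        - f ((Set.projIcc 0 1 zero_le_one s : ℝ)) (y (Set.projIcc 0 1 zero_le_one s))|
        ≤ L * dist x y := by
    intro x y s
    have h1 := hLip ((Set.projIcc 0 1 zero_le_one s : ℝ)) (Set.projIcc 0 1 zero_le_one s).2
      (x (Set.projIcc 0 1 zero_le_one s)) (y (Set.projIcc 0 1 zero_le_one s))
    refine h1.trans ?_
    have h2 : |x (Set.projIcc 0 1 zero_le_one s) - y (Set.projIcc 0 1 zero_le_one s)|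
        ≤ dist x y := by
      rw [← Real.dist_eq]
      exact ContinuousMap.dist_apply_le_dist _
    exact mul_le_mul_of_nonneg_left h2 hL.le
  -- the operator
  set T : C(Set.Icc (0:ℝ) 1, ℝ) → C(Set.Icc (0:ℝ) 1, ℝ) := fun x =>
    ⟨fun t => opA q σ ν ξ n η α β γ
        (fun s _ => f ((Set.projIcc 0 1 zero_le_one s : ℝ)) (x (Set.projIcc 0 1 zero_le_one s)))
        (fun _ => 0) ↑t,
      ((opA_cont q σ ν ξ n η α β γ _ hq1 (hgc x)).comp continuous_subtype_val)⟩ with hTdef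
  have hTeq : ∀ (x : C(Set.Icc (0:ℝ) 1, ℝ)) (t : Set.Icc (0:ℝ) 1),
      T x t = opA q σ ν ξ n η α β γ f (Set.IccExtend zero_le_one ⇑x) ↑t := by
    intro x t
    show opA q σ ν ξ n η α β γ
        (fun s _ => f ((Set.projIcc 0 1 zero_le_one s : ℝ)) (x (Set.projIcc 0 1 zero_le_one s)))
        (fun _ => 0) ↑t = _
    refine opA_eq q σ ν ξ n η α β γ _ f _ ↑t hξ.le hξ1 key t.2.1 t.2.2 ?_
    intro s hs
    have h1 : Set.projIcc 0 1 zero_le_one s = ⟨s, hs⟩ := Set.projIcc_of_mem zero_le_one hs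
    rw [h1]
    simp [Set.IccExtend, h1]
  -- contraction
  have hcontr : ∀ x y : C(Set.Icc (0:ℝ) 1, ℝ),
      dist (T x) (T y) ≤ (L * Θ q σ ν ξ n η α β γ) * dist x y := by
    intro x y
    rw [ContinuousMap.dist_le (mul_nonneg (mul_nonneg hL.le hΘ0) dist_nonneg)]
    intro t
    rw [Real.dist_eq]
    have hb : ∀ s : ℝ,
        |f ((Set.projIcc 0 1 zero_le_one s : ℝ)) (x (Set.projIcc 0 1 zero_le_one s))
          - f ((Set.projIcc 0 1 zero_le_one s : ℝ)) (y (Set.projIcc 0 1 zero_le_one s))|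
          ≤ L * dist x y := hgb x y
    have h1 := opA_diff_bound q σ ν ξ n η α β γ
      (fun s => f ((Set.projIcc 0 1 zero_le_one s : ℝ)) (x (Set.projIcc 0 1 zero_le_one s)))
      (fun s => f ((Set.projIcc 0 1 zero_le_one s : ℝ)) (y (Set.projIcc 0 1 zero_le_one s)))
      (L * dist x y) ↑t hq1 hσ0 hσ1 hν0 hν1 hξ.le hξ1 key t.2.1 t.2.2 hΔ₁ hΔ₂
      (hgc x) (hgc y) (mul_nonneg hL.le dist_nonneg) hb
    calc |T x t - T y t|
        = |opA q σ ν ξ n η α β γ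
            (fun s _ => f ((Set.projIcc 0 1 zero_le_one s : ℝ)) (x (Set.projIcc 0 1 zero_le_one s)))
            (fun _ => 0) ↑t
          - opA q σ ν ξ n η α β γ
            (fun s _ => f ((Set.projIcc 0 1 zero_le_one s : ℝ)) (y (Set.projIcc 0 1 zero_le_one s)))
            (fun _ => 0) ↑t| := rfl
      _ ≤ (L * dist x y) * Θ q σ ν ξ n η α β γ := h1
      _ = (L * Θ q σ ν ξ n η α β γ) * dist x y := by ring
  set K : NNReal := ⟨L * Θ q σ ν ξ n η α β γ, mul_nonneg hL.le hΘ0⟩ with hKdef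
  have hK1 : K < 1 := by
    rw [← NNReal.coe_lt_coe, NNReal.coe_one]
    exact hLΘ
  have hcw : ContractingWith K T :=
    ⟨hK1, LipschitzWith.of_dist_le_mul fun x y => hcontr x y⟩
  haveI : Nonempty C(Set.Icc (0:ℝ) 1, ℝ) := ⟨⟨fun _ => 0, continuous_const⟩⟩
  refine ⟨ContractingWith.fixedPoint T hcw, ?_, ?_⟩
  · intro t
    have h1 : T (ContractingWith.fixedPoint T hcw) = ContractingWith.fixedPoint T hcw :=
      hcw.fixedPoint_isFixedPt
    conv_lhs => rw [← h1]
    exact hTeq _ t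
  · intro y hy
    refine hcw.fixedPoint_unique ?_
    ext t
    show T y t = y t
    rw [hTeq y t, ← hy t]
end

section
/- Assume f satisfies (H₁): there exists a constant L > 0 such that |f(t,x) − f(t,y)| ≤ L|x − y| for all t ∈ [0,1] and all x, y ∈ ℝ, and assume L·Θ < 1. Let M = sup_{t∈[0,1]} |f(t,0)| and let ρ > 0 satisfy ρ ≥ Θ·M·(1 − Θ·L)^{−1}. Then for every x ∈ C([0,1],ℝ) with ‖x‖ ≤ ρ one has ‖𝒜x‖ ≤ ρ; that is, 𝒜 maps the closed ball B_ρ = {x ∈ C([0,1],ℝ) : ‖x‖ ≤ ρ} into itself. -/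
open MeasureTheory intervalIntegral

lemma key_int (b r c : ℝ) (hb0 : 0 ≤ b) (hb1 : b ≤ 1) (hr : -1 < r) (hc : 0 < c)
    {C : ℝ} (g : ℝ → ℝ) (hg : ContinuousOn g (Set.Icc 0 1))
    (hgC : ∀ s ∈ Set.Icc (0:ℝ) 1, |g s| ≤ C) :
    |∫ s in (0:ℝ)..b, (b - s) ^ r / c * g s| ≤ C * b ^ (r + 1) / ((r + 1) * c) := by
  have hr1 : 0 < r + 1 := by linarith
  have hC0 : 0 ≤ C := le_trans (abs_nonneg _) (hgC 0 ⟨le_rfl, zero_le_one⟩)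
  have hI : IntervalIntegrable (fun s => (b - s) ^ r) volume 0 b := by
    have h := (intervalIntegral.intervalIntegrable_rpow' (a := 0) (b := b) hr).comp_sub_left b
    simpa using h.symm
  have hguIcc : ContinuousOn g (Set.uIcc 0 b) := by
    refine hg.mono ?_
    rw [Set.uIcc_of_le hb0]; exact Set.Icc_subset_Icc le_rfl hb1
  have hInt : IntervalIntegrable (fun s => (b - s) ^ r / c * g s) volume 0 b :=
    (hI.div_const c).mul_continuousOn hguIcc
  have hval : (∫ s in (0:ℝ)..b, (b - s) ^ r) = b ^ (r + 1) / (r + 1) := by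
    rw [intervalIntegral.integral_comp_sub_left (fun x => x ^ r) b]
    simp only [sub_self, sub_zero]
    rw [integral_rpow (Or.inl hr), Real.zero_rpow (ne_of_gt hr1)]
    ring
  calc |∫ s in (0:ℝ)..b, (b - s) ^ r / c * g s|
      ≤ ∫ s in (0:ℝ)..b, |(b - s) ^ r / c * g s| :=
        intervalIntegral.abs_integral_le_integral_abs hb0
    _ ≤ ∫ s in (0:ℝ)..b, (b - s) ^ r * (C / c) := by
        refine intervalIntegral.integral_mono_on hb0 hInt.abs (hI.mul_const _) ?_
        intro s hs
        have hbs : 0 ≤ b - s := by linarith [hs.2]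
        have h1 : |(b - s) ^ r / c * g s| = (b - s) ^ r / c * |g s| := by
          rw [abs_mul, abs_div, abs_of_nonneg (Real.rpow_nonneg hbs r), abs_of_pos hc]
        rw [h1]
        have h2 : (b - s) ^ r / c * |g s| ≤ (b - s) ^ r / c * C :=
          mul_le_mul_of_nonneg_left (hgC s ⟨hs.1, hs.2.trans hb1⟩) (by positivity)
        have h3 : (b - s) ^ r / c * C = (b - s) ^ r * (C / c) := by ring
        linarith [h2]
    _ = C * b ^ (r + 1) / ((r + 1) * c) := by
        rw [intervalIntegral.integral_mul_const, hval]
        field_simp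

set_option maxHeartbeats 1000000 in
theorem thm31_invariance (q σ ν ξ : ℝ) (n : ℕ) (η α β γ : ℕ → ℝ)
    (hq1 : 1 < q) (hq2 : q ≤ 2) (hσ0 : 0 < σ) (hσ1 : σ ≤ 1) (hν0 : 0 < ν) (hν1 : ν ≤ 1)
    (hn : 1 ≤ n) (hξ : 0 < ξ) (hξη : ξ < η 1)
    (hηmono : ∀ i, 1 ≤ i → i < n → η i < η (i + 1)) (hηn : η n < 1)
    (hΔ₁ : Δ₁ σ ν ξ n η α ≠ 0) (hΔ₂ : Δ₂ n η β γ ≠ 0)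
    (f : ℝ → ℝ → ℝ)
    (hf : ContinuousOn (Function.uncurry f) (Set.Icc 0 1 ×ˢ Set.univ))
    (L : ℝ) (hL : 0 < L)
    (hLip : ∀ t ∈ Set.Icc (0:ℝ) 1, ∀ x y : ℝ, |f t x - f t y| ≤ L * |x - y|)
    (hLΘ : L * Θ q σ ν ξ n η α β γ < 1)
    (M : ℝ) (hM : M = sSup ((fun t => |f t 0|) '' Set.Icc (0:ℝ) 1))
    (ρ : ℝ) (hρ0 : 0 < ρ)
    (hρ : Θ q σ ν ξ n η α β γ * M * (1 - Θ q σ ν ξ n η α β γ * L)⁻¹ ≤ ρ) :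
    ∀ x : C(Set.Icc (0:ℝ) 1, ℝ), ‖x‖ ≤ ρ →
      ∀ t ∈ Set.Icc (0:ℝ) 1,
        |opA q σ ν ξ n η α β γ f (Set.IccExtend zero_le_one ⇑x) t| ≤ ρ := by
  intro x hx t ht
  have hq0 : (0:ℝ) < q := by linarith
  have hqσ : (0:ℝ) < q - σ := by linarith
  have hqν : (0:ℝ) < q - ν := by linarith
  have hΓq : 0 < Real.Gamma q := Real.Gamma_pos_of_pos hq0
  have hΓq1 : 0 < Real.Gamma (q + 1) := Real.Gamma_pos_of_pos (by linarith)
  have hΓq2 : 0 < Real.Gamma (q + 2) := Real.Gamma_pos_of_pos (by linarith)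
  have hΓqσ : 0 < Real.Gamma (q - σ) := Real.Gamma_pos_of_pos hqσ
  have hΓqν : 0 < Real.Gamma (q - ν) := Real.Gamma_pos_of_pos hqν
  have hΓqσ1 : 0 < Real.Gamma (q - σ + 1) := Real.Gamma_pos_of_pos (by linarith)
  have hΓqν1 : 0 < Real.Gamma (q - ν + 1) := Real.Gamma_pos_of_pos (by linarith)
  have hG2σ : 0 < Real.Gamma (2 - σ) := Real.Gamma_pos_of_pos (by linarith)
  have hG2ν : 0 < Real.Gamma (2 - ν) := Real.Gamma_pos_of_pos (by linarith)
  have hGq1 : Real.Gamma (q + 1) = q * Real.Gamma q := Real.Gamma_add_one hq0.ne'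
  have hGq2 : Real.Gamma (q + 2) = (q + 1) * Real.Gamma (q + 1) := by
    rw [show q + 2 = q + 1 + 1 by ring, Real.Gamma_add_one (by positivity)]
  have hGqσ1 : Real.Gamma (q - σ + 1) = (q - σ) * Real.Gamma (q - σ) :=
    Real.Gamma_add_one hqσ.ne'
  have hGqν1 : Real.Gamma (q - ν + 1) = (q - ν) * Real.Gamma (q - ν) :=
    Real.Gamma_add_one hqν.ne'
  -- η bounds
  have hmono : ∀ i k, 1 ≤ i → i ≤ k → k ≤ n → η i ≤ η k := by
    intro i k h1 hik hkn
    induction k, hik using Nat.le_induction with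
    | base => exact le_rfl
    | succ k hik ih =>
        have hkn' : k ≤ n := Nat.le_of_succ_le hkn
        exact (ih hkn').trans (hηmono k (h1.trans hik) (Nat.lt_of_succ_le hkn)).le
  have hη : ∀ i ∈ Finset.Icc 1 n, 0 < η i ∧ η i ≤ 1 := by
    intro i hi
    rw [Finset.mem_Icc] at hi
    have h1 : η 1 ≤ η i := hmono 1 i le_rfl hi.1 hi.2
    have h2 : η i ≤ η n := hmono i n hi.1 hi.2 le_rfl
    exact ⟨lt_of_lt_of_le (hξ.trans hξη) h1, h2.trans hηn.le⟩
  have hξ1 : ξ ≤ 1 := by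
    have := (hη 1 (by simp [Finset.mem_Icc, hn])).2
    linarith
  -- the function g
  set x' : ℝ → ℝ := Set.IccExtend zero_le_one ⇑x with hx'
  have hx'cont : Continuous x' := x.continuous.Icc_extend'
  set g : ℝ → ℝ := fun s => f s (x' s) with hg
  have hgcont : ContinuousOn g (Set.Icc 0 1) := by
    have h1 : ContinuousOn (fun s : ℝ => (s, x' s)) (Set.Icc 0 1) :=
      (continuous_id.prodMk hx'cont).continuousOn
    exact hf.comp h1 (fun s hs => ⟨hs, trivial⟩)
  set C : ℝ := M + L * ρ with hCdef
  have hcont0 : ContinuousOn (fun s : ℝ => |f s 0|) (Set.Icc 0 1) := by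
    have h1 : ContinuousOn (fun s : ℝ => (s, (0:ℝ))) (Set.Icc 0 1) :=
      (continuous_id.prodMk continuous_const).continuousOn
    exact (hf.comp h1 (fun s hs => ⟨hs, trivial⟩)).abs
  have hMb : ∀ s ∈ Set.Icc (0:ℝ) 1, |f s 0| ≤ M := by
    intro s hs
    rw [hM]
    exact le_csSup (isCompact_Icc.image_of_continuousOn hcont0).bddAbove ⟨s, hs, rfl⟩
  have hM0 : 0 ≤ M := le_trans (abs_nonneg _) (hMb 0 ⟨le_rfl, zero_le_one⟩)
  have hC0 : 0 ≤ C := by positivity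
  have hgC : ∀ s ∈ Set.Icc (0:ℝ) 1, |g s| ≤ C := by
    intro s hs
    have h1 : |x' s| ≤ ρ := by
      have h2 := ContinuousMap.norm_coe_le_norm x (Set.projIcc 0 1 zero_le_one s)
      calc |x' s| = ‖x (Set.projIcc 0 1 zero_le_one s)‖ := rfl
        _ ≤ ‖x‖ := h2
        _ ≤ ρ := hx
    calc |g s| = |f s (x' s) - f s 0 + f s 0| := by simp [hg]
      _ ≤ |f s (x' s) - f s 0| + |f s 0| := abs_add_le _ _
      _ ≤ L * |x' s - 0| + M := add_le_add (hLip s hs _ _) (hMb s hs)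
      _ ≤ L * ρ + M := by
          rw [sub_zero]
          have h3 := mul_le_mul_of_nonneg_left h1 hL.le
          linarith
      _ = C := by rw [hCdef]; ring
  have key : ∀ (b r c : ℝ), 0 ≤ b → b ≤ 1 → -1 < r → 0 < c →
      |∫ s in (0:ℝ)..b, (b - s) ^ r / c * f s (x' s)| ≤ C * b ^ (r + 1) / ((r + 1) * c) :=
    fun b r c hb0 hb1 hr hc => key_int b r c hb0 hb1 hr hc g hgcont hgC
  -- Term 1
  have hT1 : |∫ s in (0:ℝ)..t, (t - s) ^ (q - 1) / Real.Gamma q * f s (x' s)|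
      ≤ C * (1 / Real.Gamma (q + 1)) := by
    have h := key t (q - 1) (Real.Gamma q) ht.1 ht.2 (by linarith) hΓq
    rw [show q - 1 + 1 = q by ring] at h
    refine h.trans ?_
    have htq : t ^ q ≤ 1 := Real.rpow_le_one ht.1 ht.2 hq0.le
    rw [hGq1]
    calc C * t ^ q / (q * Real.Gamma q) ≤ C * 1 / (q * Real.Gamma q) := by gcongr
      _ = C * (1 / (q * Real.Gamma q)) := by ring
  -- Term 2 pieces
  have h1int : |∫ s in (0:ℝ)..1, (1 - s) ^ (q - 1) / Real.Gamma q * f s (x' s)|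
      ≤ C / Real.Gamma (q + 1) := by
    have h := key 1 (q - 1) (Real.Gamma q) zero_le_one le_rfl (by linarith) hΓq
    rw [show q - 1 + 1 = q by ring, Real.one_rpow] at h
    calc _ ≤ C * 1 / (q * Real.Gamma q) := h
      _ = C / (q * Real.Gamma q) := by ring
      _ = C / Real.Gamma (q + 1) := by rw [hGq1]
  have hβint : ∀ i ∈ Finset.Icc 1 n,
      |β i * ∫ s in (0:ℝ)..η i, (η i - s) ^ q / Real.Gamma (q + 1) * f s (x' s)|
      ≤ |β i| * (C * η i ^ (q + 1) / Real.Gamma (q + 2)) := by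
    intro i hi
    rw [abs_mul]
    refine mul_le_mul_of_nonneg_left ?_ (abs_nonneg _)
    have h := key (η i) q (Real.Gamma (q + 1)) (hη i hi).1.le (hη i hi).2 (by linarith) hΓq1
    rwa [show (q + 1) * Real.Gamma (q + 1) = Real.Gamma (q + 2) by rw [hGq2]] at h
  have hγint : ∀ i ∈ Finset.Icc 1 n,
      |γ i * ∫ s in (0:ℝ)..η i, (η i - s) ^ (q - 1) / Real.Gamma q * f s (x' s)|
      ≤ |γ i| * (C * η i ^ q / Real.Gamma (q + 1)) := by
    intro i hi
    rw [abs_mul]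
    refine mul_le_mul_of_nonneg_left ?_ (abs_nonneg _)
    have h := key (η i) (q - 1) (Real.Gamma q) (hη i hi).1.le (hη i hi).2 (by linarith) hΓq
    rwa [show q - 1 + 1 = q by ring, show q * Real.Gamma q = Real.Gamma (q + 1) by rw [hGq1]] at h
  -- Term 3 pieces
  have hξint : |∫ s in (0:ℝ)..ξ, (ξ - s) ^ (q - σ - 1) / Real.Gamma (q - σ) * f s (x' s)|
      ≤ C * ξ ^ (q - σ) / Real.Gamma (q - σ + 1) := by
    have h := key ξ (q - σ - 1) (Real.Gamma (q - σ)) hξ.le hξ1 (by linarith) hΓqσ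
    rwa [show q - σ - 1 + 1 = q - σ by ring,
      show (q - σ) * Real.Gamma (q - σ) = Real.Gamma (q - σ + 1) by rw [hGqσ1]] at h
  have hαint : ∀ i ∈ Finset.Icc 1 n,
      |α i * ∫ s in (0:ℝ)..η i, (η i - s) ^ (q - ν - 1) / Real.Gamma (q - ν) * f s (x' s)|
      ≤ |α i| * (C * η i ^ (q - ν) / Real.Gamma (q - ν + 1)) := by
    intro i hi
    rw [abs_mul]
    refine mul_le_mul_of_nonneg_left ?_ (abs_nonneg _)
    have h := key (η i) (q - ν - 1) (Real.Gamma (q - ν)) (hη i hi).1.le (hη i hi).2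
      (by linarith) hΓqν
    rwa [show q - ν - 1 + 1 = q - ν by ring,
      show (q - ν) * Real.Gamma (q - ν) = Real.Gamma (q - ν + 1) by rw [hGqν1]] at h
  have hD2pos : 0 < |Δ₂ n η β γ| := abs_pos.mpr hΔ₂
  have hD12pos : 0 < |Δ₁ σ ν ξ n η α * Δ₂ n η β γ| := abs_pos.mpr (mul_ne_zero hΔ₁ hΔ₂)
  have htri : ∀ a b c : ℝ, |(-a) + b + c| ≤ |a| + |b| + |c| := by
    intro a b c
    calc |(-a) + b + c| ≤ |(-a) + b| + |c| := abs_add_le _ _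
      _ ≤ |(-a)| + |b| + |c| := add_le_add_left (abs_add_le _ _) _
      _ = |a| + |b| + |c| := by rw [abs_neg]
  -- Term 2 bound
  have hT2 : |(1 / Δ₂ n η β γ) *
      (-(∫ s in (0:ℝ)..1, (1 - s) ^ (q - 1) / Real.Gamma q * f s (x' s)) +
       (∑ i ∈ Finset.Icc 1 n, β i *
          ∫ s in (0:ℝ)..η i, (η i - s) ^ q / Real.Gamma (q + 1) * f s (x' s)) +
       ∑ i ∈ Finset.Icc 1 n, γ i *
          ∫ s in (0:ℝ)..η i, (η i - s) ^ (q - 1) / Real.Gamma q * f s (x' s))|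
      ≤ C * (1 / (|Δ₂ n η β γ| * Real.Gamma (q + 2)) *
          (1 + q + ∑ i ∈ Finset.Icc 1 n, η i ^ q * (η i * |β i| + (q + 1) * |γ i|))) := by
    rw [abs_mul, abs_div, abs_one]
    have hβsum : |∑ i ∈ Finset.Icc 1 n, β i *
        ∫ s in (0:ℝ)..η i, (η i - s) ^ q / Real.Gamma (q + 1) * f s (x' s)|
        ≤ ∑ i ∈ Finset.Icc 1 n, |β i| * (C * η i ^ (q + 1) / Real.Gamma (q + 2)) :=
      (Finset.abs_sum_le_sum_abs _ _).trans (Finset.sum_le_sum hβint)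
    have hγsum : |∑ i ∈ Finset.Icc 1 n, γ i *
        ∫ s in (0:ℝ)..η i, (η i - s) ^ (q - 1) / Real.Gamma q * f s (x' s)|
        ≤ ∑ i ∈ Finset.Icc 1 n, |γ i| * (C * η i ^ q / Real.Gamma (q + 1)) :=
      (Finset.abs_sum_le_sum_abs _ _).trans (Finset.sum_le_sum hγint)
    have hstep : C / Real.Gamma (q + 1) +
        (∑ i ∈ Finset.Icc 1 n, |β i| * (C * η i ^ (q + 1) / Real.Gamma (q + 2))) +
        (∑ i ∈ Finset.Icc 1 n, |γ i| * (C * η i ^ q / Real.Gamma (q + 1)))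
        = C * ((1 + q + ∑ i ∈ Finset.Icc 1 n, η i ^ q * (η i * |β i| + (q + 1) * |γ i|))
            / Real.Gamma (q + 2)) := by
      have hq1ne : (q + 1) ≠ 0 := by positivity
      have hper : ∀ i ∈ Finset.Icc 1 n,
          |β i| * (C * η i ^ (q + 1) / Real.Gamma (q + 2)) +
          |γ i| * (C * η i ^ q / Real.Gamma (q + 1))
          = C * (η i ^ q * (η i * |β i| + (q + 1) * |γ i|)) / Real.Gamma (q + 2) := by
        intro i hi
        rw [Real.rpow_add_one (hη i hi).1.ne' q, hGq2]
        field_simp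
      have h0 : C / Real.Gamma (q + 1) = C * (1 + q) / Real.Gamma (q + 2) := by
        rw [hGq2]
        field_simp
        ring
      rw [add_assoc, ← Finset.sum_add_distrib, Finset.sum_congr rfl hper, h0]
      rw [← Finset.sum_div, ← Finset.mul_sum]
      ring
    have hS : |(-(∫ s in (0:ℝ)..1, (1 - s) ^ (q - 1) / Real.Gamma q * f s (x' s)) +
       (∑ i ∈ Finset.Icc 1 n, β i *
          ∫ s in (0:ℝ)..η i, (η i - s) ^ q / Real.Gamma (q + 1) * f s (x' s)) +
       ∑ i ∈ Finset.Icc 1 n, γ i *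
          ∫ s in (0:ℝ)..η i, (η i - s) ^ (q - 1) / Real.Gamma q * f s (x' s))|
        ≤ C * ((1 + q + ∑ i ∈ Finset.Icc 1 n, η i ^ q * (η i * |β i| + (q + 1) * |γ i|))
            / Real.Gamma (q + 2)) := by
      refine (htri _ _ _).trans ?_
      refine le_trans (add_le_add (add_le_add h1int hβsum) hγsum) (le_of_eq hstep)
    refine le_trans (mul_le_mul_of_nonneg_left hS (by positivity)) (le_of_eq (by ring))
  -- Term 3 bound
  have hT3 : |Real.Gamma (2 - σ) * Real.Gamma (2 - ν) *
        (Δ₃ n η β γ + 2 * Δ₂ n η β γ * t) / (2 * Δ₁ σ ν ξ n η α * Δ₂ n η β γ) *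
      (-(∫ s in (0:ℝ)..ξ, (ξ - s) ^ (q - σ - 1) / Real.Gamma (q - σ) * f s (x' s)) +
       ∑ i ∈ Finset.Icc 1 n, α i *
          ∫ s in (0:ℝ)..η i, (η i - s) ^ (q - ν - 1) / Real.Gamma (q - ν) * f s (x' s))|
      ≤ C * (Real.Gamma (2 - σ) * Real.Gamma (2 - ν) * (|Δ₃ n η β γ| + 2 * |Δ₂ n η β γ|) /
          (2 * |Δ₁ σ ν ξ n η α * Δ₂ n η β γ|) *
          (ξ ^ (q - σ) / Real.Gamma (q - σ + 1) +
           ∑ i ∈ Finset.Icc 1 n, |α i| * η i ^ (q - ν) / Real.Gamma (q - ν + 1))) := by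
    rw [abs_mul]
    have hcoef : |Real.Gamma (2 - σ) * Real.Gamma (2 - ν) *
          (Δ₃ n η β γ + 2 * Δ₂ n η β γ * t) / (2 * Δ₁ σ ν ξ n η α * Δ₂ n η β γ)|
        ≤ Real.Gamma (2 - σ) * Real.Gamma (2 - ν) * (|Δ₃ n η β γ| + 2 * |Δ₂ n η β γ|) /
          (2 * |Δ₁ σ ν ξ n η α * Δ₂ n η β γ|) := by
      rw [abs_div, abs_mul, abs_mul, abs_of_pos hG2σ, abs_of_pos hG2ν,
        show |2 * Δ₁ σ ν ξ n η α * Δ₂ n η β γ| = 2 * |Δ₁ σ ν ξ n η α * Δ₂ n η β γ| by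
          rw [mul_assoc, abs_mul, abs_two]]
      have hnum : |Δ₃ n η β γ + 2 * Δ₂ n η β γ * t| ≤ |Δ₃ n η β γ| + 2 * |Δ₂ n η β γ| := by
        calc |Δ₃ n η β γ + 2 * Δ₂ n η β γ * t|
            ≤ |Δ₃ n η β γ| + |2 * Δ₂ n η β γ * t| := abs_add_le _ _
          _ = |Δ₃ n η β γ| + 2 * |Δ₂ n η β γ| * |t| := by rw [abs_mul, abs_mul, abs_two]
          _ ≤ |Δ₃ n η β γ| + 2 * |Δ₂ n η β γ| * 1 := by
              gcongr
              rw [abs_of_nonneg ht.1]; exact ht.2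
          _ = |Δ₃ n η β γ| + 2 * |Δ₂ n η β γ| := by ring
      gcongr
    have hS' : |(-(∫ s in (0:ℝ)..ξ, (ξ - s) ^ (q - σ - 1) / Real.Gamma (q - σ) * f s (x' s)) +
       ∑ i ∈ Finset.Icc 1 n, α i *
          ∫ s in (0:ℝ)..η i, (η i - s) ^ (q - ν - 1) / Real.Gamma (q - ν) * f s (x' s))|
        ≤ C * (ξ ^ (q - σ) / Real.Gamma (q - σ + 1) +
           ∑ i ∈ Finset.Icc 1 n, |α i| * η i ^ (q - ν) / Real.Gamma (q - ν + 1)) := by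
      refine (abs_add_le _ _).trans ?_
      have h1 : |(-(∫ s in (0:ℝ)..ξ, (ξ - s) ^ (q - σ - 1) / Real.Gamma (q - σ) * f s (x' s)))|
          ≤ C * ξ ^ (q - σ) / Real.Gamma (q - σ + 1) := by rw [abs_neg]; exact hξint
      have h2 : |∑ i ∈ Finset.Icc 1 n, α i *
          ∫ s in (0:ℝ)..η i, (η i - s) ^ (q - ν - 1) / Real.Gamma (q - ν) * f s (x' s)|
          ≤ ∑ i ∈ Finset.Icc 1 n, |α i| * (C * η i ^ (q - ν) / Real.Gamma (q - ν + 1)) :=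
        (Finset.abs_sum_le_sum_abs _ _).trans (Finset.sum_le_sum hαint)
      refine le_trans (add_le_add h1 h2) (le_of_eq ?_)
      rw [mul_add, Finset.mul_sum]
      congr 1
      · ring
      · exact Finset.sum_congr rfl (fun i hi => by ring)
    refine le_trans (mul_le_mul hcoef hS' (abs_nonneg _) (by positivity)) (le_of_eq (by ring))
  -- combine
  have hopA : |opA q σ ν ξ n η α β γ f x' t| ≤ C * Θ q σ ν ξ n η α β γ := by
    unfold opA Θ
    refine le_trans ?_ (le_of_eq (by ring :
      C * (1 / Real.Gamma (q + 1)) +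
      C * (1 / (|Δ₂ n η β γ| * Real.Gamma (q + 2)) *
          (1 + q + ∑ i ∈ Finset.Icc 1 n, η i ^ q * (η i * |β i| + (q + 1) * |γ i|))) +
      C * (Real.Gamma (2 - σ) * Real.Gamma (2 - ν) * (|Δ₃ n η β γ| + 2 * |Δ₂ n η β γ|) /
          (2 * |Δ₁ σ ν ξ n η α * Δ₂ n η β γ|) *
          (ξ ^ (q - σ) / Real.Gamma (q - σ + 1) +
           ∑ i ∈ Finset.Icc 1 n, |α i| * η i ^ (q - ν) / Real.Gamma (q - ν + 1))) = _))
    calc |_| ≤ _ + _ + _ := by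
          refine le_trans (abs_add_le _ _) (add_le_add_left (abs_add_le _ _) _)
      _ ≤ _ := add_le_add (add_le_add hT1 hT2) hT3
  -- Θ nonneg and final inequality
  have hΘnn : 0 ≤ Θ q σ ν ξ n η α β γ := by
    unfold Θ
    have h1 : (0:ℝ) ≤ ∑ i ∈ Finset.Icc 1 n, η i ^ q * (η i * |β i| + (q + 1) * |γ i|) := by
      refine Finset.sum_nonneg fun i hi => ?_
      have := (hη i hi).1
      positivity
    have h2 : (0:ℝ) ≤ ∑ i ∈ Finset.Icc 1 n, |α i| * η i ^ (q - ν) / Real.Gamma (q - ν + 1) := by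
      refine Finset.sum_nonneg fun i hi => ?_
      have := (hη i hi).1
      positivity
    positivity
  have hfinal : C * Θ q σ ν ξ n η α β γ ≤ ρ := by
    set Th := Θ q σ ν ξ n η α β γ with hTh
    have h1 : 0 < 1 - Th * L := by
      have := mul_comm Th L
      linarith
    have h3 : Th * M ≤ ρ * (1 - Th * L) :=
      (div_le_iff₀ h1).mp (by rw [div_eq_mul_inv]; exact hρ)
    have h4 : C * Th = Th * M + Th * L * ρ := by rw [hCdef]; ring
    have h5 : ρ * (1 - Th * L) = ρ - Th * L * ρ := by ring
    linarith [h3, h4, h5]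
  exact hopA.trans hfinal
end

section
/- Assume f satisfies (H₁): there exists a constant L > 0 such that |f(t,x) − f(t,y)| ≤ L|x − y| for all t ∈ [0,1] and all x, y ∈ ℝ. Then for all x, y ∈ C([0,1],ℝ) one has ‖𝒜x − 𝒜y‖ ≤ L·Θ·‖x − y‖. -/
open MeasureTheory intervalIntegral

lemma kernel_integrable (p a : ℝ) (hp : 0 < p) :
    IntervalIntegrable (fun s => (a - s) ^ (p - 1) / Real.Gamma p) volume 0 a := by
  have h1 : IntervalIntegrable (fun s : ℝ => s ^ (p - 1)) volume 0 a :=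
    intervalIntegral.intervalIntegrable_rpow' (by linarith)
  have h2 := h1.comp_sub_left a
  simp only [sub_zero, sub_self] at h2
  exact (h2.symm).div_const _

lemma kernel_integral (p a : ℝ) (hp : 0 < p) :
    ∫ s in (0:ℝ)..a, (a - s) ^ (p - 1) / Real.Gamma p = a ^ p / Real.Gamma (p + 1) := by
  rw [intervalIntegral.integral_div]
  rw [intervalIntegral.integral_comp_sub_left (fun s => s ^ (p - 1)) a]
  rw [sub_self, sub_zero, integral_rpow (Or.inl (by linarith))]
  rw [sub_add_cancel, Real.zero_rpow hp.ne', sub_zero, Real.Gamma_add_one hp.ne']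
  field_simp

lemma key_bound (p a : ℝ) (hp : 0 < p) (ha : 0 ≤ a) (ha1 : a ≤ 1)
    (u v : ℝ → ℝ) (hu : ContinuousOn u (Set.Icc 0 1)) (hv : ContinuousOn v (Set.Icc 0 1))
    (C : ℝ) (hC : 0 ≤ C) (hb : ∀ s ∈ Set.Icc (0:ℝ) 1, |u s - v s| ≤ C) :
    |(∫ s in (0:ℝ)..a, (a - s) ^ (p - 1) / Real.Gamma p * u s) -
     (∫ s in (0:ℝ)..a, (a - s) ^ (p - 1) / Real.Gamma p * v s)| ≤
    C * (a ^ p / Real.Gamma (p + 1)) := by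
  have hΓ : 0 < Real.Gamma p := Real.Gamma_pos_of_pos hp
  have hsub : Set.uIcc (0:ℝ) a ⊆ Set.Icc 0 1 := by
    rw [Set.uIcc_of_le ha]; exact Set.Icc_subset_Icc le_rfl ha1
  have hk := kernel_integrable p a hp
  have hku := hk.mul_continuousOn (hu.mono hsub)
  have hkv := hk.mul_continuousOn (hv.mono hsub)
  rw [← intervalIntegral.integral_sub hku hkv]
  have hkC : IntervalIntegrable (fun s => (a - s) ^ (p - 1) / Real.Gamma p * C) volume 0 a :=
    hk.mul_const _
  have hbound : ∀ᵐ s ∂(volume.restrict (Set.uIoc (0:ℝ) a)),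
      ‖(a - s) ^ (p - 1) / Real.Gamma p * u s - (a - s) ^ (p - 1) / Real.Gamma p * v s‖ ≤
      (a - s) ^ (p - 1) / Real.Gamma p * C := by
    refine (ae_restrict_iff' measurableSet_uIoc).2 (Filter.Eventually.of_forall fun s hs => ?_)
    rw [Set.uIoc_of_le ha] at hs
    have hs1 : s ∈ Set.Icc (0:ℝ) 1 := ⟨hs.1.le, hs.2.trans ha1⟩
    have hknn : 0 ≤ (a - s) ^ (p - 1) / Real.Gamma p :=
      div_nonneg (Real.rpow_nonneg (by linarith [hs.2]) _) hΓ.le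
    rw [← mul_sub, Real.norm_eq_abs, abs_mul, abs_of_nonneg hknn]
    exact mul_le_mul_of_nonneg_left (hb s hs1) hknn
  calc ‖∫ s in (0:ℝ)..a, ((a - s) ^ (p - 1) / Real.Gamma p * u s -
        (a - s) ^ (p - 1) / Real.Gamma p * v s)‖
      ≤ |∫ s in (0:ℝ)..a, (a - s) ^ (p - 1) / Real.Gamma p * C| :=
        intervalIntegral.norm_integral_le_abs_of_norm_le hbound hkC
    _ = |(a ^ p / Real.Gamma (p + 1)) * C| := by
        rw [intervalIntegral.integral_mul_const, kernel_integral p a hp]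
    _ ≤ C * (a ^ p / Real.Gamma (p + 1)) := by
        rw [abs_of_nonneg (mul_nonneg (div_nonneg (Real.rpow_nonneg ha _)
          (Real.Gamma_nonneg_of_nonneg (by linarith))) hC)]
        ring_nf
        exact le_rfl

set_option maxHeartbeats 1600000 in
theorem thm31_contraction_estimate (q σ ν ξ : ℝ) (n : ℕ) (η α β γ : ℕ → ℝ)
    (hq1 : 1 < q) (hq2 : q ≤ 2) (hσ0 : 0 < σ) (hσ1 : σ ≤ 1) (hν0 : 0 < ν) (hν1 : ν ≤ 1)
    (hn : 1 ≤ n) (hξ : 0 < ξ) (hξη : ξ < η 1)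
    (hηmono : ∀ i, 1 ≤ i → i < n → η i < η (i + 1)) (hηn : η n < 1)
    (hΔ₁ : Δ₁ σ ν ξ n η α ≠ 0) (hΔ₂ : Δ₂ n η β γ ≠ 0)
    (f : ℝ → ℝ → ℝ)
    (hf : ContinuousOn (Function.uncurry f) (Set.Icc 0 1 ×ˢ Set.univ))
    (L : ℝ) (hL : 0 < L)
    (hLip : ∀ t ∈ Set.Icc (0:ℝ) 1, ∀ x y : ℝ, |f t x - f t y| ≤ L * |x - y|) :
    ∀ x y : C(Set.Icc (0:ℝ) 1, ℝ), ∀ t ∈ Set.Icc (0:ℝ) 1,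
      |opA q σ ν ξ n η α β γ f (Set.IccExtend zero_le_one ⇑x) t -
        opA q σ ν ξ n η α β γ f (Set.IccExtend zero_le_one ⇑y) t| ≤
      L * Θ q σ ν ξ n η α β γ * ‖x - y‖ := by
  intro x y t ht
  -- basic facts about η
  have hchain : ∀ i j : ℕ, 1 ≤ i → i ≤ j → j ≤ n → η i ≤ η j := by
    intro i j h1 hij hjn
    induction j, hij using Nat.le_induction with
    | base => exact le_rfl
    | succ k hk ih =>
        exact (ih (by omega)).trans (hηmono k (h1.trans hk) (by omega)).le
  have hη : ∀ i ∈ Finset.Icc 1 n, 0 < η i ∧ η i ≤ 1 := by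
    intro i hi
    rw [Finset.mem_Icc] at hi
    exact ⟨hξ.trans (hξη.trans_le (hchain 1 i le_rfl hi.1 hi.2)),
      ((hchain i n hi.1 hi.2 le_rfl).trans_lt hηn).le⟩
  -- the two composed functions and their properties
  set X := Set.IccExtend (zero_le_one (α := ℝ)) ⇑x with hX
  set Y := Set.IccExtend (zero_le_one (α := ℝ)) ⇑y with hY
  have hXc : Continuous X := Continuous.Icc_extend' x.continuous
  have hYc : Continuous Y := Continuous.Icc_extend' y.continuous
  have hu : ContinuousOn (fun s => f s (X s)) (Set.Icc 0 1) := by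
    exact hf.comp ((continuous_id.prodMk hXc).continuousOn)
      (fun s hs => ⟨hs, Set.mem_univ _⟩)
  have hv : ContinuousOn (fun s => f s (Y s)) (Set.Icc 0 1) := by
    exact hf.comp ((continuous_id.prodMk hYc).continuousOn)
      (fun s hs => ⟨hs, Set.mem_univ _⟩)
  set M := ‖x - y‖ with hM
  have hM0 : 0 ≤ M := norm_nonneg _
  set C := L * M with hCdef
  have hC : 0 ≤ C := mul_nonneg hL.le hM0
  have hb : ∀ s ∈ Set.Icc (0:ℝ) 1, |f s (X s) - f s (Y s)| ≤ C := by
    intro s hs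
    refine (hLip s hs (X s) (Y s)).trans ?_
    have : |X s - Y s| ≤ M := by
      have h1 : X s - Y s = (x - y) (Set.projIcc 0 1 zero_le_one s) := by
        simp [hX, hY, Set.IccExtend]
      rw [h1, hM, ← Real.norm_eq_abs]
      exact ContinuousMap.norm_coe_le_norm (x - y) _
    exact mul_le_mul_of_nonneg_left this hL.le
  -- Gamma positivity
  have hΓq1 : 0 < Real.Gamma (q + 1) := Real.Gamma_pos_of_pos (by linarith)
  have hΓq2 : 0 < Real.Gamma (q + 2) := Real.Gamma_pos_of_pos (by linarith)
  have hΓσ : 0 < Real.Gamma (q - σ + 1) := Real.Gamma_pos_of_pos (by linarith)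
  have hΓν : 0 < Real.Gamma (q - ν + 1) := Real.Gamma_pos_of_pos (by linarith)
  have hΓ2σ : 0 < Real.Gamma (2 - σ) := Real.Gamma_pos_of_pos (by linarith)
  have hΓ2ν : 0 < Real.Gamma (2 - ν) := Real.Gamma_pos_of_pos (by linarith)
  have hΓrec : Real.Gamma (q + 2) = (q + 1) * Real.Gamma (q + 1) := by
    have : Real.Gamma (q + 1 + 1) = (q + 1) * Real.Gamma (q + 1) :=
      Real.Gamma_add_one (by positivity)
    linarith [this, show Real.Gamma (q+2) = Real.Gamma (q+1+1) by ring_nf]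
  -- individual integral bounds
  have h₁ : |(∫ s in (0:ℝ)..t, (t - s) ^ (q - 1) / Real.Gamma q * f s (X s)) -
      (∫ s in (0:ℝ)..t, (t - s) ^ (q - 1) / Real.Gamma q * f s (Y s))| ≤
      C * (1 / Real.Gamma (q + 1)) := by
    refine (key_bound q t (by linarith) ht.1 ht.2 _ _ hu hv C hC hb).trans ?_
    gcongr
    exact Real.rpow_le_one ht.1 ht.2 (by linarith)
  have h₀ : |(∫ s in (0:ℝ)..1, (1 - s) ^ (q - 1) / Real.Gamma q * f s (X s)) -
      (∫ s in (0:ℝ)..1, (1 - s) ^ (q - 1) / Real.Gamma q * f s (Y s))| ≤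
      C * (1 / Real.Gamma (q + 1)) := by
    have := key_bound q 1 (by linarith) zero_le_one le_rfl _ _ hu hv C hC hb
    simpa [Real.one_rpow] using this
  have hβint : ∀ i ∈ Finset.Icc 1 n,
      |(∫ s in (0:ℝ)..η i, (η i - s) ^ q / Real.Gamma (q + 1) * f s (X s)) -
       (∫ s in (0:ℝ)..η i, (η i - s) ^ q / Real.Gamma (q + 1) * f s (Y s))| ≤
      C * (η i ^ (q + 1) / Real.Gamma (q + 2)) := by
    intro i hi
    have := key_bound (q + 1) (η i) (by linarith) (hη i hi).1.le (hη i hi).2 _ _ hu hv C hC hb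
    simpa [add_sub_cancel_right, show q + 1 + 1 = q + 2 by ring] using this
  have hγint : ∀ i ∈ Finset.Icc 1 n,
      |(∫ s in (0:ℝ)..η i, (η i - s) ^ (q - 1) / Real.Gamma q * f s (X s)) -
       (∫ s in (0:ℝ)..η i, (η i - s) ^ (q - 1) / Real.Gamma q * f s (Y s))| ≤
      C * (η i ^ q / Real.Gamma (q + 1)) := fun i hi =>
    key_bound q (η i) (by linarith) (hη i hi).1.le (hη i hi).2 _ _ hu hv C hC hb
  have hσint : |(∫ s in (0:ℝ)..ξ, (ξ - s) ^ (q - σ - 1) / Real.Gamma (q - σ) * f s (X s)) -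
      (∫ s in (0:ℝ)..ξ, (ξ - s) ^ (q - σ - 1) / Real.Gamma (q - σ) * f s (Y s))| ≤
      C * (ξ ^ (q - σ) / Real.Gamma (q - σ + 1)) := by
    have hξ1 : ξ ≤ 1 := by
      have h1 := (hη 1 (by simp [Finset.mem_Icc, hn])).2
      have h2 := hξη
      linarith
    exact key_bound (q - σ) ξ (by linarith) hξ.le hξ1 _ _ hu hv C hC hb
  have hνint : ∀ i ∈ Finset.Icc 1 n,
      |(∫ s in (0:ℝ)..η i, (η i - s) ^ (q - ν - 1) / Real.Gamma (q - ν) * f s (X s)) -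
       (∫ s in (0:ℝ)..η i, (η i - s) ^ (q - ν - 1) / Real.Gamma (q - ν) * f s (Y s))| ≤
      C * (η i ^ (q - ν) / Real.Gamma (q - ν + 1)) := fun i hi =>
    key_bound (q - ν) (η i) (by linarith) (hη i hi).1.le (hη i hi).2 _ _ hu hv C hC hb

  set D1 := Δ₁ σ ν ξ n η α with hD1
  set D2 := Δ₂ n η β γ with hD2
  set D3 := Δ₃ n η β γ with hD3
  have hD2pos : 0 < |D2| := abs_pos.mpr hΔ₂
  have hD12pos : 0 < |D1 * D2| := abs_pos.mpr (mul_ne_zero hΔ₁ hΔ₂)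
  -- sums bounds
  have hSβ : |(∑ i ∈ Finset.Icc 1 n, β i *
        ∫ s in (0:ℝ)..η i, (η i - s) ^ q / Real.Gamma (q + 1) * f s (X s)) -
      ∑ i ∈ Finset.Icc 1 n, β i *
        ∫ s in (0:ℝ)..η i, (η i - s) ^ q / Real.Gamma (q + 1) * f s (Y s)| ≤
      ∑ i ∈ Finset.Icc 1 n, |β i| * (C * (η i ^ (q + 1) / Real.Gamma (q + 2))) := by
    rw [← Finset.sum_sub_distrib]
    refine (Finset.abs_sum_le_sum_abs _ _).trans (Finset.sum_le_sum fun i hi => ?_)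
    rw [← mul_sub, abs_mul]
    exact mul_le_mul_of_nonneg_left (hβint i hi) (abs_nonneg _)
  have hSγ : |(∑ i ∈ Finset.Icc 1 n, γ i *
        ∫ s in (0:ℝ)..η i, (η i - s) ^ (q - 1) / Real.Gamma q * f s (X s)) -
      ∑ i ∈ Finset.Icc 1 n, γ i *
        ∫ s in (0:ℝ)..η i, (η i - s) ^ (q - 1) / Real.Gamma q * f s (Y s)| ≤
      ∑ i ∈ Finset.Icc 1 n, |γ i| * (C * (η i ^ q / Real.Gamma (q + 1))) := by
    rw [← Finset.sum_sub_distrib]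
    refine (Finset.abs_sum_le_sum_abs _ _).trans (Finset.sum_le_sum fun i hi => ?_)
    rw [← mul_sub, abs_mul]
    exact mul_le_mul_of_nonneg_left (hγint i hi) (abs_nonneg _)
  have hSν : |(∑ i ∈ Finset.Icc 1 n, α i *
        ∫ s in (0:ℝ)..η i, (η i - s) ^ (q - ν - 1) / Real.Gamma (q - ν) * f s (X s)) -
      ∑ i ∈ Finset.Icc 1 n, α i *
        ∫ s in (0:ℝ)..η i, (η i - s) ^ (q - ν - 1) / Real.Gamma (q - ν) * f s (Y s)| ≤
      ∑ i ∈ Finset.Icc 1 n, |α i| * (C * (η i ^ (q - ν) / Real.Gamma (q - ν + 1))) := by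
    rw [← Finset.sum_sub_distrib]
    refine (Finset.abs_sum_le_sum_abs _ _).trans (Finset.sum_le_sum fun i hi => ?_)
    rw [← mul_sub, abs_mul]
    exact mul_le_mul_of_nonneg_left (hνint i hi) (abs_nonneg _)
  -- algebraic identities
  have hsum_eq : (∑ i ∈ Finset.Icc 1 n, |β i| * (C * (η i ^ (q + 1) / Real.Gamma (q + 2)))) +
      ∑ i ∈ Finset.Icc 1 n, |γ i| * (C * (η i ^ q / Real.Gamma (q + 1))) =
      C / Real.Gamma (q + 2) *
        ∑ i ∈ Finset.Icc 1 n, η i ^ q * (η i * |β i| + (q + 1) * |γ i|) := by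
    rw [← Finset.sum_add_distrib, Finset.mul_sum]
    refine Finset.sum_congr rfl fun i hi => ?_
    rw [Real.rpow_add_one (hη i hi).1.ne', hΓrec]
    field_simp
  have hone : C * (1 / Real.Gamma (q + 1)) = C * (1 + q) / Real.Gamma (q + 2) := by
    rw [hΓrec]; field_simp; ring
  -- splitting of the difference
  have hsplit : opA q σ ν ξ n η α β γ f X t - opA q σ ν ξ n η α β γ f Y t =
      ((∫ s in (0:ℝ)..t, (t - s) ^ (q - 1) / Real.Gamma q * f s (X s)) -
        ∫ s in (0:ℝ)..t, (t - s) ^ (q - 1) / Real.Gamma q * f s (Y s)) +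
      (1 / D2) *
        (((∫ s in (0:ℝ)..1, (1 - s) ^ (q - 1) / Real.Gamma q * f s (Y s)) -
            ∫ s in (0:ℝ)..1, (1 - s) ^ (q - 1) / Real.Gamma q * f s (X s)) +
         ((∑ i ∈ Finset.Icc 1 n, β i *
              ∫ s in (0:ℝ)..η i, (η i - s) ^ q / Real.Gamma (q + 1) * f s (X s)) -
            ∑ i ∈ Finset.Icc 1 n, β i *
              ∫ s in (0:ℝ)..η i, (η i - s) ^ q / Real.Gamma (q + 1) * f s (Y s)) +
         ((∑ i ∈ Finset.Icc 1 n, γ i *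
              ∫ s in (0:ℝ)..η i, (η i - s) ^ (q - 1) / Real.Gamma q * f s (X s)) -
            ∑ i ∈ Finset.Icc 1 n, γ i *
              ∫ s in (0:ℝ)..η i, (η i - s) ^ (q - 1) / Real.Gamma q * f s (Y s))) +
      Real.Gamma (2 - σ) * Real.Gamma (2 - ν) * (D3 + 2 * D2 * t) / (2 * D1 * D2) *
        (((∫ s in (0:ℝ)..ξ, (ξ - s) ^ (q - σ - 1) / Real.Gamma (q - σ) * f s (Y s)) -
            ∫ s in (0:ℝ)..ξ, (ξ - s) ^ (q - σ - 1) / Real.Gamma (q - σ) * f s (X s)) +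
         ((∑ i ∈ Finset.Icc 1 n, α i *
              ∫ s in (0:ℝ)..η i, (η i - s) ^ (q - ν - 1) / Real.Gamma (q - ν) * f s (X s)) -
            ∑ i ∈ Finset.Icc 1 n, α i *
              ∫ s in (0:ℝ)..η i, (η i - s) ^ (q - ν - 1) / Real.Gamma (q - ν) * f s (Y s))) := by
    simp only [opA, ← hD1, ← hD2, ← hD3]
    ring
  rw [hsplit]
  -- bound the middle block
  have hB : |(1 / D2) *
        (((∫ s in (0:ℝ)..1, (1 - s) ^ (q - 1) / Real.Gamma q * f s (Y s)) -
            ∫ s in (0:ℝ)..1, (1 - s) ^ (q - 1) / Real.Gamma q * f s (X s)) +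
         ((∑ i ∈ Finset.Icc 1 n, β i *
              ∫ s in (0:ℝ)..η i, (η i - s) ^ q / Real.Gamma (q + 1) * f s (X s)) -
            ∑ i ∈ Finset.Icc 1 n, β i *
              ∫ s in (0:ℝ)..η i, (η i - s) ^ q / Real.Gamma (q + 1) * f s (Y s)) +
         ((∑ i ∈ Finset.Icc 1 n, γ i *
              ∫ s in (0:ℝ)..η i, (η i - s) ^ (q - 1) / Real.Gamma q * f s (X s)) -
            ∑ i ∈ Finset.Icc 1 n, γ i *
              ∫ s in (0:ℝ)..η i, (η i - s) ^ (q - 1) / Real.Gamma q * f s (Y s)))| ≤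
      C * (1 / (|D2| * Real.Gamma (q + 2)) *
        (1 + q + ∑ i ∈ Finset.Icc 1 n, η i ^ q * (η i * |β i| + (q + 1) * |γ i|))) := by
    rw [abs_mul, abs_div, abs_one]
    have hinner := (abs_add_le _ _).trans (add_le_add ((abs_add_le _ _).trans
      (add_le_add ((abs_sub_comm _ _).le.trans h₀) hSβ)) hSγ)
    refine le_trans (mul_le_mul_of_nonneg_left hinner (by positivity)) (le_of_eq ?_)
    rw [add_assoc, hsum_eq, hone]
    field_simp
  -- bound the last block
  have hcoefb : |Real.Gamma (2 - σ) * Real.Gamma (2 - ν) * (D3 + 2 * D2 * t) / (2 * D1 * D2)| ≤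
      Real.Gamma (2 - σ) * Real.Gamma (2 - ν) * (|D3| + 2 * |D2|) / (2 * |D1 * D2|) := by
    rw [abs_div, abs_mul, abs_mul, abs_of_pos hΓ2σ, abs_of_pos hΓ2ν,
      show |2 * D1 * D2| = 2 * |D1 * D2| by rw [mul_assoc, abs_mul, abs_two]]
    have hnum : |D3 + 2 * D2 * t| ≤ |D3| + 2 * |D2| := by
      refine (abs_add_le _ _).trans ?_
      have ht' : |t| ≤ 1 := abs_le.mpr ⟨by linarith [ht.1], ht.2⟩
      have : |2 * D2 * t| = 2 * |D2| * |t| := by rw [abs_mul, abs_mul, abs_two]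
      nlinarith [abs_nonneg D2]
    gcongr
  have hinner3 : |((∫ s in (0:ℝ)..ξ, (ξ - s) ^ (q - σ - 1) / Real.Gamma (q - σ) * f s (Y s)) -
        ∫ s in (0:ℝ)..ξ, (ξ - s) ^ (q - σ - 1) / Real.Gamma (q - σ) * f s (X s)) +
      ((∑ i ∈ Finset.Icc 1 n, α i *
          ∫ s in (0:ℝ)..η i, (η i - s) ^ (q - ν - 1) / Real.Gamma (q - ν) * f s (X s)) -
        ∑ i ∈ Finset.Icc 1 n, α i *
          ∫ s in (0:ℝ)..η i, (η i - s) ^ (q - ν - 1) / Real.Gamma (q - ν) * f s (Y s))| ≤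
      C * (ξ ^ (q - σ) / Real.Gamma (q - σ + 1) +
        ∑ i ∈ Finset.Icc 1 n, |α i| * η i ^ (q - ν) / Real.Gamma (q - ν + 1)) := by
    refine (abs_add_le _ _).trans ?_
    have h1 := (abs_sub_comm _ _).le.trans hσint
    have h2 := hSν
    have heq : C * (ξ ^ (q - σ) / Real.Gamma (q - σ + 1) +
        ∑ i ∈ Finset.Icc 1 n, |α i| * η i ^ (q - ν) / Real.Gamma (q - ν + 1)) =
        C * (ξ ^ (q - σ) / Real.Gamma (q - σ + 1)) +
        ∑ i ∈ Finset.Icc 1 n, |α i| * (C * (η i ^ (q - ν) / Real.Gamma (q - ν + 1))) := by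
      rw [mul_add, Finset.mul_sum]
      congr 1
      exact Finset.sum_congr rfl fun i _ => by ring
    rw [heq]
    exact add_le_add h1 h2
  have hCc : |Real.Gamma (2 - σ) * Real.Gamma (2 - ν) * (D3 + 2 * D2 * t) / (2 * D1 * D2) *
        (((∫ s in (0:ℝ)..ξ, (ξ - s) ^ (q - σ - 1) / Real.Gamma (q - σ) * f s (Y s)) -
            ∫ s in (0:ℝ)..ξ, (ξ - s) ^ (q - σ - 1) / Real.Gamma (q - σ) * f s (X s)) +
         ((∑ i ∈ Finset.Icc 1 n, α i *
              ∫ s in (0:ℝ)..η i, (η i - s) ^ (q - ν - 1) / Real.Gamma (q - ν) * f s (X s)) -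
            ∑ i ∈ Finset.Icc 1 n, α i *
              ∫ s in (0:ℝ)..η i, (η i - s) ^ (q - ν - 1) / Real.Gamma (q - ν) * f s (Y s)))| ≤
      C * (Real.Gamma (2 - σ) * Real.Gamma (2 - ν) * (|D3| + 2 * |D2|) / (2 * |D1 * D2|) *
        (ξ ^ (q - σ) / Real.Gamma (q - σ + 1) +
         ∑ i ∈ Finset.Icc 1 n, |α i| * η i ^ (q - ν) / Real.Gamma (q - ν + 1))) := by
    rw [abs_mul]
    have hbar : (0:ℝ) ≤
        Real.Gamma (2 - σ) * Real.Gamma (2 - ν) * (|D3| + 2 * |D2|) / (2 * |D1 * D2|) := by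
      positivity
    refine le_trans (mul_le_mul hcoefb hinner3 (abs_nonneg _) hbar) (le_of_eq (by ring))
  have hfin : C * (1 / Real.Gamma (q + 1)) +
        C * (1 / (|D2| * Real.Gamma (q + 2)) *
          (1 + q + ∑ i ∈ Finset.Icc 1 n, η i ^ q * (η i * |β i| + (q + 1) * |γ i|))) +
        C * (Real.Gamma (2 - σ) * Real.Gamma (2 - ν) * (|D3| + 2 * |D2|) / (2 * |D1 * D2|) *
          (ξ ^ (q - σ) / Real.Gamma (q - σ + 1) +
           ∑ i ∈ Finset.Icc 1 n, |α i| * η i ^ (q - ν) / Real.Gamma (q - ν + 1))) =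
        L * Θ q σ ν ξ n η α β γ * M := by
    simp only [Θ, ← hD1, ← hD2, ← hD3, hCdef]
    ring
  refine le_trans (abs_add_le _ _) ?_
  refine le_trans (add_le_add_left (abs_add_le _ _) _) ?_
  rw [← hfin]
  exact add_le_add (add_le_add h₁ hB) hCc
end

section
/- Assume f satisfies (H₂): |f(t,x) − f(t,y)| ≤ g(t)·Φ^{−1}·ln(1 + |x − y|) for all t ∈ [0,1] and all x, y ∈ ℝ. Then the operator 𝒜 has a unique fixed point in C([0,1],ℝ); that is, there exists a unique continuous function x : [0,1] → ℝ with x(t) = (𝒜x)(t) for all t ∈ [0,1] (equivalently, the fractional boundary value problem (1.1)–(1.2), whose solutions are by definition the fixed points of 𝒜, has a unique solution on [0,1]). -/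
set_option maxHeartbeats 1000000

open MeasureTheory intervalIntegral Set Filter

/- ------------------ auxiliary lemmas ------------------- -/

private lemma aux_integrable {p : ℝ} (hp : -1 < p) {c : ℝ} {h : ℝ → ℝ} (hh : Continuous h) :
    IntervalIntegrable (fun s => (c - s) ^ p * h s) volume 0 c := by
  have h1 : IntervalIntegrable (fun u : ℝ => u ^ p) volume c 0 :=
    intervalIntegral.intervalIntegrable_rpow' hp
  have h2 := h1.comp_sub_left c
  simpa using h2.mul_continuousOn hh.continuousOn

private lemma aux_J_nonneg {p c : ℝ} (hc : 0 ≤ c) {h : ℝ → ℝ} (hpos : ∀ s, 0 ≤ h s) :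
    0 ≤ ∫ s in (0:ℝ)..c, (c - s) ^ p * h s :=
  intervalIntegral.integral_nonneg hc fun s hs =>
    mul_nonneg (Real.rpow_nonneg (by linarith [hs.2]) p) (hpos s)

private lemma rw_div (c p D : ℝ) (h : ℝ → ℝ) :
    (∫ s in (0:ℝ)..c, (c - s) ^ p / D * h s) = 1 / D * ∫ s in (0:ℝ)..c, (c - s) ^ p * h s := by
  rw [← intervalIntegral.integral_const_mul]
  congr 1; ext s; ring

private lemma aux_congr2 {c : ℝ} (hc0 : 0 ≤ c) (hc1 : c ≤ 1) (k F F' : ℝ → ℝ)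
    (hFF' : ∀ s ∈ Icc (0:ℝ) 1, F s = F' s) :
    (∫ s in (0:ℝ)..c, k s * F s) = ∫ s in (0:ℝ)..c, k s * F' s := by
  apply intervalIntegral.integral_congr
  intro s hs
  rw [uIcc_of_le hc0] at hs
  simp only []
  rw [hFF' s ⟨hs.1, hs.2.trans hc1⟩]

private lemma aux_key {p c : ℝ} (hp : -1 < p) (hc0 : 0 ≤ c) {F G h : ℝ → ℝ}
    (hF : Continuous F) (hG : Continuous G) (hh : Continuous h) {K : ℝ}
    (hbd : ∀ s ∈ Icc (0:ℝ) c, |F s - G s| ≤ K * h s) :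
    |(∫ s in (0:ℝ)..c, (c - s) ^ p * F s) - ∫ s in (0:ℝ)..c, (c - s) ^ p * G s| ≤
      K * ∫ s in (0:ℝ)..c, (c - s) ^ p * h s := by
  have iF := aux_integrable hp (c := c) hF
  have iG := aux_integrable hp (c := c) hG
  have ih := aux_integrable hp (c := c) hh
  rw [← intervalIntegral.integral_sub iF iG, ← intervalIntegral.integral_const_mul]
  refine le_trans (intervalIntegral.abs_integral_le_integral_abs hc0) ?_
  apply intervalIntegral.integral_mono_on hc0 (iF.sub iG).abs
  · have h2 : (fun s => K * ((c - s) ^ p * h s)) = fun s => (c - s) ^ p * (K * h s) := by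
      ext s; ring
    have := aux_integrable hp (c := c) (h := fun s => K * h s) (continuous_const.mul hh)
    simpa [← h2] using this
  · intro s hs
    have hcs : (0:ℝ) ≤ c - s := by linarith [hs.2]
    have h1 : |(c - s) ^ p * F s - (c - s) ^ p * G s| = (c - s) ^ p * |F s - G s| := by
      rw [← mul_sub, abs_mul, abs_of_nonneg (Real.rpow_nonneg hcs p)]
    rw [h1]
    calc (c - s) ^ p * |F s - G s| ≤ (c - s) ^ p * (K * h s) :=
          mul_le_mul_of_nonneg_left (hbd s hs) (Real.rpow_nonneg hcs p)
      _ = K * ((c - s) ^ p * h s) := by ring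

private lemma aux_mono {p t : ℝ} (hp : 0 ≤ p) (hp1 : -1 < p) (ht0 : 0 ≤ t) (ht1 : t ≤ 1)
    {h : ℝ → ℝ} (hh : Continuous h) (hpos : ∀ s, 0 ≤ h s) :
    (∫ s in (0:ℝ)..t, (t - s) ^ p * h s) ≤ ∫ s in (0:ℝ)..1, (1 - s) ^ p * h s := by
  have i1 : IntervalIntegrable (fun s => (1 - s) ^ p * h s) volume 0 1 :=
    aux_integrable hp1 hh
  have i1t : IntervalIntegrable (fun s => (1 - s) ^ p * h s) volume 0 t :=
    i1.mono_set (by rw [uIcc_of_le ht0, uIcc_of_le zero_le_one]; exact Icc_subset_Icc le_rfl ht1)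
  have i1t' : IntervalIntegrable (fun s => (1 - s) ^ p * h s) volume t 1 :=
    i1.mono_set (by rw [uIcc_of_le ht1, uIcc_of_le zero_le_one]; exact Icc_subset_Icc ht0 le_rfl)
  calc (∫ s in (0:ℝ)..t, (t - s) ^ p * h s) ≤ ∫ s in (0:ℝ)..t, (1 - s) ^ p * h s := by
        apply intervalIntegral.integral_mono_on ht0 (aux_integrable hp1 hh) i1t
        intro s hs
        exact mul_le_mul_of_nonneg_right
          (Real.rpow_le_rpow (by linarith [hs.2]) (by linarith) hp) (hpos s)
    _ ≤ ∫ s in (0:ℝ)..1, (1 - s) ^ p * h s := by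
        rw [← intervalIntegral.integral_add_adjacent_intervals i1t i1t']
        refine le_add_of_nonneg_right (intervalIntegral.integral_nonneg ht1 ?_)
        intro s hs
        exact mul_nonneg (Real.rpow_nonneg (by linarith [hs.2]) p) (hpos s)

private lemma aux_split {q : ℝ} (hq : 1 < q) {c : ℝ} (hc : 0 ≤ c) (B C : ℝ) {h : ℝ → ℝ}
    (hh : Continuous h) :
    (∫ s in (0:ℝ)..c, (c - s) ^ (q - 1) / Real.Gamma (q + 1) * (q * C + B * (c - s)) * h s)
      = q * C / Real.Gamma (q + 1) * (∫ s in (0:ℝ)..c, (c - s) ^ (q - 1) * h s) +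
        B / Real.Gamma (q + 1) * ∫ s in (0:ℝ)..c, (c - s) ^ q * h s := by
  rw [← intervalIntegral.integral_const_mul, ← intervalIntegral.integral_const_mul,
    ← intervalIntegral.integral_add
      ((aux_integrable (by linarith) hh).const_mul _)
      ((aux_integrable (by linarith) hh).const_mul _)]
  apply intervalIntegral.integral_congr
  intro s hs
  rw [uIcc_of_le hc] at hs
  simp only []
  rcases eq_or_lt_of_le hs.2 with h1 | h1
  · rw [← h1]
    simp [Real.zero_rpow (by linarith : q - 1 ≠ 0), Real.zero_rpow (by linarith : q ≠ 0)]
  · have hne : c - s ≠ 0 := by linarith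
    have : (c - s) ^ q = (c - s) ^ (q - 1) * (c - s) := by
      rw [← Real.rpow_add_one hne]; ring_nf
    rw [this]; ring

private lemma log_lt_self' {d : ℝ} (hd : 0 < d) : Real.log (1 + d) < d := by
  have := Real.log_lt_sub_one_of_pos (by linarith : (0:ℝ) < 1 + d) (by linarith)
  linarith

private lemma log_le_self' {d : ℝ} (hd : 0 ≤ d) : Real.log (1 + d) ≤ d := by
  rcases eq_or_lt_of_le hd with h | h
  · simp [← h]
  · exact (log_lt_self' h).le

private lemma log_fixedPoint {X : Type*} [MetricSpace X] [CompleteSpace X] [Nonempty X]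
    (T : X → X) (hT : ∀ a b, dist (T a) (T b) ≤ Real.log (1 + dist a b)) :
    ∃! z, T z = z := by
  have hlip : ∀ a b, dist (T a) (T b) ≤ dist a b := fun a b =>
    (hT a b).trans (log_le_self' dist_nonneg)
  have hcont : Continuous T := by
    apply LipschitzWith.continuous (K := 1)
    intro a b
    simpa [edist_dist] using (ENNReal.ofReal_le_ofReal (hlip a b))
  obtain ⟨x₀⟩ := ‹Nonempty X›
  set u : ℕ → X := fun k => T^[k] x₀ with hu
  have hu_succ : ∀ k, u (k + 1) = T (u k) := fun k => Function.iterate_succ_apply' T k x₀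
  set d : ℕ → ℝ := fun k => dist (u k) (u (k + 1)) with hd
  have hd_nonneg : ∀ k, 0 ≤ d k := fun k => dist_nonneg
  have hd_step : ∀ k, d (k + 1) ≤ Real.log (1 + d k) := by
    intro k
    rw [hd]; simp only [hu_succ (k+1), hu_succ k]
    exact hT _ _
  have hd_anti : Antitone d := by
    apply antitone_nat_of_succ_le
    intro k
    exact (hd_step k).trans (log_le_self' (hd_nonneg k))
  have hd_lim : Tendsto d atTop (nhds 0) := by
    have hbdd : BddBelow (Set.range d) := ⟨0, by rintro _ ⟨k, rfl⟩; exact hd_nonneg k⟩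
    have hlim := tendsto_atTop_ciInf hd_anti hbdd
    set L := ⨅ k, d k with hL
    have hL0 : 0 ≤ L := le_ciInf hd_nonneg
    have hLle : L ≤ Real.log (1 + L) := by
      have h1 : Tendsto (fun k => d (k + 1)) atTop (nhds L) :=
        hlim.comp (tendsto_add_atTop_nat 1)
      have h2 : Tendsto (fun k => Real.log (1 + d k)) atTop (nhds (Real.log (1 + L))) := by
        apply Tendsto.comp (Real.continuousAt_log (by linarith)).tendsto
        exact tendsto_const_nhds.add hlim
      exact le_of_tendsto_of_tendsto h1 h2 (Filter.Eventually.of_forall hd_step)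
    have hL_eq : L = 0 := by
      by_contra h
      have : 0 < L := lt_of_le_of_ne hL0 (Ne.symm h)
      linarith [log_lt_self' this]
    rwa [hL_eq] at hlim
  have hcauchy : CauchySeq u := by
    rw [Metric.cauchySeq_iff']
    intro ε hε
    have hδ : 0 < ε / 2 - Real.log (1 + ε / 2) := by
      have := log_lt_self' (by linarith : (0:ℝ) < ε / 2); linarith
    obtain ⟨N, hN⟩ := (Metric.tendsto_atTop.mp hd_lim) _ hδ
    have key : ∀ k, dist (u (N + k)) (u N) ≤ ε / 2 := by
      intro k
      induction k with
      | zero => simp; positivity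
      | succ k ih =>
        have h1 : dist (u (N + k + 1)) (u (N + 1)) ≤ Real.log (1 + dist (u (N + k)) (u N)) := by
          rw [hu_succ (N + k), hu_succ N]; exact hT _ _
        have h2 : Real.log (1 + dist (u (N + k)) (u N)) ≤ Real.log (1 + ε / 2) :=
          Real.log_le_log (by positivity) (by linarith)
        have h3 : dist (u (N + 1)) (u N) < ε / 2 - Real.log (1 + ε / 2) := by
          have := hN N le_rfl
          rw [Real.dist_eq, sub_zero, abs_of_nonneg (hd_nonneg N)] at this
          rw [dist_comm]; exact this
        calc dist (u (N + (k + 1))) (u N)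
            ≤ dist (u (N + k + 1)) (u (N + 1)) + dist (u (N + 1)) (u N) := by
              rw [show N + (k + 1) = N + k + 1 by ring]; exact dist_triangle _ _ _
          _ ≤ Real.log (1 + ε / 2) + (ε / 2 - Real.log (1 + ε / 2)) := by
              have := h1.trans h2; linarith
          _ = ε / 2 := by ring
    refine ⟨N, fun m hm => ?_⟩
    have : dist (u m) (u N) ≤ ε / 2 := by
      obtain ⟨k, rfl⟩ := Nat.exists_eq_add_of_le hm
      exact key k
    linarith
  obtain ⟨z, hz⟩ := cauchySeq_tendsto_of_complete hcauchy
  have hTz : T z = z := by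
    have h1 : Tendsto (fun k => u (k + 1)) atTop (nhds (T z)) := by
      simp only [hu_succ]
      exact (hcont.tendsto z).comp hz
    have h2 : Tendsto (fun k => u (k + 1)) atTop (nhds z) :=
      hz.comp (tendsto_add_atTop_nat 1)
    exact tendsto_nhds_unique h1 h2
  refine ⟨z, hTz, ?_⟩
  intro w hw
  by_contra hne
  have hpos : 0 < dist w z := dist_pos.mpr hne
  have := hT w z
  rw [hw, hTz] at this
  linarith [log_lt_self' hpos]

private noncomputable def clamp (s : ℝ) : ℝ := max 0 (min 1 s)

private lemma clamp_mem (s : ℝ) : clamp s ∈ Icc (0:ℝ) 1 :=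
  ⟨le_max_left _ _, max_le zero_le_one (min_le_left _ _)⟩

private lemma clamp_eq {s : ℝ} (hs : s ∈ Icc (0:ℝ) 1) : clamp s = s := by
  unfold clamp
  rw [min_eq_right hs.2, max_eq_right hs.1]

private lemma clamp_cont : Continuous clamp :=
  continuous_const.max (continuous_const.min continuous_id)

private lemma aux_Fc_cont {f : ℝ → ℝ → ℝ}
    (hf : ContinuousOn (Function.uncurry f) (Set.Icc 0 1 ×ˢ Set.univ))
    {X : ℝ → ℝ} (hX : Continuous X) :
    Continuous fun s => f (clamp s) (X s) := by
  have h1 : (fun s => f (clamp s) (X s)) = Function.uncurry f ∘ fun s => (clamp s, X s) := rfl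
  rw [h1]
  exact hf.comp_continuous (clamp_cont.prodMk hX) fun s => ⟨clamp_mem s, trivial⟩

private lemma aux_param_cont2 (p D : ℝ) (hp : 0 ≤ p) (Fc : ℝ → ℝ) (hFc : Continuous Fc) :
    Continuous fun pp : ℝ × ℝ => ∫ s in (0:ℝ)..pp.2, (pp.1 - s) ^ p / D * Fc s := by
  apply continuous_parametric_primitive_of_continuous (f := fun u s => (u - s) ^ p / D * Fc s)
  apply Continuous.mul
  · exact ((Real.continuous_rpow_const hp).comp (continuous_fst.sub continuous_snd)).div_const D
  · exact hFc.comp continuous_snd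

private lemma aux_param_cont {p : ℝ} (hp : 0 ≤ p) (D : ℝ) {Fc : ℝ → ℝ} (hFc : Continuous Fc) :
    Continuous fun t : ℝ => ∫ s in (0:ℝ)..t, (t - s) ^ p / D * Fc s := by
  have h2 := aux_param_cont2 p D hp Fc hFc
  have h3 : (fun t : ℝ => ∫ s in (0:ℝ)..t, (t - s) ^ p / D * Fc s)
      = (fun pp : ℝ × ℝ => ∫ s in (0:ℝ)..pp.2, (pp.1 - s) ^ p / D * Fc s) ∘ fun t => (t, t) := by
    funext t; rfl
  rw [h3]
  exact h2.comp (continuous_id.prodMk continuous_id)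

noncomputable def Φ (q σ ν ξ : ℝ) (n : ℕ) (η α β γ : ℕ → ℝ) (g : ℝ → ℝ) : ℝ :=
  (1 + 1 / |Δ₂ n η β γ|) * (∫ s in (0:ℝ)..1, (1 - s) ^ (q - 1) / Real.Gamma q * g s) +
  (1 / |Δ₂ n η β γ|) * (∑ i ∈ Finset.Icc 1 n,
    ∫ s in (0:ℝ)..η i, (η i - s) ^ (q - 1) / Real.Gamma (q + 1) *
      (q * |γ i| + |β i| * (η i - s)) * g s) +
  Real.Gamma (2 - σ) * Real.Gamma (2 - ν) * (|Δ₃ n η β γ| + 2 * |Δ₂ n η β γ|) /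
      (2 * |Δ₁ σ ν ξ n η α * Δ₂ n η β γ|) *
    ((∫ s in (0:ℝ)..ξ, (ξ - s) ^ (q - σ - 1) / Real.Gamma (q - σ) * g s) +
     ∑ i ∈ Finset.Icc 1 n, |α i| *
        ∫ s in (0:ℝ)..η i, (η i - s) ^ (q - ν - 1) / Real.Gamma (q - ν) * g s)

theorem thm32 (q σ ν ξ : ℝ) (n : ℕ) (η α β γ : ℕ → ℝ)
    (hq1 : 1 < q) (hq2 : q ≤ 2) (hσ0 : 0 < σ) (hσ1 : σ ≤ 1) (hν0 : 0 < ν) (hν1 : ν ≤ 1)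
    (hn : 1 ≤ n) (hξ : 0 < ξ) (hξη : ξ < η 1)
    (hηmono : ∀ i, 1 ≤ i → i < n → η i < η (i + 1)) (hηn : η n < 1)
    (hΔ₁ : Δ₁ σ ν ξ n η α ≠ 0) (hΔ₂ : Δ₂ n η β γ ≠ 0)
    (f : ℝ → ℝ → ℝ)
    (hf : ContinuousOn (Function.uncurry f) (Set.Icc 0 1 ×ˢ Set.univ))
    (g : ℝ → ℝ) (hg : ContinuousOn g (Set.Icc 0 1))
    (hgpos : ∀ t ∈ Set.Icc (0:ℝ) 1, 0 ≤ g t)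
    (hΦ : 0 < Φ q σ ν ξ n η α β γ g)
    (hH2 : ∀ t ∈ Set.Icc (0:ℝ) 1, ∀ x y : ℝ,
      |f t x - f t y| ≤ g t * (Φ q σ ν ξ n η α β γ g)⁻¹ * Real.log (1 + |x - y|)) :
    ∃! x : C(Set.Icc (0:ℝ) 1, ℝ), ∀ t : Set.Icc (0:ℝ) 1,
      x t = opA q σ ν ξ n η α β γ f (Set.IccExtend zero_le_one ⇑x) ↑t := by
  classical
  have hq0 : 0 < q := by linarith
  have hΓq : 0 < Real.Gamma q := Real.Gamma_pos_of_pos hq0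
  have hΓq1 : 0 < Real.Gamma (q + 1) := Real.Gamma_pos_of_pos (by linarith)
  have hΓqσ : 0 < Real.Gamma (q - σ) := Real.Gamma_pos_of_pos (by linarith)
  have hΓqν : 0 < Real.Gamma (q - ν) := Real.Gamma_pos_of_pos (by linarith)
  have hΓ2σ : 0 < Real.Gamma (2 - σ) := Real.Gamma_pos_of_pos (by linarith)
  have hΓ2ν : 0 < Real.Gamma (2 - ν) := Real.Gamma_pos_of_pos (by linarith)
  -- position of the η i
  have hstep : ∀ k i, 1 ≤ i → i + k ≤ n → η i ≤ η (i + k) := by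
    intro k
    induction k with
    | zero => intro i _ _; simp
    | succ k ih =>
      intro i h1 h2
      have h4 := ih i h1 (by omega)
      have h5 := hηmono (i + k) (by omega) (by omega)
      calc η i ≤ η (i + k) := h4
        _ ≤ η (i + k + 1) := h5.le
  have hηmem : ∀ i ∈ Finset.Icc 1 n, ξ < η i ∧ η i ≤ 1 := by
    intro i hi
    rw [Finset.mem_Icc] at hi
    constructor
    · have := hstep (i - 1) 1 le_rfl (by omega)
      rw [show 1 + (i - 1) = i by omega] at this
      linarith
    · have := hstep (n - i) i hi.1 (by omega)
      rw [show i + (n - i) = n by omega] at this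
      linarith
  have hη0 : ∀ i ∈ Finset.Icc 1 n, 0 ≤ η i := fun i hi =>
    le_of_lt (lt_trans hξ (hηmem i hi).1)
  have hη1 : ∀ i ∈ Finset.Icc 1 n, η i ≤ 1 := fun i hi => (hηmem i hi).2
  have hξ1 : ξ ≤ 1 :=
    le_of_lt (lt_of_lt_of_le hξη (hηmem 1 (Finset.mem_Icc.mpr ⟨le_rfl, hn⟩)).2)
  -- clamped version of g
  set gc : ℝ → ℝ := fun s => g (clamp s) with hgcdef
  have hgc_cont : Continuous gc := hg.comp_continuous clamp_cont clamp_mem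
  have hgc_nonneg : ∀ s, 0 ≤ gc s := fun s => hgpos _ (clamp_mem s)
  have hgc_eq : ∀ s ∈ Icc (0:ℝ) 1, gc s = g s := fun s hs => by
    rw [hgcdef]; simp only []; rw [clamp_eq hs]
  -- generic rewriting of the operator
  have hconv : ∀ (Z F : ℝ → ℝ), (∀ s, F s = f (clamp s) (Z s)) → ∀ (c p D : ℝ),
      0 ≤ c → c ≤ 1 →
      (∫ s in (0:ℝ)..c, (c - s) ^ p / D * f s (Z s)) =
        1 / D * ∫ s in (0:ℝ)..c, (c - s) ^ p * F s := by
    intro Z F hFeq c p D hc0 hc1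
    rw [rw_div]
    congr 1
    apply aux_congr2 hc0 hc1 (fun s => (c - s) ^ p) (fun s => f s (Z s)) F
    intro s hs
    rw [hFeq s, clamp_eq hs]
  have hopA : ∀ (Z F : ℝ → ℝ), (∀ s, F s = f (clamp s) (Z s)) → ∀ t' : ℝ, t' ∈ Icc (0:ℝ) 1 →
      opA q σ ν ξ n η α β γ f Z t' =
      1 / Real.Gamma q * (∫ s in (0:ℝ)..t', (t' - s) ^ (q - 1) * F s) +
      1 / Δ₂ n η β γ *
        (-(1 / Real.Gamma q * ∫ s in (0:ℝ)..1, (1 - s) ^ (q - 1) * F s) +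
         (∑ i ∈ Finset.Icc 1 n, β i *
            (1 / Real.Gamma (q + 1) * ∫ s in (0:ℝ)..η i, (η i - s) ^ q * F s)) +
         ∑ i ∈ Finset.Icc 1 n, γ i *
            (1 / Real.Gamma q * ∫ s in (0:ℝ)..η i, (η i - s) ^ (q - 1) * F s)) +
      Real.Gamma (2 - σ) * Real.Gamma (2 - ν) * (Δ₃ n η β γ + 2 * Δ₂ n η β γ * t') /
          (2 * Δ₁ σ ν ξ n η α * Δ₂ n η β γ) *
        (-(1 / Real.Gamma (q - σ) * ∫ s in (0:ℝ)..ξ, (ξ - s) ^ (q - σ - 1) * F s) +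
         ∑ i ∈ Finset.Icc 1 n, α i *
            (1 / Real.Gamma (q - ν) * ∫ s in (0:ℝ)..η i, (η i - s) ^ (q - ν - 1) * F s)) := by
    intro Z F hFeq t' ht'
    have e1 : (∑ i ∈ Finset.Icc 1 n, β i *
          ∫ s in (0:ℝ)..η i, (η i - s) ^ q / Real.Gamma (q + 1) * f s (Z s)) =
        ∑ i ∈ Finset.Icc 1 n, β i *
          (1 / Real.Gamma (q + 1) * ∫ s in (0:ℝ)..η i, (η i - s) ^ q * F s) :=
      Finset.sum_congr rfl fun i hi => by
        rw [hconv Z F hFeq (η i) q (Real.Gamma (q + 1)) (hη0 i hi) (hη1 i hi)]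
    have e2 : (∑ i ∈ Finset.Icc 1 n, γ i *
          ∫ s in (0:ℝ)..η i, (η i - s) ^ (q - 1) / Real.Gamma q * f s (Z s)) =
        ∑ i ∈ Finset.Icc 1 n, γ i *
          (1 / Real.Gamma q * ∫ s in (0:ℝ)..η i, (η i - s) ^ (q - 1) * F s) :=
      Finset.sum_congr rfl fun i hi => by
        rw [hconv Z F hFeq (η i) (q - 1) (Real.Gamma q) (hη0 i hi) (hη1 i hi)]
    have e3 : (∑ i ∈ Finset.Icc 1 n, α i *
          ∫ s in (0:ℝ)..η i, (η i - s) ^ (q - ν - 1) / Real.Gamma (q - ν) * f s (Z s)) =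
        ∑ i ∈ Finset.Icc 1 n, α i *
          (1 / Real.Gamma (q - ν) * ∫ s in (0:ℝ)..η i, (η i - s) ^ (q - ν - 1) * F s) :=
      Finset.sum_congr rfl fun i hi => by
        rw [hconv Z F hFeq (η i) (q - ν - 1) (Real.Gamma (q - ν)) (hη0 i hi) (hη1 i hi)]
    unfold opA
    rw [hconv Z F hFeq t' (q - 1) (Real.Gamma q) ht'.1 ht'.2,
      hconv Z F hFeq 1 (q - 1) (Real.Gamma q) zero_le_one le_rfl,
      hconv Z F hFeq ξ (q - σ - 1) (Real.Gamma (q - σ)) hξ.le hξ1,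
      e1, e2, e3]
  -- continuity of the operator
  have hcontT : ∀ x : C(Icc (0:ℝ) 1, ℝ), Continuous ((Icc (0:ℝ) 1).restrict
      (opA q σ ν ξ n η α β γ f (IccExtend zero_le_one ⇑x))) := by
    intro x
    apply ContinuousOn.restrict
    have hXc : Continuous (IccExtend zero_le_one ⇑x) := x.continuous.Icc_extend'
    have hFc : Continuous fun s => f (clamp s) (IccExtend zero_le_one (⇑x) s) :=
      aux_Fc_cont hf hXc
    unfold opA
    apply ContinuousOn.add
    apply ContinuousOn.add
    · apply ContinuousOn.congr
        ((aux_param_cont (p := q - 1) (by linarith) (Real.Gamma q) hFc).continuousOn)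
      intro t ht
      apply aux_congr2 ht.1 ht.2 (fun s => ((t:ℝ) - s) ^ (q - 1) / Real.Gamma q)
        (fun s => f s (IccExtend zero_le_one (⇑x) s))
        (fun s => f (clamp s) (IccExtend zero_le_one (⇑x) s))
      intro s hs
      rw [clamp_eq hs]
    · exact continuousOn_const
    · apply Continuous.continuousOn
      exact ((continuous_const.mul
        (continuous_const.add (continuous_const.mul continuous_id))).div_const _).mul
        continuous_const
  set T : C(Icc (0:ℝ) 1, ℝ) → C(Icc (0:ℝ) 1, ℝ) := fun x =>
    ContinuousMap.mk _ (hcontT x) with hTdef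
  have hTapp : ∀ (x : C(Icc (0:ℝ) 1, ℝ)) (t : Icc (0:ℝ) 1),
      T x t = opA q σ ν ξ n η α β γ f (IccExtend zero_le_one ⇑x) ↑t := by
    intro x t; rw [hTdef]; rfl
  have hfix : ∀ x : C(Icc (0:ℝ) 1, ℝ), (T x = x ↔ ∀ t : Icc (0:ℝ) 1,
      x t = opA q σ ν ξ n η α β γ f (IccExtend zero_le_one ⇑x) ↑t) := by
    intro x
    rw [ContinuousMap.ext_iff]
    constructor
    · intro h t; rw [← hTapp x t]; exact (h t).symm
    · intro h t; rw [hTapp x t]; exact (h t).symm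
  -- the contraction-type estimate
  have hest : ∀ x y : C(Icc (0:ℝ) 1, ℝ), dist (T x) (T y) ≤ Real.log (1 + dist x y) := by
    intro x y
    set D := dist x y with hDD
    have hD0 : 0 ≤ D := dist_nonneg
    set L := Real.log (1 + D) with hLL
    have hL0 : 0 ≤ L := Real.log_nonneg (by linarith)
    set K := (Φ q σ ν ξ n η α β γ g)⁻¹ * L with hKK
    have hK0 : 0 ≤ K := mul_nonneg (inv_nonneg.mpr hΦ.le) hL0
    rw [ContinuousMap.dist_le hL0]
    intro t
    rw [hTapp x t, hTapp y t, Real.dist_eq]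
    set X := IccExtend zero_le_one ⇑x with hXX
    set Y := IccExtend zero_le_one ⇑y with hYY
    have hXc : Continuous X := x.continuous.Icc_extend'
    have hYc : Continuous Y := y.continuous.Icc_extend'
    set FX : ℝ → ℝ := fun s => f (clamp s) (X s) with hFXdef
    set FY : ℝ → ℝ := fun s => f (clamp s) (Y s) with hFYdef
    have hFXc : Continuous FX := aux_Fc_cont hf hXc
    have hFYc : Continuous FY := aux_Fc_cont hf hYc
    have hXY : ∀ s, |X s - Y s| ≤ D := by
      intro s
      rw [hXX, hYY, hDD, ← Real.dist_eq]
      exact ContinuousMap.dist_apply_le_dist _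
    have hbd : ∀ c : ℝ, c ≤ 1 → ∀ s ∈ Icc (0:ℝ) c, |FX s - FY s| ≤ K * gc s := by
      intro c hc1 s hs
      have hs1 : s ∈ Icc (0:ℝ) 1 := ⟨hs.1, hs.2.trans hc1⟩
      rw [hFXdef, hFYdef]
      simp only []
      rw [clamp_eq hs1]
      calc |f s (X s) - f s (Y s)|
          ≤ g s * (Φ q σ ν ξ n η α β γ g)⁻¹ * Real.log (1 + |X s - Y s|) :=
            hH2 s hs1 (X s) (Y s)
        _ ≤ g s * (Φ q σ ν ξ n η α β γ g)⁻¹ * L := by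
            apply mul_le_mul_of_nonneg_left _
              (mul_nonneg (hgpos s hs1) (inv_nonneg.mpr hΦ.le))
            rw [hLL]
            exact Real.log_le_log (by positivity) (by linarith [hXY s])
        _ = K * gc s := by rw [hKK, hgc_eq s hs1]; ring
    have key : ∀ (c p : ℝ), -1 < p → 0 ≤ c → c ≤ 1 →
        |(∫ s in (0:ℝ)..c, (c - s) ^ p * FX s) - ∫ s in (0:ℝ)..c, (c - s) ^ p * FY s| ≤
          K * ∫ s in (0:ℝ)..c, (c - s) ^ p * gc s :=
      fun c p hp hc0 hc1 => aux_key hp hc0 hFXc hFYc hgc_cont (hbd c hc1)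
    rw [hopA X FX (fun s => by rw [hFXdef]) ↑t t.2,
        hopA Y FY (fun s => by rw [hFYdef]) ↑t t.2]
    -- named bounds
    have hCb0 : (0:ℝ) ≤ Real.Gamma (2 - σ) * Real.Gamma (2 - ν) * (|Δ₃ n η β γ| + 2 * |Δ₂ n η β γ|) / (2 * |Δ₁ σ ν ξ n η α * Δ₂ n η β γ|) := by
      apply div_nonneg
      · apply mul_nonneg (mul_nonneg hΓ2σ.le hΓ2ν.le)
        positivity
      · positivity
    have h1 : |1 / Real.Gamma q * (∫ s in (0:ℝ)..1, (1 - s) ^ (q - 1) * FX s) - 1 / Real.Gamma q * (∫ s in (0:ℝ)..1, (1 - s) ^ (q - 1) * FY s)| ≤ K * (1 / Real.Gamma q * (∫ s in (0:ℝ)..1, (1 - s) ^ (q - 1) * gc s)) := by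
      rw [← mul_sub, abs_mul, abs_of_nonneg (one_div_nonneg.mpr hΓq.le)]
      calc 1 / Real.Gamma q * |(∫ s in (0:ℝ)..1, (1 - s) ^ (q - 1) * FX s) - (∫ s in (0:ℝ)..1, (1 - s) ^ (q - 1) * FY s)|
          ≤ 1 / Real.Gamma q * (K * (∫ s in (0:ℝ)..1, (1 - s) ^ (q - 1) * gc s)) :=
            mul_le_mul_of_nonneg_left (key 1 (q - 1) (by linarith) zero_le_one le_rfl)
              (one_div_nonneg.mpr hΓq.le)
        _ = K * (1 / Real.Gamma q * (∫ s in (0:ℝ)..1, (1 - s) ^ (q - 1) * gc s)) := by ring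
    have hD1 : |(1 / Real.Gamma q * (∫ s in (0:ℝ)..(↑t : ℝ), ((↑t : ℝ) - s) ^ (q - 1) * FX s) - 1 / Real.Gamma q * (∫ s in (0:ℝ)..(↑t : ℝ), ((↑t : ℝ) - s) ^ (q - 1) * FY s))| ≤ K * (1 / Real.Gamma q * (∫ s in (0:ℝ)..1, (1 - s) ^ (q - 1) * gc s)) := by
      rw [← mul_sub, abs_mul, abs_of_nonneg (one_div_nonneg.mpr hΓq.le)]
      calc 1 / Real.Gamma q * |(∫ s in (0:ℝ)..(↑t : ℝ), ((↑t : ℝ) - s) ^ (q - 1) * FX s) - (∫ s in (0:ℝ)..(↑t : ℝ), ((↑t : ℝ) - s) ^ (q - 1) * FY s)|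
          ≤ 1 / Real.Gamma q * (K * (∫ s in (0:ℝ)..(↑t : ℝ), ((↑t : ℝ) - s) ^ (q - 1) * gc s)) :=
            mul_le_mul_of_nonneg_left (key (↑t : ℝ) (q - 1) (by linarith) t.2.1 t.2.2)
              (one_div_nonneg.mpr hΓq.le)
        _ ≤ 1 / Real.Gamma q * (K * (∫ s in (0:ℝ)..1, (1 - s) ^ (q - 1) * gc s)) := by
            apply mul_le_mul_of_nonneg_left _ (one_div_nonneg.mpr hΓq.le)
            exact mul_le_mul_of_nonneg_left
              (aux_mono (by linarith) (by linarith) t.2.1 t.2.2 hgc_cont hgc_nonneg) hK0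
        _ = K * (1 / Real.Gamma q * (∫ s in (0:ℝ)..1, (1 - s) ^ (q - 1) * gc s)) := by ring
    have hβ : |(∑ i ∈ Finset.Icc 1 n, β i * (1 / Real.Gamma (q + 1) * ∫ s in (0:ℝ)..η i, (η i - s) ^ q * FX s)) - (∑ i ∈ Finset.Icc 1 n, β i * (1 / Real.Gamma (q + 1) * ∫ s in (0:ℝ)..η i, (η i - s) ^ q * FY s))| ≤ K * (1 / Real.Gamma (q + 1) * (∑ i ∈ Finset.Icc 1 n, |β i| * ∫ s in (0:ℝ)..η i, (η i - s) ^ q * gc s)) := by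
      rw [← Finset.sum_sub_distrib]
      refine (Finset.abs_sum_le_sum_abs _ _).trans ?_
      rw [show K * (1 / Real.Gamma (q + 1) * (∑ i ∈ Finset.Icc 1 n, |β i| * ∫ s in (0:ℝ)..η i, (η i - s) ^ q * gc s)) = ∑ i ∈ Finset.Icc 1 n,
          K * (1 / Real.Gamma (q + 1)) * (|β i| * ∫ s in (0:ℝ)..η i, (η i - s) ^ q * gc s) from by
        rw [← mul_assoc, Finset.mul_sum]]
      apply Finset.sum_le_sum
      intro i hi
      rw [show β i * (1 / Real.Gamma (q + 1) * ∫ s in (0:ℝ)..η i, (η i - s) ^ q * FX s) -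
            β i * (1 / Real.Gamma (q + 1) * ∫ s in (0:ℝ)..η i, (η i - s) ^ q * FY s) =
          β i * (1 / Real.Gamma (q + 1)) * ((∫ s in (0:ℝ)..η i, (η i - s) ^ q * FX s) -
            ∫ s in (0:ℝ)..η i, (η i - s) ^ q * FY s) from by ring,
        abs_mul, abs_mul, abs_of_nonneg (one_div_nonneg.mpr hΓq1.le)]
      calc |β i| * (1 / Real.Gamma (q + 1)) * |(∫ s in (0:ℝ)..η i, (η i - s) ^ q * FX s) -
            ∫ s in (0:ℝ)..η i, (η i - s) ^ q * FY s|
          ≤ |β i| * (1 / Real.Gamma (q + 1)) * (K * ∫ s in (0:ℝ)..η i, (η i - s) ^ q * gc s) :=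
            mul_le_mul_of_nonneg_left (key (η i) q (by linarith) (hη0 i hi) (hη1 i hi))
              (mul_nonneg (abs_nonneg _) (one_div_nonneg.mpr hΓq1.le))
        _ = K * (1 / Real.Gamma (q + 1)) * (|β i| * ∫ s in (0:ℝ)..η i, (η i - s) ^ q * gc s) := by ring
    have hγ : |(∑ i ∈ Finset.Icc 1 n, γ i * (1 / Real.Gamma q * ∫ s in (0:ℝ)..η i, (η i - s) ^ (q - 1) * FX s)) - (∑ i ∈ Finset.Icc 1 n, γ i * (1 / Real.Gamma q * ∫ s in (0:ℝ)..η i, (η i - s) ^ (q - 1) * FY s))| ≤ K * (1 / Real.Gamma q * (∑ i ∈ Finset.Icc 1 n, |γ i| * ∫ s in (0:ℝ)..η i, (η i - s) ^ (q - 1) * gc s)) := by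
      rw [← Finset.sum_sub_distrib]
      refine (Finset.abs_sum_le_sum_abs _ _).trans ?_
      rw [show K * (1 / Real.Gamma q * (∑ i ∈ Finset.Icc 1 n, |γ i| * ∫ s in (0:ℝ)..η i, (η i - s) ^ (q - 1) * gc s)) = ∑ i ∈ Finset.Icc 1 n,
          K * (1 / Real.Gamma q) * (|γ i| * ∫ s in (0:ℝ)..η i, (η i - s) ^ (q - 1) * gc s) from by
        rw [← mul_assoc, Finset.mul_sum]]
      apply Finset.sum_le_sum
      intro i hi
      rw [show γ i * (1 / Real.Gamma q * ∫ s in (0:ℝ)..η i, (η i - s) ^ (q - 1) * FX s) -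
            γ i * (1 / Real.Gamma q * ∫ s in (0:ℝ)..η i, (η i - s) ^ (q - 1) * FY s) =
          γ i * (1 / Real.Gamma q) * ((∫ s in (0:ℝ)..η i, (η i - s) ^ (q - 1) * FX s) -
            ∫ s in (0:ℝ)..η i, (η i - s) ^ (q - 1) * FY s) from by ring,
        abs_mul, abs_mul, abs_of_nonneg (one_div_nonneg.mpr hΓq.le)]
      calc |γ i| * (1 / Real.Gamma q) * |(∫ s in (0:ℝ)..η i, (η i - s) ^ (q - 1) * FX s) -
            ∫ s in (0:ℝ)..η i, (η i - s) ^ (q - 1) * FY s|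
          ≤ |γ i| * (1 / Real.Gamma q) * (K * ∫ s in (0:ℝ)..η i, (η i - s) ^ (q - 1) * gc s) :=
            mul_le_mul_of_nonneg_left (key (η i) (q - 1) (by linarith) (hη0 i hi) (hη1 i hi))
              (mul_nonneg (abs_nonneg _) (one_div_nonneg.mpr hΓq.le))
        _ = K * (1 / Real.Gamma q) * (|γ i| * ∫ s in (0:ℝ)..η i, (η i - s) ^ (q - 1) * gc s) := by ring
    have hα : |(∑ i ∈ Finset.Icc 1 n, α i * (1 / Real.Gamma (q - ν) * ∫ s in (0:ℝ)..η i, (η i - s) ^ (q - ν - 1) * FX s)) - (∑ i ∈ Finset.Icc 1 n, α i * (1 / Real.Gamma (q - ν) * ∫ s in (0:ℝ)..η i, (η i - s) ^ (q - ν - 1) * FY s))| ≤ K * (1 / Real.Gamma (q - ν) * (∑ i ∈ Finset.Icc 1 n, |α i| * ∫ s in (0:ℝ)..η i, (η i - s) ^ (q - ν - 1) * gc s)) := by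
      rw [← Finset.sum_sub_distrib]
      refine (Finset.abs_sum_le_sum_abs _ _).trans ?_
      rw [show K * (1 / Real.Gamma (q - ν) * (∑ i ∈ Finset.Icc 1 n, |α i| * ∫ s in (0:ℝ)..η i, (η i - s) ^ (q - ν - 1) * gc s)) = ∑ i ∈ Finset.Icc 1 n,
          K * (1 / Real.Gamma (q - ν)) * (|α i| * ∫ s in (0:ℝ)..η i, (η i - s) ^ (q - ν - 1) * gc s) from by
        rw [← mul_assoc, Finset.mul_sum]]
      apply Finset.sum_le_sum
      intro i hi
      rw [show α i * (1 / Real.Gamma (q - ν) * ∫ s in (0:ℝ)..η i, (η i - s) ^ (q - ν - 1) * FX s) -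
            α i * (1 / Real.Gamma (q - ν) * ∫ s in (0:ℝ)..η i, (η i - s) ^ (q - ν - 1) * FY s) =
          α i * (1 / Real.Gamma (q - ν)) * ((∫ s in (0:ℝ)..η i, (η i - s) ^ (q - ν - 1) * FX s) -
            ∫ s in (0:ℝ)..η i, (η i - s) ^ (q - ν - 1) * FY s) from by ring,
        abs_mul, abs_mul, abs_of_nonneg (one_div_nonneg.mpr hΓqν.le)]
      calc |α i| * (1 / Real.Gamma (q - ν)) * |(∫ s in (0:ℝ)..η i, (η i - s) ^ (q - ν - 1) * FX s) -
            ∫ s in (0:ℝ)..η i, (η i - s) ^ (q - ν - 1) * FY s|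
          ≤ |α i| * (1 / Real.Gamma (q - ν)) * (K * ∫ s in (0:ℝ)..η i, (η i - s) ^ (q - ν - 1) * gc s) :=
            mul_le_mul_of_nonneg_left (key (η i) (q - ν - 1) (by linarith) (hη0 i hi) (hη1 i hi))
              (mul_nonneg (abs_nonneg _) (one_div_nonneg.mpr hΓqν.le))
        _ = K * (1 / Real.Gamma (q - ν)) * (|α i| * ∫ s in (0:ℝ)..η i, (η i - s) ^ (q - ν - 1) * gc s) := by
            ring
    have hξbd : |1 / Real.Gamma (q - σ) * (∫ s in (0:ℝ)..ξ, (ξ - s) ^ (q - σ - 1) * FX s) - 1 / Real.Gamma (q - σ) * (∫ s in (0:ℝ)..ξ, (ξ - s) ^ (q - σ - 1) * FY s)| ≤ K * (1 / Real.Gamma (q - σ) * (∫ s in (0:ℝ)..ξ, (ξ - s) ^ (q - σ - 1) * gc s)) := by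
      rw [← mul_sub, abs_mul, abs_of_nonneg (one_div_nonneg.mpr hΓqσ.le)]
      calc 1 / Real.Gamma (q - σ) * |(∫ s in (0:ℝ)..ξ, (ξ - s) ^ (q - σ - 1) * FX s) - (∫ s in (0:ℝ)..ξ, (ξ - s) ^ (q - σ - 1) * FY s)|
          ≤ 1 / Real.Gamma (q - σ) * (K * (∫ s in (0:ℝ)..ξ, (ξ - s) ^ (q - σ - 1) * gc s)) :=
            mul_le_mul_of_nonneg_left (key ξ (q - σ - 1) (by linarith) hξ.le hξ1)
              (one_div_nonneg.mpr hΓqσ.le)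
        _ = K * (1 / Real.Gamma (q - σ) * (∫ s in (0:ℝ)..ξ, (ξ - s) ^ (q - σ - 1) * gc s)) := by ring
    have hC : |Real.Gamma (2 - σ) * Real.Gamma (2 - ν) * (Δ₃ n η β γ + 2 * Δ₂ n η β γ * (↑t : ℝ)) / (2 * Δ₁ σ ν ξ n η α * Δ₂ n η β γ)| ≤ Real.Gamma (2 - σ) * Real.Gamma (2 - ν) * (|Δ₃ n η β γ| + 2 * |Δ₂ n η β γ|) / (2 * |Δ₁ σ ν ξ n η α * Δ₂ n η β γ|) := by
      rw [abs_div, abs_mul, abs_mul, abs_of_pos hΓ2σ, abs_of_pos hΓ2ν,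
        show (2 * Δ₁ σ ν ξ n η α * Δ₂ n η β γ) = 2 * (Δ₁ σ ν ξ n η α * Δ₂ n η β γ) from by ring,
        abs_mul, abs_two]
      have hden : (0:ℝ) < 2 * |Δ₁ σ ν ξ n η α * Δ₂ n η β γ| := by
        have := abs_pos.mpr (mul_ne_zero hΔ₁ hΔ₂)
        linarith
      rw [div_le_div_iff_of_pos_right hden]
      apply mul_le_mul_of_nonneg_left _ (mul_nonneg hΓ2σ.le hΓ2ν.le)
      refine (abs_add_le _ _).trans ?_
      rw [abs_mul, abs_mul, abs_two]
      have ht1 : |(↑t : ℝ)| ≤ 1 := by rw [abs_of_nonneg t.2.1]; exact t.2.2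
      nlinarith [abs_nonneg (Δ₂ n η β γ), abs_nonneg ((↑t : ℝ))]
    have hΦJ : Φ q σ ν ξ n η α β γ g =
        (1 + 1 / |Δ₂ n η β γ|) * (1 / Real.Gamma q * (∫ s in (0:ℝ)..1, (1 - s) ^ (q - 1) * gc s)) +
        1 / |Δ₂ n η β γ| * (1 / Real.Gamma q * (∑ i ∈ Finset.Icc 1 n, |γ i| * ∫ s in (0:ℝ)..η i, (η i - s) ^ (q - 1) * gc s) + 1 / Real.Gamma (q + 1) * (∑ i ∈ Finset.Icc 1 n, |β i| * ∫ s in (0:ℝ)..η i, (η i - s) ^ q * gc s)) +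
        Real.Gamma (2 - σ) * Real.Gamma (2 - ν) * (|Δ₃ n η β γ| + 2 * |Δ₂ n η β γ|) / (2 * |Δ₁ σ ν ξ n η α * Δ₂ n η β γ|) * (1 / Real.Gamma (q - σ) * (∫ s in (0:ℝ)..ξ, (ξ - s) ^ (q - σ - 1) * gc s) + 1 / Real.Gamma (q - ν) * (∑ i ∈ Finset.Icc 1 n, |α i| * ∫ s in (0:ℝ)..η i, (η i - s) ^ (q - ν - 1) * gc s)) := by
      have t1 : (∫ s in (0:ℝ)..1, (1 - s) ^ (q - 1) / Real.Gamma q * g s) = 1 / Real.Gamma q * (∫ s in (0:ℝ)..1, (1 - s) ^ (q - 1) * gc s) := by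
        rw [rw_div]
        congr 1
        exact aux_congr2 zero_le_one le_rfl (fun s => (1 - s) ^ (q - 1)) g gc
          (fun s hs => (hgc_eq s hs).symm)
      have t2 : (∑ i ∈ Finset.Icc 1 n, ∫ s in (0:ℝ)..η i,
            (η i - s) ^ (q - 1) / Real.Gamma (q + 1) * (q * |γ i| + |β i| * (η i - s)) * g s) =
          1 / Real.Gamma q * (∑ i ∈ Finset.Icc 1 n, |γ i| * ∫ s in (0:ℝ)..η i, (η i - s) ^ (q - 1) * gc s) + 1 / Real.Gamma (q + 1) * (∑ i ∈ Finset.Icc 1 n, |β i| * ∫ s in (0:ℝ)..η i, (η i - s) ^ q * gc s) := by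
        have e : ∀ i ∈ Finset.Icc 1 n, (∫ s in (0:ℝ)..η i,
              (η i - s) ^ (q - 1) / Real.Gamma (q + 1) * (q * |γ i| + |β i| * (η i - s)) * g s) =
            1 / Real.Gamma q * (|γ i| * ∫ s in (0:ℝ)..η i, (η i - s) ^ (q - 1) * gc s) +
            1 / Real.Gamma (q + 1) * (|β i| * ∫ s in (0:ℝ)..η i, (η i - s) ^ q * gc s) := by
          intro i hi
          rw [aux_congr2 (hη0 i hi) (hη1 i hi)
            (fun s => (η i - s) ^ (q - 1) / Real.Gamma (q + 1) * (q * |γ i| + |β i| * (η i - s))) g gc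
            (fun s hs => (hgc_eq s hs).symm)]
          rw [aux_split hq1 (hη0 i hi) (|β i|) (|γ i|) hgc_cont]
          rw [Real.Gamma_add_one (ne_of_gt hq0)]
          field_simp
        rw [Finset.sum_congr rfl e, Finset.sum_add_distrib, ← Finset.mul_sum, ← Finset.mul_sum]
      have t3 : (∫ s in (0:ℝ)..ξ, (ξ - s) ^ (q - σ - 1) / Real.Gamma (q - σ) * g s) =
          1 / Real.Gamma (q - σ) * (∫ s in (0:ℝ)..ξ, (ξ - s) ^ (q - σ - 1) * gc s) := by
        rw [rw_div]
        congr 1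
        exact aux_congr2 hξ.le hξ1 (fun s => (ξ - s) ^ (q - σ - 1)) g gc
          (fun s hs => (hgc_eq s hs).symm)
      have t4 : (∑ i ∈ Finset.Icc 1 n, |α i| *
            ∫ s in (0:ℝ)..η i, (η i - s) ^ (q - ν - 1) / Real.Gamma (q - ν) * g s) =
          1 / Real.Gamma (q - ν) * (∑ i ∈ Finset.Icc 1 n, |α i| * ∫ s in (0:ℝ)..η i, (η i - s) ^ (q - ν - 1) * gc s) := by
        have e : ∀ i ∈ Finset.Icc 1 n, (|α i| *
              ∫ s in (0:ℝ)..η i, (η i - s) ^ (q - ν - 1) / Real.Gamma (q - ν) * g s) =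
            1 / Real.Gamma (q - ν) * (|α i| * ∫ s in (0:ℝ)..η i, (η i - s) ^ (q - ν - 1) * gc s) := by
          intro i hi
          rw [rw_div, aux_congr2 (hη0 i hi) (hη1 i hi) (fun s => (η i - s) ^ (q - ν - 1)) g gc
            (fun s hs => (hgc_eq s hs).symm)]
          ring
        rw [Finset.sum_congr rfl e, ← Finset.mul_sum]
      unfold Φ
      rw [t1, t2, t3, t4]
    have hsum : K * (1 / Real.Gamma q * (∫ s in (0:ℝ)..1, (1 - s) ^ (q - 1) * gc s)) +
        1 / |Δ₂ n η β γ| * (K * (1 / Real.Gamma q * (∫ s in (0:ℝ)..1, (1 - s) ^ (q - 1) * gc s)) + K * (1 / Real.Gamma (q + 1) * (∑ i ∈ Finset.Icc 1 n, |β i| * ∫ s in (0:ℝ)..η i, (η i - s) ^ q * gc s)) +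
          K * (1 / Real.Gamma q * (∑ i ∈ Finset.Icc 1 n, |γ i| * ∫ s in (0:ℝ)..η i, (η i - s) ^ (q - 1) * gc s))) +
        Real.Gamma (2 - σ) * Real.Gamma (2 - ν) * (|Δ₃ n η β γ| + 2 * |Δ₂ n η β γ|) / (2 * |Δ₁ σ ν ξ n η α * Δ₂ n η β γ|) * (K * (1 / Real.Gamma (q - σ) * (∫ s in (0:ℝ)..ξ, (ξ - s) ^ (q - σ - 1) * gc s)) + K * (1 / Real.Gamma (q - ν) * (∑ i ∈ Finset.Icc 1 n, |α i| * ∫ s in (0:ℝ)..η i, (η i - s) ^ (q - ν - 1) * gc s))) =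
        K * Φ q σ ν ξ n η α β γ g := by
      rw [hΦJ]
      ring
    have hKΦ : K * Φ q σ ν ξ n η α β γ g = L := by
      rw [hKK]
      field_simp
    rw [show ((1 / Real.Gamma q * (∫ s in (0:ℝ)..(↑t : ℝ), ((↑t : ℝ) - s) ^ (q - 1) * FX s)) + 1 / Δ₂ n η β γ * (-(1 / Real.Gamma q * (∫ s in (0:ℝ)..1, (1 - s) ^ (q - 1) * FX s)) + (∑ i ∈ Finset.Icc 1 n, β i * (1 / Real.Gamma (q + 1) * ∫ s in (0:ℝ)..η i, (η i - s) ^ q * FX s)) + (∑ i ∈ Finset.Icc 1 n, γ i * (1 / Real.Gamma q * ∫ s in (0:ℝ)..η i, (η i - s) ^ (q - 1) * FX s))) + Real.Gamma (2 - σ) * Real.Gamma (2 - ν) * (Δ₃ n η β γ + 2 * Δ₂ n η β γ * (↑t : ℝ)) / (2 * Δ₁ σ ν ξ n η α * Δ₂ n η β γ) * (-(1 / Real.Gamma (q - σ) * (∫ s in (0:ℝ)..ξ, (ξ - s) ^ (q - σ - 1) * FX s)) + (∑ i ∈ Finset.Icc 1 n, α i * (1 / Real.Gamma (q - ν) * ∫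 s in (0:ℝ)..η i, (η i - s) ^ (q - ν - 1) * FX s)))) - ((1 / Real.Gamma q * (∫ s in (0:ℝ)..(↑t : ℝ), ((↑t : ℝ) - s) ^ (q - 1) * FY s)) + 1 / Δ₂ n η β γ * (-(1 / Real.Gamma q * (∫ s in (0:ℝ)..1, (1 - s) ^ (q - 1) * FY s)) + (∑ i ∈ Finset.Icc 1 n, β i * (1 / Real.Gamma (q + 1) * ∫ s in (0:ℝ)..η i, (η i - s) ^ q * FY s)) + (∑ i ∈ Finset.Icc 1 n, γ i * (1 / Real.Gamma q * ∫ s in (0:ℝ)..η i, (η i - s) ^ (q - 1) * FY s))) + Real.Gamma (2 - σ) * Real.Gamma (2 - ν) * (Δ₃ n η β γ + 2 * Δ₂ n η β γ * (↑t : ℝ)) / (2 * Δ₁ σ ν ξ n η α * Δ₂ n η β γ) * (-(1 / Real.Gamma (q - σ) * (∫ s in (0:ℝ)..ξ, (ξ - s) ^ (q - σ - 1) * FY s)) + (∑ i ∈ Finset.Icc 1 n, α i * (1 / Real.Gamma (q - ν) * ∫ s in (0:ℝ)..η i, (η i - s) ^ (q - ν - 1) * FY s)))) = ((1 / Real.Gamma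 q * (∫ s in (0:ℝ)..(↑t : ℝ), ((↑t : ℝ) - s) ^ (q - 1) * FX s) - 1 / Real.Gamma q * (∫ s in (0:ℝ)..(↑t : ℝ), ((↑t : ℝ) - s) ^ (q - 1) * FY s))) + (1 / Δ₂ n η β γ * ((-(1 / Real.Gamma q * (∫ s in (0:ℝ)..1, (1 - s) ^ (q - 1) * FX s)) + (∑ i ∈ Finset.Icc 1 n, β i * (1 / Real.Gamma (q + 1) * ∫ s in (0:ℝ)..η i, (η i - s) ^ q * FX s)) + (∑ i ∈ Finset.Icc 1 n, γ i * (1 / Real.Gamma q * ∫ s in (0:ℝ)..η i, (η i - s) ^ (q - 1) * FX s))) - (-(1 / Real.Gamma q * (∫ s in (0:ℝ)..1, (1 - s) ^ (q - 1) * FY s)) + (∑ i ∈ Finset.Icc 1 n, β i * (1 / Real.Gamma (q + 1) * ∫ s in (0:ℝ)..η i, (η i - s) ^ q * FY s)) + (∑ i ∈ Finset.Icc 1 n, γ i * (1 / Real.Gamma q * ∫ s in (0:ℝ)..η i, (η i - s) ^ (q - 1) * FY s))))) + (Real.Gamma (2 - σ) * Real.Gamma (2 - ν) * (Δ₃ n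 η β γ + 2 * Δ₂ n η β γ * (↑t : ℝ)) / (2 * Δ₁ σ ν ξ n η α * Δ₂ n η β γ) * ((-(1 / Real.Gamma (q - σ) * (∫ s in (0:ℝ)..ξ, (ξ - s) ^ (q - σ - 1) * FX s)) + (∑ i ∈ Finset.Icc 1 n, α i * (1 / Real.Gamma (q - ν) * ∫ s in (0:ℝ)..η i, (η i - s) ^ (q - ν - 1) * FX s))) - (-(1 / Real.Gamma (q - σ) * (∫ s in (0:ℝ)..ξ, (ξ - s) ^ (q - σ - 1) * FY s)) + (∑ i ∈ Finset.Icc 1 n, α i * (1 / Real.Gamma (q - ν) * ∫ s in (0:ℝ)..η i, (η i - s) ^ (q - ν - 1) * FY s))))) from by ring]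
    refine (abs_add_three _ _ _).trans ?_
    have hD2 : |1 / Δ₂ n η β γ * ((-(1 / Real.Gamma q * (∫ s in (0:ℝ)..1, (1 - s) ^ (q - 1) * FX s)) + (∑ i ∈ Finset.Icc 1 n, β i * (1 / Real.Gamma (q + 1) * ∫ s in (0:ℝ)..η i, (η i - s) ^ q * FX s)) + (∑ i ∈ Finset.Icc 1 n, γ i * (1 / Real.Gamma q * ∫ s in (0:ℝ)..η i, (η i - s) ^ (q - 1) * FX s))) - (-(1 / Real.Gamma q * (∫ s in (0:ℝ)..1, (1 - s) ^ (q - 1) * FY s)) + (∑ i ∈ Finset.Icc 1 n, β i * (1 / Real.Gamma (q + 1) * ∫ s in (0:ℝ)..η i, (η i - s) ^ q * FY s)) + (∑ i ∈ Finset.Icc 1 n, γ i * (1 / Real.Gamma q * ∫ s in (0:ℝ)..η i, (η i - s) ^ (q - 1) * FY s))))| ≤ 1 / |Δ₂ n η β γ| * (K * (1 / Real.Gamma q * (∫ s in (0:ℝ)..1, (1 - s) ^ (q - 1) * gc s)) +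
        K * (1 / Real.Gamma (q + 1) * (∑ i ∈ Finset.Icc 1 n, |β i| * ∫ s in (0:ℝ)..η i, (η i - s) ^ q * gc s)) + K * (1 / Real.Gamma q * (∑ i ∈ Finset.Icc 1 n, |γ i| * ∫ s in (0:ℝ)..η i, (η i - s) ^ (q - 1) * gc s))) := by
      rw [abs_mul, abs_one_div]
      apply mul_le_mul_of_nonneg_left _ (one_div_nonneg.mpr (abs_nonneg _))
      rw [show (-(1 / Real.Gamma q * (∫ s in (0:ℝ)..1, (1 - s) ^ (q - 1) * FX s)) + (∑ i ∈ Finset.Icc 1 n, β i * (1 / Real.Gamma (q + 1) * ∫ s in (0:ℝ)..η i, (η i - s) ^ q * FX s)) + (∑ i ∈ Finset.Icc 1 n, γ i * (1 / Real.Gamma q * ∫ s in (0:ℝ)..η i, (η i - s) ^ (q - 1) * FX s))) - (-(1 / Real.Gamma q * (∫ s in (0:ℝ)..1, (1 - s) ^ (q - 1) * FY s)) + (∑ i ∈ Finset.Icc 1 n, β i * (1 / Real.Gamma (q + 1) * ∫ s in (0:ℝ)..η i, (η i - s) ^ q * FY s)) + (∑ i ∈ Finset.Icc 1 n, γ i *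 (1 / Real.Gamma q * ∫ s in (0:ℝ)..η i, (η i - s) ^ (q - 1) * FY s))) = ((1 / Real.Gamma q * (∫ s in (0:ℝ)..1, (1 - s) ^ (q - 1) * FY s)) - (1 / Real.Gamma q * (∫ s in (0:ℝ)..1, (1 - s) ^ (q - 1) * FX s))) +
          ((∑ i ∈ Finset.Icc 1 n, β i * (1 / Real.Gamma (q + 1) * ∫ s in (0:ℝ)..η i, (η i - s) ^ q * FX s)) - (∑ i ∈ Finset.Icc 1 n, β i * (1 / Real.Gamma (q + 1) * ∫ s in (0:ℝ)..η i, (η i - s) ^ q * FY s))) + ((∑ i ∈ Finset.Icc 1 n, γ i * (1 / Real.Gamma q * ∫ s in (0:ℝ)..η i, (η i - s) ^ (q - 1) * FX s)) - (∑ i ∈ Finset.Icc 1 n, γ i * (1 / Real.Gamma q * ∫ s in (0:ℝ)..η i, (η i - s) ^ (q - 1) * FY s))) from by ring]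
      refine (abs_add_three _ _ _).trans ?_
      rw [abs_sub_comm]
      linarith [h1, hβ, hγ]
    have hD3 : |Real.Gamma (2 - σ) * Real.Gamma (2 - ν) * (Δ₃ n η β γ + 2 * Δ₂ n η β γ * (↑t : ℝ)) / (2 * Δ₁ σ ν ξ n η α * Δ₂ n η β γ) * ((-(1 / Real.Gamma (q - σ) * (∫ s in (0:ℝ)..ξ, (ξ - s) ^ (q - σ - 1) * FX s)) + (∑ i ∈ Finset.Icc 1 n, α i * (1 / Real.Gamma (q - ν) * ∫ s in (0:ℝ)..η i, (η i - s) ^ (q - ν - 1) * FX s))) - (-(1 / Real.Gamma (q - σ) * (∫ s in (0:ℝ)..ξ, (ξ - s) ^ (q - σ - 1) * FY s)) + (∑ i ∈ Finset.Icc 1 n, α i * (1 / Real.Gamma (q - ν) * ∫ s in (0:ℝ)..η i, (η i - s) ^ (q - ν - 1) * FY s))))| ≤ Real.Gamma (2 - σ) * Real.Gamma (2 - ν) * (|Δ₃ n η β γ| + 2 * |Δ₂ n η β γ|) / (2 * |Δ₁ σ ν ξ n η α * Δ₂ n η β γ|) * (K * (1 / Real.Gamma (q - σ) * (∫ s in (0:ℝ)..ξ,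 (ξ - s) ^ (q - σ - 1) * gc s)) + K * (1 / Real.Gamma (q - ν) * (∑ i ∈ Finset.Icc 1 n, |α i| * ∫ s in (0:ℝ)..η i, (η i - s) ^ (q - ν - 1) * gc s))) := by
      rw [abs_mul]
      apply mul_le_mul hC _ (abs_nonneg _) hCb0
      rw [show (-(1 / Real.Gamma (q - σ) * (∫ s in (0:ℝ)..ξ, (ξ - s) ^ (q - σ - 1) * FX s)) + (∑ i ∈ Finset.Icc 1 n, α i * (1 / Real.Gamma (q - ν) * ∫ s in (0:ℝ)..η i, (η i - s) ^ (q - ν - 1) * FX s))) - (-(1 / Real.Gamma (q - σ) * (∫ s in (0:ℝ)..ξ, (ξ - s) ^ (q - σ - 1) * FY s)) + (∑ i ∈ Finset.Icc 1 n, α i * (1 / Real.Gamma (q - ν) * ∫ s in (0:ℝ)..η i, (η i - s) ^ (q - ν - 1) * FY s))) = ((1 / Real.Gamma (q - σ) * (∫ s in (0:ℝ)..ξ, (ξ - s) ^ (q - σ - 1) * FY s)) - (1 / Real.Gamma (q - σ) * (∫ s in (0:ℝ)..ξ, (ξ - s) ^ (q - σ - 1) * FX s))) +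
          ((∑ i ∈ Finset.Icc 1 n, α i * (1 / Real.Gamma (q - ν) * ∫ s in (0:ℝ)..η i, (η i - s) ^ (q - ν - 1) * FX s)) - (∑ i ∈ Finset.Icc 1 n, α i * (1 / Real.Gamma (q - ν) * ∫ s in (0:ℝ)..η i, (η i - s) ^ (q - ν - 1) * FY s))) from by ring]
      refine (abs_add_le _ _).trans ?_
      rw [abs_sub_comm]
      linarith [hξbd, hα]
    linarith [hD1, hD2, hD3, hsum, hKΦ]
  haveI : Nonempty C(Icc (0:ℝ) 1, ℝ) := ⟨0⟩
  obtain ⟨z, hz1, hz2⟩ := log_fixedPoint T hest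
  exact ⟨z, (hfix z).mp hz1, fun w hw => hz2 w ((hfix w).mpr hw)⟩
end

section
/- Assume f satisfies (H₂): |f(t,x) − f(t,y)| ≤ g(t)·Φ^{−1}·ln(1 + |x − y|) for all t ∈ [0,1] and all x, y ∈ ℝ. Then for all x, y ∈ C([0,1],ℝ) one has ‖𝒜x − 𝒜y‖ ≤ ln(1 + ‖x − y‖); in particular 𝒜 is a nonlinear contraction with gauge function ψ(α) = ln(1 + α). -/
open MeasureTheory intervalIntegral

section Aux

open Set

lemma integrable_weight {p : ℝ} (c : ℝ) {a : ℝ} (hp : -1 < p) (ha : 0 ≤ a)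
    {h : ℝ → ℝ} (hh : ContinuousOn h (Icc 0 a)) :
    IntervalIntegrable (fun s => (a - s) ^ p / c * h s) volume 0 a := by
  have h1 : IntervalIntegrable (fun s : ℝ => (a - s) ^ p) volume 0 a := by
    have h := (intervalIntegrable_rpow' (a := 0) (b := a) hp).comp_sub_left a
    simpa using h.symm
  exact (h1.div_const c).mul_continuousOn (g := h) (by rwa [uIcc_of_le ha])

lemma core_est {p c a K : ℝ} (hp : -1 < p) (hc : 0 < c) (ha : 0 ≤ a) (hK : 0 ≤ K)
    {h₁ h₂ g : ℝ → ℝ} (hh₁ : ContinuousOn h₁ (Icc 0 a)) (hh₂ : ContinuousOn h₂ (Icc 0 a))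
    (hg : ContinuousOn g (Icc 0 a))
    (hbound : ∀ s ∈ Icc (0:ℝ) a, |h₁ s - h₂ s| ≤ g s * K) :
    |(∫ s in (0:ℝ)..a, (a - s) ^ p / c * h₁ s) - ∫ s in (0:ℝ)..a, (a - s) ^ p / c * h₂ s| ≤
      K * ∫ s in (0:ℝ)..a, (a - s) ^ p / c * g s := by
  have i₁ := integrable_weight c hp ha hh₁
  have i₂ := integrable_weight c hp ha hh₂
  have ig := integrable_weight c hp ha hg
  rw [← intervalIntegral.integral_sub i₁ i₂]
  have hKg : IntervalIntegrable (fun s => K * ((a - s) ^ p / c * g s)) volume 0 a :=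
    ig.const_mul K
  calc |∫ s in (0:ℝ)..a, ((a - s) ^ p / c * h₁ s - (a - s) ^ p / c * h₂ s)|
      ≤ ∫ s in (0:ℝ)..a, |(a - s) ^ p / c * h₁ s - (a - s) ^ p / c * h₂ s| :=
        intervalIntegral.abs_integral_le_integral_abs ha
    _ ≤ ∫ s in (0:ℝ)..a, K * ((a - s) ^ p / c * g s) := by
        apply intervalIntegral.integral_mono_on ha ((i₁.sub i₂).abs) hKg
        intro s hs
        have hw : 0 ≤ (a - s) ^ p / c :=
          div_nonneg (Real.rpow_nonneg (by linarith [hs.2]) p) hc.le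
        rw [← mul_sub, abs_mul, abs_of_nonneg hw]
        have hb := hbound s hs
        nlinarith [abs_nonneg (h₁ s - h₂ s)]
    _ = K * ∫ s in (0:ℝ)..a, (a - s) ^ p / c * g s := intervalIntegral.integral_const_mul _ _

lemma eta_le {n : ℕ} {η : ℕ → ℝ} (hmono : ∀ i, 1 ≤ i → i < n → η i < η (i + 1)) :
    ∀ i j, 1 ≤ i → i ≤ j → j ≤ n → η i ≤ η j := by
  intro i j hi hij hjn
  induction j with
  | zero => omega
  | succ k ih =>
    rcases Nat.eq_or_lt_of_le hij with h | h
    · rw [h]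
    · exact (ih (by omega) (by omega)).trans (hmono k (by omega) (by omega)).le

lemma comb_eq {q a : ℝ} (hq : 1 < q) (ha : 0 ≤ a) (B C : ℝ) {g : ℝ → ℝ}
    (hg : ContinuousOn g (Icc 0 a)) :
    B * (∫ s in (0:ℝ)..a, (a - s) ^ q / Real.Gamma (q + 1) * g s) +
      C * (∫ s in (0:ℝ)..a, (a - s) ^ (q - 1) / Real.Gamma q * g s) =
    ∫ s in (0:ℝ)..a, (a - s) ^ (q - 1) / Real.Gamma (q + 1) * (q * C + B * (a - s)) * g s := by
  have hq0 : (0:ℝ) < q := by linarith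
  have hΓq : 0 < Real.Gamma q := Real.Gamma_pos_of_pos hq0
  have hΓ : Real.Gamma (q + 1) = q * Real.Gamma q := Real.Gamma_add_one hq0.ne'
  have i1 : IntervalIntegrable (fun s => (a - s) ^ q / Real.Gamma (q + 1) * g s) volume 0 a :=
    integrable_weight _ (by linarith) ha hg
  have i2 : IntervalIntegrable (fun s => (a - s) ^ (q - 1) / Real.Gamma q * g s) volume 0 a :=
    integrable_weight _ (by linarith) ha hg
  rw [← intervalIntegral.integral_const_mul, ← intervalIntegral.integral_const_mul,
    ← intervalIntegral.integral_add (i1.const_mul B) (i2.const_mul C)]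
  apply intervalIntegral.integral_congr
  intro s hs
  rw [uIcc_of_le ha] at hs
  dsimp only
  by_cases h0 : a - s = 0
  · rw [h0, Real.zero_rpow hq0.ne', Real.zero_rpow (by intro h; apply hq.ne'; linarith : q - 1 ≠ 0)]
    ring
  · have hx : (a - s) ^ q = (a - s) ^ (q - 1) * (a - s) := by
      rw [← Real.rpow_add_one h0 (q - 1), sub_add_cancel]
    rw [hΓ, hx]
    field_simp
    ring

lemma int_t_le {q t : ℝ} (hq : 1 < q) (ht0 : 0 ≤ t) (ht1 : t ≤ 1) {g : ℝ → ℝ}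
    (hg : ContinuousOn g (Icc 0 1)) (hgpos : ∀ s ∈ Icc (0:ℝ) 1, 0 ≤ g s) :
    (∫ s in (0:ℝ)..t, (t - s) ^ (q - 1) / Real.Gamma q * g s) ≤
      ∫ s in (0:ℝ)..1, (1 - s) ^ (q - 1) / Real.Gamma q * g s := by
  have hΓq : 0 < Real.Gamma q := Real.Gamma_pos_of_pos (by linarith)
  have i1 : IntervalIntegrable (fun s => (1 - s) ^ (q - 1) / Real.Gamma q * g s) volume 0 1 :=
    integrable_weight _ (by linarith) zero_le_one hg
  have i1t : IntervalIntegrable (fun s => (1 - s) ^ (q - 1) / Real.Gamma q * g s) volume 0 t :=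
    i1.mono_set (by rw [uIcc_of_le ht0, uIcc_of_le zero_le_one]; exact Icc_subset_Icc_right ht1)
  have i1r : IntervalIntegrable (fun s => (1 - s) ^ (q - 1) / Real.Gamma q * g s) volume t 1 :=
    i1.mono_set (by rw [uIcc_of_le ht1, uIcc_of_le zero_le_one]; exact Icc_subset_Icc_left ht0)
  have it : IntervalIntegrable (fun s => (t - s) ^ (q - 1) / Real.Gamma q * g s) volume 0 t :=
    integrable_weight _ (by linarith) ht0 (hg.mono (Icc_subset_Icc_right ht1))
  have step1 : (∫ s in (0:ℝ)..t, (t - s) ^ (q - 1) / Real.Gamma q * g s) ≤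
      ∫ s in (0:ℝ)..t, (1 - s) ^ (q - 1) / Real.Gamma q * g s := by
    apply intervalIntegral.integral_mono_on ht0 it i1t
    intro s hs
    have h1 : (t - s) ^ (q - 1) ≤ (1 - s) ^ (q - 1) :=
      Real.rpow_le_rpow (by linarith [hs.2]) (by linarith) (by linarith)
    have hgs : 0 ≤ g s := hgpos s ⟨hs.1, by linarith [hs.2]⟩
    gcongr
  have hadj := intervalIntegral.integral_add_adjacent_intervals i1t i1r
  have hnn : 0 ≤ ∫ s in t..1, (1 - s) ^ (q - 1) / Real.Gamma q * g s := by
    apply intervalIntegral.integral_nonneg ht1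
    intro s hs
    exact mul_nonneg (div_nonneg (Real.rpow_nonneg (by linarith [hs.2]) _) hΓq.le)
      (hgpos s ⟨by linarith [hs.1], hs.2⟩)
  linarith

lemma abs_est {T1 T1' I2 I2' Sb Sb' Sg Sg' P P' Sa Sa' u Ct E1 B1 Eb Eg E5 Ea uab Cmax K : ℝ}
    (h1 : |T1 - T1'| ≤ K * E1) (hE : E1 ≤ B1) (h2 : |I2 - I2'| ≤ K * B1)
    (h3 : |Sb - Sb'| ≤ K * Eb) (h4 : |Sg - Sg'| ≤ K * Eg)
    (h5 : |P - P'| ≤ K * E5) (h6 : |Sa - Sa'| ≤ K * Ea)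
    (hu : |u| = uab) (hC : |Ct| ≤ Cmax) (hCm : 0 ≤ Cmax) (hK : 0 ≤ K) :
    |(T1 + u * (-I2 + Sb + Sg) + Ct * (-P + Sa)) -
      (T1' + u * (-I2' + Sb' + Sg') + Ct * (-P' + Sa'))| ≤
    K * (B1 + uab * (B1 + Eb + Eg) + Cmax * (E5 + Ea)) := by
  have huab : 0 ≤ uab := hu ▸ abs_nonneg u
  have hB : |(-I2 + Sb + Sg) - (-I2' + Sb' + Sg')| ≤ K * B1 + K * Eb + K * Eg := by
    have e : (-I2 + Sb + Sg) - (-I2' + Sb' + Sg') = (-(I2 - I2') + (Sb - Sb')) + (Sg - Sg') := by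
      ring
    rw [e]
    have a1 := abs_add_le (-(I2 - I2') + (Sb - Sb')) (Sg - Sg')
    have a2 := abs_add_le (-(I2 - I2')) (Sb - Sb')
    rw [abs_neg] at a2
    linarith
  have hCc : |(-P + Sa) - (-P' + Sa')| ≤ K * E5 + K * Ea := by
    have e : (-P + Sa) - (-P' + Sa') = -(P - P') + (Sa - Sa') := by ring
    rw [e]
    have a2 := abs_add_le (-(P - P')) (Sa - Sa')
    rw [abs_neg] at a2
    linarith
  have e : (T1 + u * (-I2 + Sb + Sg) + Ct * (-P + Sa)) -
      (T1' + u * (-I2' + Sb' + Sg') + Ct * (-P' + Sa')) =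
      (T1 - T1') + u * ((-I2 + Sb + Sg) - (-I2' + Sb' + Sg')) +
        Ct * ((-P + Sa) - (-P' + Sa')) := by ring
  rw [e]
  have a1 := abs_add_le ((T1 - T1') + u * ((-I2 + Sb + Sg) - (-I2' + Sb' + Sg')))
    (Ct * ((-P + Sa) - (-P' + Sa')))
  have a2 := abs_add_le (T1 - T1') (u * ((-I2 + Sb + Sg) - (-I2' + Sb' + Sg')))
  rw [abs_mul] at a1
  rw [abs_mul, hu] at a2
  have h7 : uab * |(-I2 + Sb + Sg) - (-I2' + Sb' + Sg')| ≤ uab * (K * B1 + K * Eb + K * Eg) :=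
    mul_le_mul_of_nonneg_left hB huab
  have h8 : |Ct| * |(-P + Sa) - (-P' + Sa')| ≤ Cmax * (K * E5 + K * Ea) :=
    mul_le_mul hC hCc (abs_nonneg _) hCm
  have h9 : K * E1 ≤ K * B1 := mul_le_mul_of_nonneg_left hE hK
  have e2 : K * (B1 + uab * (B1 + Eb + Eg) + Cmax * (E5 + Ea)) =
      K * B1 + uab * (K * B1 + K * Eb + K * Eg) + Cmax * (K * E5 + K * Ea) := by ring
  rw [e2]
  linarith

end Aux

theorem thm32_estimate (q σ ν ξ : ℝ) (n : ℕ) (η α β γ : ℕ → ℝ)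
    (hq1 : 1 < q) (hq2 : q ≤ 2) (hσ0 : 0 < σ) (hσ1 : σ ≤ 1) (hν0 : 0 < ν) (hν1 : ν ≤ 1)
    (hn : 1 ≤ n) (hξ : 0 < ξ) (hξη : ξ < η 1)
    (hηmono : ∀ i, 1 ≤ i → i < n → η i < η (i + 1)) (hηn : η n < 1)
    (hΔ₁ : Δ₁ σ ν ξ n η α ≠ 0) (hΔ₂ : Δ₂ n η β γ ≠ 0)
    (f : ℝ → ℝ → ℝ)
    (hf : ContinuousOn (Function.uncurry f) (Set.Icc 0 1 ×ˢ Set.univ))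
    (g : ℝ → ℝ) (hg : ContinuousOn g (Set.Icc 0 1))
    (hgpos : ∀ t ∈ Set.Icc (0:ℝ) 1, 0 ≤ g t)
    (hΦ : 0 < Φ q σ ν ξ n η α β γ g)
    (hH2 : ∀ t ∈ Set.Icc (0:ℝ) 1, ∀ x y : ℝ,
      |f t x - f t y| ≤ g t * (Φ q σ ν ξ n η α β γ g)⁻¹ * Real.log (1 + |x - y|)) :
    ∀ x y : C(Set.Icc (0:ℝ) 1, ℝ), ∀ t ∈ Set.Icc (0:ℝ) 1,
      |opA q σ ν ξ n η α β γ f (Set.IccExtend zero_le_one ⇑x) t -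
        opA q σ ν ξ n η α β γ f (Set.IccExtend zero_le_one ⇑y) t| ≤
      Real.log (1 + ‖x - y‖) := by
  intro x y t ht
  set Φ₀ := Φ q σ ν ξ n η α β γ g with hΦ₀def
  set K := Φ₀⁻¹ * Real.log (1 + ‖x - y‖) with hKdef
  set X := Set.IccExtend (zero_le_one (α := ℝ)) ⇑x with hXdef
  set Y := Set.IccExtend (zero_le_one (α := ℝ)) ⇑y with hYdef
  have hL0 : 0 ≤ Real.log (1 + ‖x - y‖) := Real.log_nonneg (by linarith [norm_nonneg (x - y)])
  have hK0 : 0 ≤ K := mul_nonneg (inv_nonneg.mpr hΦ.le) hL0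
  have hXc : Continuous X := x.continuous.comp continuous_projIcc
  have hYc : Continuous Y := y.continuous.comp continuous_projIcc
  have hfX : ContinuousOn (fun s => f s (X s)) (Set.Icc 0 1) := by
    apply hf.comp ((continuous_id.prodMk hXc).continuousOn)
    intro s hs
    exact ⟨hs, trivial⟩
  have hfY : ContinuousOn (fun s => f s (Y s)) (Set.Icc 0 1) := by
    apply hf.comp ((continuous_id.prodMk hYc).continuousOn)
    intro s hs
    exact ⟨hs, trivial⟩
  have hbound : ∀ s ∈ Set.Icc (0:ℝ) 1, |f s (X s) - f s (Y s)| ≤ g s * K := by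
    intro s hs
    have h1 := hH2 s hs (X s) (Y s)
    have hXY : |X s - Y s| ≤ ‖x - y‖ := by
      rw [hXdef, hYdef, Set.IccExtend_of_mem _ _ hs, Set.IccExtend_of_mem _ _ hs]
      have h2 := (x - y).norm_coe_le_norm ⟨s, hs⟩
      simpa [Real.norm_eq_abs] using h2
    have hlog : Real.log (1 + |X s - Y s|) ≤ Real.log (1 + ‖x - y‖) :=
      Real.log_le_log (by positivity) (by linarith)
    calc |f s (X s) - f s (Y s)| ≤ g s * Φ₀⁻¹ * Real.log (1 + |X s - Y s|) := h1
      _ ≤ g s * Φ₀⁻¹ * Real.log (1 + ‖x - y‖) :=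
          mul_le_mul_of_nonneg_left hlog (mul_nonneg (hgpos s hs) (inv_nonneg.mpr hΦ.le))
      _ = g s * K := by rw [hKdef]; ring
  have hη : ∀ i ∈ Finset.Icc 1 n, 0 < η i ∧ η i ≤ 1 := by
    intro i hi
    rw [Finset.mem_Icc] at hi
    have h1 : η 1 ≤ η i := eta_le hηmono 1 i le_rfl hi.1 hi.2
    have h2 : η i ≤ η n := eta_le hηmono i n hi.1 hi.2 le_rfl
    exact ⟨by linarith, by linarith⟩
  have hη11 : η 1 ≤ 1 := (hη 1 (Finset.mem_Icc.mpr ⟨le_rfl, hn⟩)).2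
  have hΓq : 0 < Real.Gamma q := Real.Gamma_pos_of_pos (by linarith)
  have hΓq1 : 0 < Real.Gamma (q + 1) := Real.Gamma_pos_of_pos (by linarith)
  have hΓqσ : 0 < Real.Gamma (q - σ) := Real.Gamma_pos_of_pos (by linarith)
  have hΓqν : 0 < Real.Gamma (q - ν) := Real.Gamma_pos_of_pos (by linarith)
  have hΓ2σ : 0 < Real.Gamma (2 - σ) := Real.Gamma_pos_of_pos (by linarith)
  have hΓ2ν : 0 < Real.Gamma (2 - ν) := Real.Gamma_pos_of_pos (by linarith)
  have key : ∀ a p : ℝ, ∀ c : ℝ, 0 ≤ a → a ≤ 1 → -1 < p → 0 < c →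
      |(∫ s in (0:ℝ)..a, (a - s) ^ p / c * f s (X s)) -
        ∫ s in (0:ℝ)..a, (a - s) ^ p / c * f s (Y s)| ≤
      K * ∫ s in (0:ℝ)..a, (a - s) ^ p / c * g s := by
    intro a p c ha ha1 hp hc
    exact core_est hp hc ha hK0 (hfX.mono (Set.Icc_subset_Icc_right ha1))
      (hfY.mono (Set.Icc_subset_Icc_right ha1)) (hg.mono (Set.Icc_subset_Icc_right ha1))
      (fun s hs => hbound s (Set.Icc_subset_Icc_right ha1 hs))
  have intnn : ∀ a p : ℝ, ∀ c : ℝ, 0 ≤ a → a ≤ 1 → 0 ≤ c →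
      0 ≤ ∫ s in (0:ℝ)..a, (a - s) ^ p / c * g s := by
    intro a p c ha ha1 hc
    apply intervalIntegral.integral_nonneg ha
    intro s hs
    exact mul_nonneg (div_nonneg (Real.rpow_nonneg (by linarith [hs.2]) _) hc)
      (hgpos s ⟨hs.1, hs.2.trans ha1⟩)
  -- the six basic estimates
  have h1 := key t (q - 1) (Real.Gamma q) ht.1 ht.2 (by linarith) hΓq
  have hE := int_t_le hq1 ht.1 ht.2 hg hgpos
  have h2 := key 1 (q - 1) (Real.Gamma q) zero_le_one le_rfl (by linarith) hΓq
  have h5 := key ξ (q - σ - 1) (Real.Gamma (q - σ)) hξ.le (by linarith) (by linarith) hΓqσ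
  have h3 : |(∑ i ∈ Finset.Icc 1 n, β i *
        ∫ s in (0:ℝ)..η i, (η i - s) ^ q / Real.Gamma (q + 1) * f s (X s)) -
      ∑ i ∈ Finset.Icc 1 n, β i *
        ∫ s in (0:ℝ)..η i, (η i - s) ^ q / Real.Gamma (q + 1) * f s (Y s)| ≤
      K * ∑ i ∈ Finset.Icc 1 n, |β i| *
        ∫ s in (0:ℝ)..η i, (η i - s) ^ q / Real.Gamma (q + 1) * g s := by
    rw [← Finset.sum_sub_distrib, Finset.mul_sum]
    refine (Finset.abs_sum_le_sum_abs _ _).trans (Finset.sum_le_sum ?_)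
    intro i hi
    rw [← mul_sub, abs_mul]
    have hk := key (η i) q (Real.Gamma (q + 1)) (hη i hi).1.le (hη i hi).2 (by linarith) hΓq1
    exact le_trans (mul_le_mul_of_nonneg_left hk (abs_nonneg _)) (le_of_eq (by ring))
  have h4 : |(∑ i ∈ Finset.Icc 1 n, γ i *
        ∫ s in (0:ℝ)..η i, (η i - s) ^ (q - 1) / Real.Gamma q * f s (X s)) -
      ∑ i ∈ Finset.Icc 1 n, γ i *
        ∫ s in (0:ℝ)..η i, (η i - s) ^ (q - 1) / Real.Gamma q * f s (Y s)| ≤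
      K * ∑ i ∈ Finset.Icc 1 n, |γ i| *
        ∫ s in (0:ℝ)..η i, (η i - s) ^ (q - 1) / Real.Gamma q * g s := by
    rw [← Finset.sum_sub_distrib, Finset.mul_sum]
    refine (Finset.abs_sum_le_sum_abs _ _).trans (Finset.sum_le_sum ?_)
    intro i hi
    rw [← mul_sub, abs_mul]
    have hk := key (η i) (q - 1) (Real.Gamma q) (hη i hi).1.le (hη i hi).2 (by linarith) hΓq
    exact le_trans (mul_le_mul_of_nonneg_left hk (abs_nonneg _)) (le_of_eq (by ring))
  have h6 : |(∑ i ∈ Finset.Icc 1 n, α i *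
        ∫ s in (0:ℝ)..η i, (η i - s) ^ (q - ν - 1) / Real.Gamma (q - ν) * f s (X s)) -
      ∑ i ∈ Finset.Icc 1 n, α i *
        ∫ s in (0:ℝ)..η i, (η i - s) ^ (q - ν - 1) / Real.Gamma (q - ν) * f s (Y s)| ≤
      K * ∑ i ∈ Finset.Icc 1 n, |α i| *
        ∫ s in (0:ℝ)..η i, (η i - s) ^ (q - ν - 1) / Real.Gamma (q - ν) * g s := by
    rw [← Finset.sum_sub_distrib, Finset.mul_sum]
    refine (Finset.abs_sum_le_sum_abs _ _).trans (Finset.sum_le_sum ?_)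
    intro i hi
    rw [← mul_sub, abs_mul]
    have hk := key (η i) (q - ν - 1) (Real.Gamma (q - ν)) (hη i hi).1.le (hη i hi).2
      (by linarith) hΓqν
    exact le_trans (mul_le_mul_of_nonneg_left hk (abs_nonneg _)) (le_of_eq (by ring))
  have hu : |1 / Δ₂ n η β γ| = 1 / |Δ₂ n η β γ| := by rw [abs_div, abs_one]
  have hDprod : (0:ℝ) < |Δ₁ σ ν ξ n η α * Δ₂ n η β γ| :=
    abs_pos.mpr (mul_ne_zero hΔ₁ hΔ₂)
  have hden : |2 * Δ₁ σ ν ξ n η α * Δ₂ n η β γ| = 2 * |Δ₁ σ ν ξ n η α * Δ₂ n η β γ| := by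
    rw [mul_assoc, abs_mul, abs_two]
  have hnum : |Δ₃ n η β γ + 2 * Δ₂ n η β γ * t| ≤ |Δ₃ n η β γ| + 2 * |Δ₂ n η β γ| := by
    refine (abs_add_le _ _).trans ?_
    rw [abs_mul, abs_mul, abs_two]
    have htabs : |t| ≤ 1 := abs_le.mpr ⟨by linarith [ht.1], ht.2⟩
    nlinarith [abs_nonneg (Δ₂ n η β γ)]
  have hC : |Real.Gamma (2 - σ) * Real.Gamma (2 - ν) * (Δ₃ n η β γ + 2 * Δ₂ n η β γ * t) /
      (2 * Δ₁ σ ν ξ n η α * Δ₂ n η β γ)| ≤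
      Real.Gamma (2 - σ) * Real.Gamma (2 - ν) * (|Δ₃ n η β γ| + 2 * |Δ₂ n η β γ|) /
      (2 * |Δ₁ σ ν ξ n η α * Δ₂ n η β γ|) := by
    rw [abs_div, abs_mul, abs_mul, abs_of_pos hΓ2σ, abs_of_pos hΓ2ν, hden]
    gcongr
  have hCm : 0 ≤ Real.Gamma (2 - σ) * Real.Gamma (2 - ν) *
      (|Δ₃ n η β γ| + 2 * |Δ₂ n η β γ|) / (2 * |Δ₁ σ ν ξ n η α * Δ₂ n η β γ|) := by
    apply div_nonneg _ (by positivity)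
    have := abs_nonneg (Δ₃ n η β γ)
    have := abs_nonneg (Δ₂ n η β γ)
    positivity
  simp only [opA]
  refine le_trans (abs_est h1 hE h2 h3 h4 h5 h6 hu hC hCm hK0) ?_
  have hcombS : (∑ i ∈ Finset.Icc 1 n, |β i| *
        ∫ s in (0:ℝ)..η i, (η i - s) ^ q / Real.Gamma (q + 1) * g s) +
      (∑ i ∈ Finset.Icc 1 n, |γ i| *
        ∫ s in (0:ℝ)..η i, (η i - s) ^ (q - 1) / Real.Gamma q * g s) =
      ∑ i ∈ Finset.Icc 1 n, ∫ s in (0:ℝ)..η i, (η i - s) ^ (q - 1) / Real.Gamma (q + 1) *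
        (q * |γ i| + |β i| * (η i - s)) * g s := by
    rw [← Finset.sum_add_distrib]
    apply Finset.sum_congr rfl
    intro i hi
    exact comb_eq hq1 (hη i hi).1.le (|β i|) (|γ i|)
      (hg.mono (Set.Icc_subset_Icc_right (hη i hi).2))
  have hEq : (∫ s in (0:ℝ)..1, (1 - s) ^ (q - 1) / Real.Gamma q * g s) +
      1 / |Δ₂ n η β γ| *
        ((∫ s in (0:ℝ)..1, (1 - s) ^ (q - 1) / Real.Gamma q * g s) +
         (∑ i ∈ Finset.Icc 1 n, |β i| *
            ∫ s in (0:ℝ)..η i, (η i - s) ^ q / Real.Gamma (q + 1) * g s) +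
         ∑ i ∈ Finset.Icc 1 n, |γ i| *
            ∫ s in (0:ℝ)..η i, (η i - s) ^ (q - 1) / Real.Gamma q * g s) +
      Real.Gamma (2 - σ) * Real.Gamma (2 - ν) * (|Δ₃ n η β γ| + 2 * |Δ₂ n η β γ|) /
          (2 * |Δ₁ σ ν ξ n η α * Δ₂ n η β γ|) *
        ((∫ s in (0:ℝ)..ξ, (ξ - s) ^ (q - σ - 1) / Real.Gamma (q - σ) * g s) +
         ∑ i ∈ Finset.Icc 1 n, |α i| *
            ∫ s in (0:ℝ)..η i, (η i - s) ^ (q - ν - 1) / Real.Gamma (q - ν) * g s) = Φ₀ := by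
    rw [hΦ₀def]
    unfold Φ
    rw [← hcombS]
    ring
  rw [hEq, hKdef]
  rw [mul_comm Φ₀⁻¹, mul_assoc, inv_mul_cancel₀ (ne_of_gt hΦ), mul_one]
end

section
/- Let x ∈ C([0,1],ℝ) and let K ≥ 0 be such that |f(s,x(s))| ≤ K for all s ∈ [0,1]. Then for all t₁, t₂ with 0 ≤ t₁ ≤ t₂ ≤ 1 one has |(𝒜x)(t₂) − (𝒜x)(t₁)| ≤ Ω·K·(t₂ − t₁). -/
open MeasureTheory intervalIntegral

noncomputable def Ω (q σ ν ξ : ℝ) (n : ℕ) (η α : ℕ → ℝ) : ℝ :=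
  1 / Real.Gamma q +
  Real.Gamma (2 - σ) * Real.Gamma (2 - ν) / |Δ₁ σ ν ξ n η α| *
    (ξ ^ (q - σ) / Real.Gamma (q - σ + 1) +
     ∑ i ∈ Finset.Icc 1 n, |α i| * η i ^ (q - ν) / Real.Gamma (q - ν + 1))


lemma ker_integrable {r : ℝ} (hr : -1 < r) (a b c : ℝ) :
    IntervalIntegrable (fun s => (a - s) ^ r) volume b c := by
  have := (intervalIntegrable_rpow' (a := a - b) (b := a - c) hr).comp_sub_left a
  simpa using this

lemma ker_integral {r : ℝ} (hr : -1 < r) (a b c : ℝ) :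
    ∫ s in b..c, (a - s) ^ r = ((a - b) ^ (r + 1) - (a - c) ^ (r + 1)) / (r + 1) := by
  rw [integral_comp_sub_left (fun x => x ^ r) a, integral_rpow (Or.inl hr)]

lemma abs_integral_mul_le {k g : ℝ → ℝ} {b c K : ℝ} (hbc : b ≤ c)
    (hk : IntervalIntegrable k volume b c)
    (hkg : IntervalIntegrable (fun s => k s * g s) volume b c)
    (hknn : ∀ s ∈ Set.Icc b c, 0 ≤ k s) (hgK : ∀ s ∈ Set.Icc b c, |g s| ≤ K) :
    |∫ s in b..c, k s * g s| ≤ K * ∫ s in b..c, k s := by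
  calc |∫ s in b..c, k s * g s| ≤ ∫ s in b..c, |k s * g s| :=
        abs_integral_le_integral_abs hbc
    _ ≤ ∫ s in b..c, K * k s := by
        refine integral_mono_on hbc hkg.abs (hk.const_mul K) (fun s hs => ?_)
        rw [abs_mul, abs_of_nonneg (hknn s hs), mul_comm]
        exact mul_le_mul_of_nonneg_right (hgK s hs) (hknn s hs)
    _ = K * ∫ s in b..c, k s := integral_const_mul _ _

lemma int_bound {p c K a : ℝ} {g : ℝ → ℝ} (hp : 0 < p) (ha : 0 ≤ a) (hc : 0 < c)
    (hg : ContinuousOn g (Set.Icc 0 a))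
    (hgK : ∀ s ∈ Set.Icc (0:ℝ) a, |g s| ≤ K) :
    |∫ s in (0:ℝ)..a, (a - s) ^ (p - 1) / c * g s| ≤ K * a ^ p / (p * c) := by
  have hr : (-1:ℝ) < p - 1 := by linarith
  have hk : IntervalIntegrable (fun s => (a - s) ^ (p - 1) / c) volume 0 a :=
    (ker_integrable hr a 0 a).div_const c
  have hkg : IntervalIntegrable (fun s => (a - s) ^ (p - 1) / c * g s) volume 0 a :=
    hk.mul_continuousOn (by rwa [Set.uIcc_of_le ha])
  have hknn : ∀ s ∈ Set.Icc (0:ℝ) a, 0 ≤ (a - s) ^ (p - 1) / c := fun s hs =>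
    div_nonneg (Real.rpow_nonneg (by linarith [hs.2]) _) hc.le
  have hval : ∫ s in (0:ℝ)..a, (a - s) ^ (p - 1) / c = a ^ p / (p * c) := by
    rw [intervalIntegral.integral_div, ker_integral hr, sub_zero, sub_self,
      show p - 1 + 1 = p from by ring, Real.zero_rpow hp.ne', sub_zero, div_div]
  calc |∫ s in (0:ℝ)..a, (a - s) ^ (p - 1) / c * g s|
      ≤ K * ∫ s in (0:ℝ)..a, (a - s) ^ (p - 1) / c :=
        abs_integral_mul_le ha hk hkg hknn hgK
    _ = K * a ^ p / (p * c) := by rw [hval, mul_div_assoc]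

lemma int_bound_gamma {p K a : ℝ} {g : ℝ → ℝ} (hp : 0 < p) (ha : 0 ≤ a)
    (hg : ContinuousOn g (Set.Icc 0 a))
    (hgK : ∀ s ∈ Set.Icc (0:ℝ) a, |g s| ≤ K) :
    |∫ s in (0:ℝ)..a, (a - s) ^ (p - 1) / Real.Gamma p * g s| ≤
      K * a ^ p / Real.Gamma (p + 1) := by
  rw [Real.Gamma_add_one hp.ne']
  exact int_bound hp ha (Real.Gamma_pos_of_pos hp) hg hgK

theorem thm33_equicontinuity (q σ ν ξ : ℝ) (n : ℕ) (η α β γ : ℕ → ℝ)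
    (hq1 : 1 < q) (hq2 : q ≤ 2) (hσ0 : 0 < σ) (hσ1 : σ ≤ 1) (hν0 : 0 < ν) (hν1 : ν ≤ 1)
    (hn : 1 ≤ n) (hξ : 0 < ξ) (hξη : ξ < η 1)
    (hηmono : ∀ i, 1 ≤ i → i < n → η i < η (i + 1)) (hηn : η n < 1)
    (hΔ₁ : Δ₁ σ ν ξ n η α ≠ 0) (hΔ₂ : Δ₂ n η β γ ≠ 0)
    (f : ℝ → ℝ → ℝ)
    (hf : ContinuousOn (Function.uncurry f) (Set.Icc 0 1 ×ˢ Set.univ))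
    (x : C(Set.Icc (0:ℝ) 1, ℝ)) (K : ℝ) (hK0 : 0 ≤ K)
    (hK : ∀ s ∈ Set.Icc (0:ℝ) 1, |f s (Set.IccExtend zero_le_one (⇑x) s)| ≤ K) :
    ∀ t₁ t₂ : ℝ, 0 ≤ t₁ → t₁ ≤ t₂ → t₂ ≤ 1 →
      |opA q σ ν ξ n η α β γ f (Set.IccExtend zero_le_one ⇑x) t₂ -
        opA q σ ν ξ n η α β γ f (Set.IccExtend zero_le_one ⇑x) t₁| ≤
      Ω q σ ν ξ n η α * K * (t₂ - t₁) := by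
  intro t₁ t₂ ht₁ h12 ht₂
  have hq0 : (0:ℝ) < q := by linarith
  have hqσ : 0 < q - σ := by linarith
  have hqν : 0 < q - ν := by linarith
  have hΓq : 0 < Real.Gamma q := Real.Gamma_pos_of_pos hq0
  have hC2σ : 0 < Real.Gamma (2 - σ) := Real.Gamma_pos_of_pos (by linarith)
  have hC2ν : 0 < Real.Gamma (2 - ν) := Real.Gamma_pos_of_pos (by linarith)
  set E : ℝ → ℝ := Set.IccExtend zero_le_one ⇑x with hEdef
  have hEc : Continuous E := Continuous.Icc_extend' (map_continuous x)
  have hgc : ContinuousOn (fun s => f s (E s)) (Set.Icc 0 1) := by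
    have h1 : ContinuousOn (fun s : ℝ => (s, E s)) (Set.Icc 0 1) :=
      (continuous_id.prodMk hEc).continuousOn
    exact hf.comp h1 fun s hs => ⟨hs, trivial⟩
  -- η bounds
  have hstep : ∀ i j : ℕ, 1 ≤ i → i ≤ j → j ≤ n → η i ≤ η j := by
    intro i j hi hij hjn
    induction j with
    | zero => omega
    | succ m ih =>
      rcases Nat.lt_or_ge i (m + 1) with h | h
      · have him : i ≤ m := by omega
        have h1 := ih him (by omega)
        have h2 := hηmono m (by omega) (by omega)
        linarith
      · have : i = m + 1 := by omega
        rw [this]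
  have hηb : ∀ i ∈ Finset.Icc 1 n, 0 ≤ η i ∧ η i ≤ 1 := by
    intro i hi
    simp only [Finset.mem_Icc] at hi
    have h1 : η 1 ≤ η i := hstep 1 i le_rfl hi.1 hi.2
    have h2 : η i ≤ η n := hstep i n hi.1 hi.2 le_rfl
    constructor <;> linarith
  -- continuity / integrability of first-kind kernels
  have hkc : ∀ t : ℝ, Continuous fun s : ℝ => (t - s) ^ (q - 1) := by
    intro t
    refine continuous_iff_continuousAt.2 fun s => ?_
    exact (Real.continuousAt_rpow_const _ _ (Or.inr (by linarith))).comp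
      ((continuous_const.sub continuous_id).continuousAt)
  have hsub : ∀ a b : ℝ, 0 ≤ a → a ≤ b → b ≤ 1 → Set.uIcc a b ⊆ Set.Icc 0 1 := by
    intro a b ha hab hb
    rw [Set.uIcc_of_le hab]
    exact Set.Icc_subset_Icc ha hb
  have hint : ∀ t a b : ℝ, 0 ≤ a → a ≤ b → b ≤ 1 →
      IntervalIntegrable (fun s => (t - s) ^ (q - 1) * f s (E s)) volume a b :=
    fun t a b ha hab hb =>
      ((hkc t).intervalIntegrable a b).mul_continuousOn (hgc.mono (hsub a b ha hab hb))
  have hi20 := hint t₂ 0 t₁ le_rfl ht₁ (by linarith)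
  have hi21 := hint t₂ t₁ t₂ ht₁ h12 ht₂
  have hi1 := hint t₁ 0 t₁ le_rfl ht₁ (by linarith)
  -- pull out 1/Γ(q)
  have pull : ∀ t : ℝ, (∫ s in (0:ℝ)..t, (t - s) ^ (q - 1) / Real.Gamma q * f s (E s)) =
      (Real.Gamma q)⁻¹ * ∫ s in (0:ℝ)..t, (t - s) ^ (q - 1) * f s (E s) := by
    intro t
    rw [← intervalIntegral.integral_const_mul]
    exact integral_congr fun s _ => by ring
  -- the key algebraic identity
  have key : opA q σ ν ξ n η α β γ f E t₂ - opA q σ ν ξ n η α β γ f E t₁ =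
      (Real.Gamma q)⁻¹ *
        ((∫ s in (0:ℝ)..t₂, (t₂ - s) ^ (q - 1) * f s (E s)) -
          ∫ s in (0:ℝ)..t₁, (t₁ - s) ^ (q - 1) * f s (E s)) +
      Real.Gamma (2 - σ) * Real.Gamma (2 - ν) * (t₂ - t₁) / Δ₁ σ ν ξ n η α *
        (-(∫ s in (0:ℝ)..ξ, (ξ - s) ^ (q - σ - 1) / Real.Gamma (q - σ) * f s (E s)) +
         ∑ i ∈ Finset.Icc 1 n, α i *
            ∫ s in (0:ℝ)..η i, (η i - s) ^ (q - ν - 1) / Real.Gamma (q - ν) * f s (E s)) := by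
    simp only [opA]
    rw [pull t₂, pull t₁]
    field_simp
    ring
  rw [key]
  have hr1 : (-1:ℝ) < q - 1 := by linarith
  have hq' : q - 1 + 1 = q := by ring
  -- bound for P
  have hP : |∫ s in (0:ℝ)..t₁, ((t₂ - s) ^ (q - 1) - (t₁ - s) ^ (q - 1)) * f s (E s)| ≤
      K * ((t₂ ^ q - (t₂ - t₁) ^ q - t₁ ^ q) / q) := by
    have hk : IntervalIntegrable (fun s => (t₂ - s) ^ (q - 1) - (t₁ - s) ^ (q - 1)) volume 0 t₁ :=
      ((hkc t₂).sub (hkc t₁)).intervalIntegrable 0 t₁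
    have hkg : IntervalIntegrable
        (fun s => ((t₂ - s) ^ (q - 1) - (t₁ - s) ^ (q - 1)) * f s (E s)) volume 0 t₁ :=
      hk.mul_continuousOn (hgc.mono (hsub 0 t₁ le_rfl ht₁ (by linarith)))
    have hknn : ∀ s ∈ Set.Icc (0:ℝ) t₁, 0 ≤ (t₂ - s) ^ (q - 1) - (t₁ - s) ^ (q - 1) := by
      intro s hs
      exact sub_nonneg.2 (Real.rpow_le_rpow (by linarith [hs.2]) (by linarith) (by linarith))
    have hbd := abs_integral_mul_le ht₁ hk hkg hknn
      (fun s hs => hK s ⟨hs.1, by linarith [hs.2]⟩)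
    have hkint : (∫ s in (0:ℝ)..t₁, ((t₂ - s) ^ (q - 1) - (t₁ - s) ^ (q - 1))) =
        (t₂ ^ q - (t₂ - t₁) ^ q - t₁ ^ q) / q := by
      rw [integral_sub (ker_integrable hr1 t₂ 0 t₁) (ker_integrable hr1 t₁ 0 t₁),
        ker_integral hr1, ker_integral hr1, hq', sub_zero, sub_zero, sub_self,
        Real.zero_rpow hq0.ne', sub_zero]
      ring
    rwa [hkint] at hbd
  -- bound for Q
  have hQ : |∫ s in t₁..t₂, (t₂ - s) ^ (q - 1) * f s (E s)| ≤ K * ((t₂ - t₁) ^ q / q) := by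
    have hbd := abs_integral_mul_le h12 (ker_integrable hr1 t₂ t₁ t₂) hi21
      (fun s hs => Real.rpow_nonneg (by linarith [hs.2]) _)
      (fun s hs => hK s ⟨le_trans ht₁ hs.1, le_trans hs.2 ht₂⟩)
    have hkint : (∫ s in t₁..t₂, (t₂ - s) ^ (q - 1)) = (t₂ - t₁) ^ q / q := by
      rw [ker_integral hr1, hq', sub_self, Real.zero_rpow hq0.ne', sub_zero]
    rwa [hkint] at hbd
  -- splitting
  have hsplitN : (∫ s in (0:ℝ)..t₂, (t₂ - s) ^ (q - 1) * f s (E s)) -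
      (∫ s in (0:ℝ)..t₁, (t₁ - s) ^ (q - 1) * f s (E s)) =
      (∫ s in (0:ℝ)..t₁, ((t₂ - s) ^ (q - 1) - (t₁ - s) ^ (q - 1)) * f s (E s)) +
      ∫ s in t₁..t₂, (t₂ - s) ^ (q - 1) * f s (E s) := by
    have e2 := integral_add_adjacent_intervals hi20 hi21
    have e1 : (∫ s in (0:ℝ)..t₁, ((t₂ - s) ^ (q - 1) - (t₁ - s) ^ (q - 1)) * f s (E s)) =
        (∫ s in (0:ℝ)..t₁, (t₂ - s) ^ (q - 1) * f s (E s)) -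
        ∫ s in (0:ℝ)..t₁, (t₁ - s) ^ (q - 1) * f s (E s) := by
      rw [← integral_sub hi20 hi1]
      exact integral_congr fun s _ => by ring
    linarith
  -- mean value estimate
  have hmean : t₂ ^ q - t₁ ^ q ≤ q * (t₂ - t₁) := by
    have h1 : (∫ s in t₁..t₂, s ^ (q - 1)) = (t₂ ^ q - t₁ ^ q) / q := by
      rw [integral_rpow (Or.inl hr1), hq']
    have h2 : (∫ s in t₁..t₂, s ^ (q - 1)) ≤ ∫ _ in t₁..t₂, (1:ℝ) :=
      integral_mono_on h12 (intervalIntegrable_rpow' hr1) intervalIntegrable_const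
        (fun s hs => Real.rpow_le_one (by linarith [hs.1]) (by linarith [hs.2]) (by linarith))
    rw [h1] at h2
    simp only [intervalIntegral.integral_const, smul_eq_mul, mul_one] at h2
    rw [div_le_iff₀ hq0] at h2
    linarith
  -- part 1 total
  have hN : |(∫ s in (0:ℝ)..t₂, (t₂ - s) ^ (q - 1) * f s (E s)) -
      ∫ s in (0:ℝ)..t₁, (t₁ - s) ^ (q - 1) * f s (E s)| ≤ K * (t₂ - t₁) := by
    rw [hsplitN]
    refine le_trans (abs_add_le _ _) (le_trans (add_le_add hP hQ) ?_)
    have h3 : K * ((t₂ ^ q - (t₂ - t₁) ^ q - t₁ ^ q) / q) + K * ((t₂ - t₁) ^ q / q) =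
        K * ((t₂ ^ q - t₁ ^ q) / q) := by ring
    rw [h3]
    exact mul_le_mul_of_nonneg_left ((div_le_iff₀ hq0).2 (by linarith)) hK0
  have part1 : |(Real.Gamma q)⁻¹ *
      ((∫ s in (0:ℝ)..t₂, (t₂ - s) ^ (q - 1) * f s (E s)) -
        ∫ s in (0:ℝ)..t₁, (t₁ - s) ^ (q - 1) * f s (E s))| ≤
      (Real.Gamma q)⁻¹ * (K * (t₂ - t₁)) := by
    rw [abs_mul, abs_of_nonneg (inv_nonneg.2 hΓq.le)]
    exact mul_le_mul_of_nonneg_left hN (inv_nonneg.2 hΓq.le)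
  -- part 2
  have hξ1 : ξ ≤ 1 := by
    have := hstep 1 n le_rfl hn le_rfl
    linarith
  have hJξ : |∫ s in (0:ℝ)..ξ, (ξ - s) ^ (q - σ - 1) / Real.Gamma (q - σ) * f s (E s)| ≤
      K * ξ ^ (q - σ) / Real.Gamma (q - σ + 1) :=
    int_bound_gamma hqσ hξ.le (hgc.mono (Set.Icc_subset_Icc le_rfl hξ1))
      (fun s hs => hK s ⟨hs.1, le_trans hs.2 hξ1⟩)
  have hJi : ∀ i ∈ Finset.Icc 1 n,
      |∫ s in (0:ℝ)..η i, (η i - s) ^ (q - ν - 1) / Real.Gamma (q - ν) * f s (E s)| ≤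
      K * η i ^ (q - ν) / Real.Gamma (q - ν + 1) := fun i hi =>
    int_bound_gamma hqν (hηb i hi).1 (hgc.mono (Set.Icc_subset_Icc le_rfl (hηb i hi).2))
      (fun s hs => hK s ⟨hs.1, le_trans hs.2 (hηb i hi).2⟩)
  have hJ : |-(∫ s in (0:ℝ)..ξ, (ξ - s) ^ (q - σ - 1) / Real.Gamma (q - σ) * f s (E s)) +
      ∑ i ∈ Finset.Icc 1 n, α i *
        ∫ s in (0:ℝ)..η i, (η i - s) ^ (q - ν - 1) / Real.Gamma (q - ν) * f s (E s)| ≤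
      K * (ξ ^ (q - σ) / Real.Gamma (q - σ + 1) +
        ∑ i ∈ Finset.Icc 1 n, |α i| * η i ^ (q - ν) / Real.Gamma (q - ν + 1)) := by
    refine le_trans (abs_add_le _ _) ?_
    rw [abs_neg]
    have hsumb : |∑ i ∈ Finset.Icc 1 n, α i *
        ∫ s in (0:ℝ)..η i, (η i - s) ^ (q - ν - 1) / Real.Gamma (q - ν) * f s (E s)| ≤
        ∑ i ∈ Finset.Icc 1 n, |α i| * (K * η i ^ (q - ν) / Real.Gamma (q - ν + 1)) := by
      refine le_trans (Finset.abs_sum_le_sum_abs _ _) (Finset.sum_le_sum fun i hi => ?_)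
      rw [abs_mul]
      exact mul_le_mul_of_nonneg_left (hJi i hi) (abs_nonneg _)
    refine le_trans (add_le_add hJξ hsumb) (le_of_eq ?_)
    rw [mul_add, Finset.mul_sum]
    congr 1
    · rw [mul_div_assoc]
    · exact Finset.sum_congr rfl fun i _ => by ring
  have hCnn : 0 ≤ Real.Gamma (2 - σ) * Real.Gamma (2 - ν) * (t₂ - t₁) :=
    mul_nonneg (mul_nonneg hC2σ.le hC2ν.le) (by linarith)
  have part2 : |Real.Gamma (2 - σ) * Real.Gamma (2 - ν) * (t₂ - t₁) / Δ₁ σ ν ξ n η α *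
      (-(∫ s in (0:ℝ)..ξ, (ξ - s) ^ (q - σ - 1) / Real.Gamma (q - σ) * f s (E s)) +
       ∑ i ∈ Finset.Icc 1 n, α i *
          ∫ s in (0:ℝ)..η i, (η i - s) ^ (q - ν - 1) / Real.Gamma (q - ν) * f s (E s))| ≤
      Real.Gamma (2 - σ) * Real.Gamma (2 - ν) * (t₂ - t₁) / |Δ₁ σ ν ξ n η α| *
      (K * (ξ ^ (q - σ) / Real.Gamma (q - σ + 1) +
        ∑ i ∈ Finset.Icc 1 n, |α i| * η i ^ (q - ν) / Real.Gamma (q - ν + 1))) := by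
    rw [abs_mul, abs_div, abs_of_nonneg hCnn]
    exact mul_le_mul_of_nonneg_left hJ (div_nonneg hCnn (abs_nonneg _))
  refine le_trans (abs_add_le _ _) (le_trans (add_le_add part1 part2) (le_of_eq ?_))
  simp only [Ω]
  ring
end
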